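/- arXiv:1711.03149 — 6 statements merged into one kernel-verified Lean document; each statement's English description precedes it below -/
import Mathlib

section
/- (Theorem 2, adjusted likelihoods + averaging: optimal contraction rate.) For every β, M, σ > 0, every sequence M_n → ∞, and every sequence of machine counts m_n → ∞, the supremum over θ₀ ∈ H^β(M) of the expected aggregated posterior mass outside the ball of radius M_n·n^{-β/(1+2β)} around θ₀ tends to 0 as n → ∞; that is, sup_{θ₀ ∈ H^β(M)} P( ‖θ̂ + t·W − θ₀‖₂ ≥ M_n·n^{-β/(1+2β)} ) → 0 as n → ∞ with m = m_n. -/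
open MeasureTheory ProbabilityTheory Filter

/-- The hyperrectangle `H^β(M)` of `β`-regular signals in `ℓ²`, indexed so that
coordinate `i : ℕ` corresponds to the integer `i + 1`. -/
def hyperRect (β M : ℝ) : Set (ℕ → ℝ) :=
  {θ | (Summable fun i => (θ i) ^ 2) ∧
    ∀ i : ℕ, ((i : ℝ) + 1) ^ (1 + 2 * β) * (θ i) ^ 2 ≤ M ^ 2}

/-- The noise variables `(Z^j_i)` together with the posterior-sampling variables `(W_i)`
form an i.i.d. standard Gaussian family. -/
def iidStdGauss {Ω : Type*} [MeasurableSpace Ω] (P : Measure Ω)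
    (Z : ℕ → ℕ → Ω → ℝ) (W : ℕ → Ω → ℝ) : Prop :=
  iIndepFun
      (Sum.elim (fun p : ℕ × ℕ => Z p.1 p.2) W) P ∧
    ∀ a : (ℕ × ℕ) ⊕ ℕ,
      Measure.map (Sum.elim (fun p : ℕ × ℕ => Z p.1 p.2) W a) P = gaussianReal 0 1

/-- Local data: `Y^j_i = θ₀,ᵢ + sqrt(σ² m / n) Z^j_i`. -/
noncomputable def dataY (σ n : ℝ) (m : ℕ) (θ0 : ℕ → ℝ) {Ω : Type*}
    (Z : ℕ → ℕ → Ω → ℝ) (j i : ℕ) (ω : Ω) : ℝ :=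
  θ0 i + Real.sqrt (σ ^ 2 * m / n) * Z j i ω

/-- Method II (likelihoods raised to the power `m`, then averaging): aggregated posterior
mean `θ̂ᵢ = (1/m) Σ_{j<m} n Y^j_i / (n + σ² i^{1+2β})`. -/
noncomputable def postMeanII (σ β n : ℝ) (m : ℕ) (θ0 : ℕ → ℝ) {Ω : Type*}
    (Z : ℕ → ℕ → Ω → ℝ) (ω : Ω) (i : ℕ) : ℝ :=
  (1 / (m : ℝ)) * ∑ j ∈ Finset.range m,
    n * dataY σ n m θ0 Z j i ω / (n + σ ^ 2 * ((i : ℝ) + 1) ^ (1 + 2 * β))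

/-- Method II: aggregated posterior coordinate variances `tᵢ² = σ²/(m (n + σ² i^{1+2β}))`. -/
noncomputable def postVarII (σ β n : ℝ) (m : ℕ) (i : ℕ) : ℝ :=
  σ ^ 2 / ((m : ℝ) * (n + σ ^ 2 * ((i : ℝ) + 1) ^ (1 + 2 * β)))


section Aux
open Real
open scoped NNReal ENNReal




lemma pdf_even (x : ℝ) : gaussianPDFReal 0 1 (-x) = gaussianPDFReal 0 1 x := by
  simp [gaussianPDFReal, neg_sq]

lemma key_pt (x : ℝ) : x ^ 2 * Real.exp (-x ^ 2 / 2) ≤ 2 * Real.exp (-(1/4) * x ^ 2) := by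
  set t := x ^ 2 with ht
  have ht0 : 0 ≤ t := sq_nonneg x
  have h8 : t / 8 + 1 ≤ Real.exp (t / 8) := Real.add_one_le_exp _
  have hexp4 : Real.exp (t / 4) = Real.exp (t / 8) * Real.exp (t / 8) := by
    rw [← Real.exp_add]; ring_nf
  have hkey : t ≤ 2 * Real.exp (t / 4) := by
    nlinarith [Real.exp_pos (t / 8), sq_nonneg (t - 8)]
  have hpos : 0 < Real.exp (-t / 2) := Real.exp_pos _
  have := mul_le_mul_of_nonneg_right hkey hpos.le
  calc t * Real.exp (-t / 2) ≤ 2 * Real.exp (t / 4) * Real.exp (-t / 2) := this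
    _ = 2 * Real.exp (-(1/4) * t) := by rw [mul_assoc, ← Real.exp_add]; ring_nf

example : True := trivial

noncomputable def gpdf : ℝ → ℝ≥0 := fun x => Real.toNNReal (gaussianPDFReal 0 1 x)

lemma gpdf_meas : Measurable gpdf := (measurable_gaussianPDFReal 0 1).real_toNNReal

lemma gauss_eq_wd : gaussianReal 0 1 = (volume : Measure ℝ).withDensity (fun x => (gpdf x : ENNReal)) := by
  rw [gaussianReal_of_var_ne_zero _ one_ne_zero]
  rfl

lemma gpdf_smul (f : ℝ → ℝ) (x : ℝ) : gpdf x • f x = gaussianPDFReal 0 1 x * f x := by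
  simp [gpdf, NNReal.smul_def, Real.coe_toNNReal _ (gaussianPDFReal_nonneg 0 1 x)]

lemma integrable_gauss_iff (f : ℝ → ℝ) :
    Integrable f (gaussianReal 0 1) ↔
      Integrable (fun x => gaussianPDFReal 0 1 x * f x) volume := by
  rw [gauss_eq_wd, integrable_withDensity_iff_integrable_smul gpdf_meas]
  simp_rw [gpdf_smul]

lemma integral_gauss_eq (f : ℝ → ℝ) :
    ∫ x, f x ∂(gaussianReal 0 1) = ∫ x, gaussianPDFReal 0 1 x * f x := by
  rw [gauss_eq_wd, integral_withDensity_eq_integral_smul gpdf_meas]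
  simp_rw [gpdf_smul]

lemma pdf_eq (x : ℝ) : gaussianPDFReal 0 1 x = (Real.sqrt (2 * π))⁻¹ * Real.exp (-x ^ 2 / 2) := by
  simp [gaussianPDFReal]

lemma pdf_sq_le (x : ℝ) : gaussianPDFReal 0 1 x * x ^ 2
    ≤ (Real.sqrt (2 * π))⁻¹ * (2 * Real.exp (-(1/4) * x ^ 2)) := by
  rw [pdf_eq]
  have h := key_pt x
  have hs : (0:ℝ) ≤ (Real.sqrt (2 * π))⁻¹ := by positivity
  calc (Real.sqrt (2 * π))⁻¹ * Real.exp (-x ^ 2 / 2) * x ^ 2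
      = (Real.sqrt (2 * π))⁻¹ * (x ^ 2 * Real.exp (-x ^ 2 / 2)) := by ring
    _ ≤ (Real.sqrt (2 * π))⁻¹ * (2 * Real.exp (-(1/4) * x ^ 2)) :=
        mul_le_mul_of_nonneg_left h hs

lemma int_bound : Integrable (fun x : ℝ => (Real.sqrt (2 * π))⁻¹ * (2 * Real.exp (-(1/4) * x ^ 2))) volume := by
  exact (((integrable_exp_neg_mul_sq (by norm_num : (0:ℝ) < 1/4)).const_mul 2).const_mul _)

lemma int_sq_pdf : Integrable (fun x => gaussianPDFReal 0 1 x * x ^ 2) volume := by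
  refine Integrable.mono' int_bound ?_ ?_
  · exact ((measurable_gaussianPDFReal 0 1).mul (measurable_id.pow_const 2)).aestronglyMeasurable
  · filter_upwards with x
    rw [Real.norm_eq_abs, abs_of_nonneg (mul_nonneg (gaussianPDFReal_nonneg 0 1 x) (sq_nonneg x))]
    exact pdf_sq_le x

lemma numeric_bound : (Real.sqrt (2 * π))⁻¹ * (2 * Real.sqrt (π / (1/4))) ≤ 3 := by
  have h1 : (0:ℝ) < 2 * π := by positivity
  have h2 : (0:ℝ) ≤ π / (1/4) := by positivity
  have hs1 : Real.sqrt (2 * π) ^ 2 = 2 * π := Real.sq_sqrt h1.le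
  have hs2 : Real.sqrt (π / (1/4)) ^ 2 = π / (1/4) := Real.sq_sqrt h2
  have hs1p : 0 < Real.sqrt (2 * π) := Real.sqrt_pos.2 h1
  rw [inv_mul_le_iff₀ hs1p]
  nlinarith [Real.sqrt_nonneg (π / (1/4)), Real.sqrt_nonneg (2 * π), Real.pi_pos]

lemma int_sq_pdf_le : ∫ x, gaussianPDFReal 0 1 x * x ^ 2 ≤ 3 := by
  have h := integral_mono int_sq_pdf int_bound pdf_sq_le
  refine h.trans ?_
  rw [integral_const_mul, integral_const_mul, integral_gaussian]
  exact numeric_bound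

lemma int_x_pdf : Integrable (fun x => gaussianPDFReal 0 1 x * x) volume := by
  refine Integrable.mono' ((integrable_gaussianPDFReal 0 1).add int_sq_pdf) ?_ ?_
  · exact ((measurable_gaussianPDFReal 0 1).mul measurable_id).aestronglyMeasurable
  · filter_upwards with x
    have h0 := gaussianPDFReal_nonneg 0 1 x
    have : |x| ≤ 1 + x ^ 2 := by nlinarith [sq_nonneg (|x| - 1), sq_abs x]
    calc ‖gaussianPDFReal 0 1 x * x‖ = gaussianPDFReal 0 1 x * |x| := by
          rw [Real.norm_eq_abs, abs_mul, abs_of_nonneg h0]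
      _ ≤ gaussianPDFReal 0 1 x * (1 + x ^ 2) := by
          exact mul_le_mul_of_nonneg_left this h0
      _ = gaussianPDFReal 0 1 x + gaussianPDFReal 0 1 x * x ^ 2 := by ring

lemma int_x_pdf_zero : ∫ x, gaussianPDFReal 0 1 x * x = 0 := by
  have h : (∫ x : ℝ, gaussianPDFReal 0 1 (-x) * (-x)) = ∫ x, gaussianPDFReal 0 1 x * x :=
    integral_neg_eq_self (fun x => gaussianPDFReal 0 1 x * x) volume
  simp only [pdf_even, mul_neg] at h
  rw [integral_neg] at h
  linarith

lemma gauss_int_sq : Integrable (fun x : ℝ => x ^ 2) (gaussianReal 0 1) :=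
  (integrable_gauss_iff _).2 int_sq_pdf

lemma gauss_sq_le : ∫ x, x ^ 2 ∂(gaussianReal 0 1) ≤ 3 := by
  rw [integral_gauss_eq]; exact int_sq_pdf_le

lemma gauss_int_id : Integrable (fun x : ℝ => x) (gaussianReal 0 1) :=
  (integrable_gauss_iff _).2 int_x_pdf

lemma gauss_id_zero : ∫ x, x ∂(gaussianReal 0 1) = 0 := by
  rw [integral_gauss_eq]; exact int_x_pdf_zero

variable {Ω : Type*} [MeasurableSpace Ω] {P : Measure Ω}

lemma aemeas_of_map_gauss {f : Ω → ℝ} (hf : Measure.map f P = gaussianReal 0 1) :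
    AEMeasurable f P := by
  by_contra h
  have h0 : (0 : Measure ℝ) = gaussianReal 0 1 := by
    rw [← Measure.map_of_not_aemeasurable h, hf]
  have h1 := measure_univ (μ := gaussianReal 0 1)
  rw [← h0] at h1
  simp at h1

lemma integrable_of_map_gauss {f : Ω → ℝ} (hf : Measure.map f P = gaussianReal 0 1) :
    Integrable f P := by
  have h : Integrable (fun x : ℝ => x) (Measure.map f P) := by rw [hf]; exact gauss_int_id
  exact (integrable_map_measure aestronglyMeasurable_id (aemeas_of_map_gauss hf)).1 h

lemma integral_of_map_gauss {f : Ω → ℝ} (hf : Measure.map f P = gaussianReal 0 1) :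
    ∫ ω, f ω ∂P = 0 := by
  have h : ∫ x, x ∂(Measure.map f P) = 0 := by rw [hf]; exact gauss_id_zero
  rwa [integral_map (f := fun x : ℝ => x) (aemeas_of_map_gauss hf) measurable_id.aestronglyMeasurable] at h

lemma integrable_sq_of_map_gauss {f : Ω → ℝ} (hf : Measure.map f P = gaussianReal 0 1) :
    Integrable (fun ω => f ω ^ 2) P := by
  have h : Integrable (fun x : ℝ => x ^ 2) (Measure.map f P) := by rw [hf]; exact gauss_int_sq
  exact (integrable_map_measure (measurable_id.pow_const 2).aestronglyMeasurable
    (aemeas_of_map_gauss hf)).1 h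

lemma integral_sq_of_map_gauss {f : Ω → ℝ} (hf : Measure.map f P = gaussianReal 0 1) :
    ∫ ω, f ω ^ 2 ∂P ≤ 3 := by
  have h : ∫ x, x ^ 2 ∂(Measure.map f P) ≤ 3 := by rw [hf]; exact gauss_sq_le
  rwa [integral_map (f := fun x : ℝ => x ^ 2) (aemeas_of_map_gauss hf)
    (measurable_id.pow_const 2).aestronglyMeasurable] at h

section Moment

variable {ι : Type*} [IsProbabilityMeasure P]

lemma moment_bound (T : Finset ι) (f : ι → Ω → ℝ) (coef : ι → ℝ) (a : ℝ)
    (hind : ∀ s t, s ≠ t → IndepFun (f s) (f t) P)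
    (hmap : ∀ t, Measure.map (f t) P = gaussianReal 0 1) :
    Integrable (fun ω => (a + ∑ t ∈ T, coef t * f t ω) ^ 2) P ∧
      ∫ ω, (a + ∑ t ∈ T, coef t * f t ω) ^ 2 ∂P
        ≤ a ^ 2 + 3 * ∑ t ∈ T, (coef t) ^ 2 := by
  have int_f : ∀ t, Integrable (f t) P := fun t => integrable_of_map_gauss (hmap t)
  have int_fsq : ∀ t, Integrable (fun ω => f t ω ^ 2) P :=
    fun t => integrable_sq_of_map_gauss (hmap t)
  have int_prod : ∀ s t, Integrable (fun ω => f s ω * f t ω) P := by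
    intro s t
    by_cases h : s = t
    · subst h
      exact (int_fsq s).congr (by filter_upwards with ω; ring)
    · exact ((hind s t h).integrable_mul (int_f s) (int_f t)).congr (by rfl)
  have int_gprod : ∀ s t, Integrable (fun ω => (coef s * f s ω) * (coef t * f t ω)) P := by
    intro s t
    exact ((int_prod s t).const_mul (coef s * coef t)).congr
      (by filter_upwards with ω; ring)
  have integral_prod_zero : ∀ s t, s ≠ t → ∫ ω, f s ω * f t ω ∂P = 0 := by
    intro s t h
    have := (hind s t h).integral_fun_mul_eq_mul_integral (int_f s).aestronglyMeasurable (int_f t).aestronglyMeasurable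
    have h2 : ∫ ω, f s ω * f t ω ∂P = (∫ ω, f s ω ∂P) * ∫ ω, f t ω ∂P := this
    rw [h2, integral_of_map_gauss (hmap s), zero_mul]
  set V : Ω → ℝ := fun ω => ∑ t ∈ T, coef t * f t ω with hV
  have int_V : Integrable V P :=
    integrable_finset_sum T fun t _ => (int_f t).const_mul (coef t)
  have EV : ∫ ω, V ω ∂P = 0 := by
    rw [hV, integral_finset_sum T fun t _ => (int_f t).const_mul (coef t)]
    refine Finset.sum_eq_zero fun t _ => ?_
    rw [integral_const_mul, integral_of_map_gauss (hmap t), mul_zero]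
  have hVsq : ∀ ω, V ω ^ 2 = ∑ s ∈ T, ∑ t ∈ T, (coef s * f s ω) * (coef t * f t ω) := by
    intro ω
    rw [hV, sq, Finset.sum_mul_sum]
  have int_Vsq : Integrable (fun ω => V ω ^ 2) P := by
    refine (integrable_finset_sum T fun s _ =>
      integrable_finset_sum T fun t _ => int_gprod s t).congr ?_
    filter_upwards with ω
    exact (hVsq ω).symm
  have EVsq : ∫ ω, V ω ^ 2 ∂P ≤ 3 * ∑ t ∈ T, (coef t) ^ 2 := by
    have h1 : ∫ ω, V ω ^ 2 ∂P
        = ∑ s ∈ T, ∑ t ∈ T, ∫ ω, (coef s * f s ω) * (coef t * f t ω) ∂P := by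
      rw [integral_congr_ae (ae_of_all _ hVsq),
        integral_finset_sum T fun s _ => integrable_finset_sum T fun t _ => int_gprod s t]
      exact Finset.sum_congr rfl fun s _ =>
        integral_finset_sum T fun t _ => int_gprod s t
    rw [h1]
    have h2 : ∀ s ∈ T, ∑ t ∈ T, ∫ ω, (coef s * f s ω) * (coef t * f t ω) ∂P
        ≤ 3 * (coef s) ^ 2 := by
      intro s hs
      rw [Finset.sum_eq_single_of_mem s hs (fun t _ hts => by
        have : ∫ ω, (coef s * f s ω) * (coef t * f t ω) ∂P
            = (coef s * coef t) * ∫ ω, f s ω * f t ω ∂P := by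
          rw [← integral_const_mul]
          exact integral_congr_ae (ae_of_all _ fun ω => by ring)
        rw [this, integral_prod_zero s t (fun h => hts h.symm), mul_zero])]
      have : ∫ ω, (coef s * f s ω) * (coef s * f s ω) ∂P
          = (coef s) ^ 2 * ∫ ω, f s ω ^ 2 ∂P := by
        rw [← integral_const_mul]
        exact integral_congr_ae (ae_of_all _ fun ω => by ring)
      rw [this]
      calc (coef s) ^ 2 * ∫ ω, f s ω ^ 2 ∂P ≤ (coef s) ^ 2 * 3 :=
            mul_le_mul_of_nonneg_left (integral_sq_of_map_gauss (hmap s)) (sq_nonneg _)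
        _ = 3 * (coef s) ^ 2 := by ring
    calc ∑ s ∈ T, ∑ t ∈ T, ∫ ω, (coef s * f s ω) * (coef t * f t ω) ∂P
        ≤ ∑ s ∈ T, 3 * (coef s) ^ 2 := Finset.sum_le_sum h2
      _ = 3 * ∑ t ∈ T, (coef t) ^ 2 := by rw [Finset.mul_sum]
  have hXsq : ∀ ω, (a + V ω) ^ 2 = a ^ 2 + 2 * a * V ω + V ω ^ 2 := fun ω => by ring
  have int_X : Integrable (fun ω => (a + V ω) ^ 2) P := by
    refine (((integrable_const (a ^ 2)).add (int_V.const_mul (2 * a))).add int_Vsq).congr ?_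
    filter_upwards with ω
    exact (hXsq ω).symm
  refine ⟨int_X, ?_⟩
  have h0 : ∫ ω, (a + V ω) ^ 2 ∂P
      = ∫ ω, (a ^ 2 + 2 * a * V ω + V ω ^ 2) ∂P :=
    integral_congr_ae (ae_of_all _ hXsq)
  have e1 : ∫ ω, (a ^ 2 + 2 * a * V ω + V ω ^ 2) ∂P
      = (∫ ω, (a ^ 2 + 2 * a * V ω) ∂P) + ∫ ω, V ω ^ 2 ∂P :=
    integral_add ((integrable_const (a ^ 2)).add (int_V.const_mul (2 * a))) int_Vsq
  have e2 : ∫ ω, (a ^ 2 + 2 * a * V ω) ∂P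
      = (∫ _ω, (a ^ 2 : ℝ) ∂P) + ∫ ω, 2 * a * V ω ∂P :=
    integral_add (integrable_const (a ^ 2)) (int_V.const_mul (2 * a))
  have e3 : ∫ ω, 2 * a * V ω ∂P = 2 * a * ∫ ω, V ω ∂P := integral_const_mul _ _
  have e4 : ∫ _ω, (a ^ 2 : ℝ) ∂P = a ^ 2 := by
    simp [integral_const, measure_univ]
  rw [h0, e1, e2, e3, e4, EV, mul_zero, add_zero]
  linarith [EVsq]

end Moment


lemma rpow_step {p x : ℝ} (hp : 0 < p) (hx : 1 ≤ x) :
    p * (x + 1) ^ (-(p + 1)) ≤ x ^ (-p) - (x + 1) ^ (-p) := by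
  have hx0 : (0:ℝ) < x := lt_of_lt_of_le one_pos hx
  have hx1 : (0:ℝ) < x + 1 := by linarith
  have hlog : 1 / (x + 1) ≤ Real.log ((x + 1) / x) := by
    have h := Real.log_le_sub_one_of_pos (show (0:ℝ) < x / (x + 1) by positivity)
    have e : Real.log ((x + 1) / x) = -Real.log (x / (x + 1)) := by
      rw [← Real.log_inv]
      congr 1
      field_simp
    have e2 : x / (x + 1) - 1 = -(1 / (x + 1)) := by field_simp; ring
    rw [e]
    rw [e2] at h
    linarith
  set A := x ^ p with hA
  set B := (x + 1) ^ p with hB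
  have hA0 : 0 < A := Real.rpow_pos_of_pos hx0 p
  have hB0 : 0 < B := Real.rpow_pos_of_pos hx1 p
  have hBA : B / A = ((x + 1) / x) ^ p := (Real.div_rpow hx1.le hx0.le p).symm
  have hkey : 1 + p / (x + 1) ≤ B / A := by
    rw [hBA, Real.rpow_def_of_pos (by positivity)]
    have h3 := Real.add_one_le_exp (Real.log ((x + 1) / x) * p)
    have h4 : p * (1 / (x + 1)) ≤ p * Real.log ((x + 1) / x) :=
      mul_le_mul_of_nonneg_left hlog hp.le
    have : p * (1 / (x + 1)) = p / (x + 1) := by ring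
    nlinarith
  have h5 : (1 + p / (x + 1)) * A ≤ B := (le_div_iff₀ hA0).1 hkey
  have h6 : p * A ≤ (B - A) * (x + 1) := by
    have h8 : (1 + p / (x + 1)) * A * (x + 1) ≤ B * (x + 1) :=
      mul_le_mul_of_nonneg_right h5 hx1.le
    have h9 : (1 + p / (x + 1)) * A * (x + 1) = A * (x + 1) + p * A := by
      field_simp
    nlinarith
  have e1 : x ^ (-p) = A⁻¹ := by rw [Real.rpow_neg hx0.le]
  have e2 : (x + 1) ^ (-p) = B⁻¹ := by rw [Real.rpow_neg hx1.le]
  have e3 : (x + 1) ^ (-(p + 1)) = (B * (x + 1))⁻¹ := by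
    rw [Real.rpow_neg hx1.le, Real.rpow_add hx1, Real.rpow_one]
  rw [e1, e2, e3]
  have hdiv : p / (B * (x + 1)) ≤ (B - A) / (A * B) := by
    rw [div_le_div_iff₀ (by positivity) (by positivity)]
    nlinarith [mul_le_mul_of_nonneg_right h6 hB0.le]
  have e4 : A⁻¹ - B⁻¹ = (B - A) / (A * B) := by
    field_simp
  have e5 : p * (B * (x + 1))⁻¹ = p / (B * (x + 1)) := by ring
  rw [e4, e5]
  exact hdiv

lemma tail_summable {p : ℝ} (hp : 0 < p) {K : ℝ} (hK : 1 ≤ K) :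
    Summable (fun i : ℕ => (K + i + 1) ^ (-(p + 1))) := by
  have hsum0 : Summable (fun n : ℕ => (n : ℝ) ^ (-(p + 1))) :=
    Real.summable_nat_rpow.2 (by linarith)
  have hsum1 : Summable (fun i : ℕ => ((i : ℝ) + 1) ^ (-(p + 1))) := by
    have := hsum0.comp_injective Nat.succ_injective
    refine this.congr fun i => ?_
    simp [Function.comp, Nat.succ_eq_add_one]
  refine Summable.of_nonneg_of_le (fun i => Real.rpow_nonneg (by positivity) _)
    (fun i => ?_) hsum1
  exact Real.rpow_le_rpow_of_nonpos (by positivity) (by linarith) (by linarith)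

lemma tail_tsum {p : ℝ} (hp : 0 < p) {K : ℝ} (hK : 1 ≤ K) :
    ∑' i : ℕ, (K + i + 1) ^ (-(p + 1)) ≤ K ^ (-p) / p := by
  have hsum := tail_summable hp hK
  refine hsum.tsum_le_of_sum_range_le fun N => ?_
  rw [le_div_iff₀ hp]
  have step : ∀ i : ℕ, p * (K + i + 1) ^ (-(p + 1))
      ≤ (K + i) ^ (-p) - (K + (i + 1)) ^ (-p) := by
    intro i
    have h := rpow_step hp (show (1:ℝ) ≤ K + i by
      have : (0:ℝ) ≤ (i:ℕ) := Nat.cast_nonneg i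
      linarith)
    have e : (K + (i + 1) : ℝ) = K + i + 1 := by push_cast; ring
    rw [e]
    exact h
  calc (∑ i ∈ Finset.range N, (K + i + 1) ^ (-(p + 1))) * p
      = ∑ i ∈ Finset.range N, p * (K + i + 1) ^ (-(p + 1)) := by
        rw [Finset.sum_mul]; exact Finset.sum_congr rfl fun i _ => by ring
    _ ≤ ∑ i ∈ Finset.range N, ((K + i) ^ (-p) - (K + (i + 1)) ^ (-p)) :=
        Finset.sum_le_sum fun i _ => step i
    _ = (fun j : ℕ => (K + j) ^ (-p)) 0 - (fun j : ℕ => (K + j) ^ (-p)) N := by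
        rw [← Finset.sum_range_sub' (fun j : ℕ => (K + j) ^ (-p)) N]
        exact Finset.sum_congr rfl fun i _ => by push_cast; ring_nf
    _ ≤ K ^ (-p) := by
        simp only [Nat.cast_zero, add_zero]
        have : (0:ℝ) ≤ (K + N) ^ (-p) := Real.rpow_nonneg (by positivity) _
        linarith

lemma denom_summable (β σ : ℝ) (hβ : 0 < β) (hσ : 0 < σ) (n : ℕ) (hn : 1 ≤ n) :
    Summable (fun i : ℕ => 1 / ((n:ℝ) + σ^2 * ((i:ℝ)+1) ^ (1 + 2*β))) := by
  have h1 : Summable (fun i : ℕ => (σ^2)⁻¹ * (((i:ℝ)+1) ^ (-(1 + 2*β)))) := by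
    refine Summable.mul_left _ ?_
    have hsum0 : Summable (fun k : ℕ => (k : ℝ) ^ (-(1 + 2*β))) :=
      Real.summable_nat_rpow.2 (by linarith)
    have := hsum0.comp_injective Nat.succ_injective
    refine this.congr fun i => ?_
    simp [Function.comp, Nat.succ_eq_add_one]
  refine Summable.of_nonneg_of_le (fun i => by positivity) (fun i => ?_) h1
  have hb : (0:ℝ) < ((i:ℝ)+1) ^ (1 + 2*β) := Real.rpow_pos_of_pos (by positivity) _
  have hD : (0:ℝ) < σ^2 * ((i:ℝ)+1) ^ (1 + 2*β) := by positivity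
  have hn' : (0:ℝ) < (n:ℝ) := by exact_mod_cast Nat.lt_of_lt_of_le Nat.zero_lt_one hn
  calc 1 / ((n:ℝ) + σ^2 * ((i:ℝ)+1) ^ (1 + 2*β)) ≤ 1 / (σ^2 * ((i:ℝ)+1) ^ (1 + 2*β)) := by
        apply one_div_le_one_div_of_le hD
        linarith
    _ = (σ^2)⁻¹ * (((i:ℝ)+1) ^ (-(1 + 2*β))) := by
        rw [Real.rpow_neg (by positivity)]
        field_simp

lemma series_bound (β σ : ℝ) (hβ : 0 < β) (hσ : 0 < σ) :
    ∃ C : ℝ, 0 < C ∧ ∀ n : ℕ, 1 ≤ n →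
      ∑' i : ℕ, 1 / ((n:ℝ) + σ^2 * ((i:ℝ)+1) ^ (1 + 2*β))
        ≤ C * (n:ℝ) ^ (-(2*β/(1+2*β))) := by
  set q : ℝ := 1 + 2*β with hq
  have hq0 : 0 < q := by simp [hq]; linarith
  set r : ℝ := 2*β/q with hr
  set s : ℝ := (1/σ^2) ^ (1/q) with hs
  have hs0 : 0 < s := Real.rpow_pos_of_pos (by positivity) _
  set c1 : ℝ := s + 2 with hc1
  refine ⟨c1 + (σ^2) ^ r / (σ^2 * (2*β)), by positivity, fun n hn => ?_⟩
  have hn0 : (0:ℝ) < (n:ℝ) := by exact_mod_cast Nat.lt_of_lt_of_le Nat.zero_lt_one hn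
  have hn1 : (1:ℝ) ≤ (n:ℝ) := by exact_mod_cast hn
  set x : ℝ := ((n:ℝ)/σ^2) ^ (1/q) with hx
  have hx0 : 0 < x := Real.rpow_pos_of_pos (by positivity) _
  set K : ℕ := ⌈x⌉₊ + 1 with hKdef
  have hK1 : (1:ℝ) ≤ (K:ℝ) := by
    have : 1 ≤ K := Nat.le_add_left 1 _
    exact_mod_cast this
  have hKx : x ≤ (K:ℝ) := by
    refine (Nat.le_ceil x).trans ?_
    exact_mod_cast Nat.le_succ _
  have hKu : (K:ℝ) ≤ x + 2 := by
    have h := Nat.ceil_lt_add_one hx0.le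
    have : (K:ℝ) = (⌈x⌉₊ : ℝ) + 1 := by exact_mod_cast rfl
    linarith
  set f : ℕ → ℝ := fun i => 1 / ((n:ℝ) + σ^2 * ((i:ℝ)+1) ^ q) with hf
  have hsumf : Summable f := denom_summable β σ hβ hσ n hn
  have hsplit : ∑' i, f i = (∑ i ∈ Finset.range K, f i) + ∑' i, f (i + K) :=
    (hsumf.sum_add_tsum_nat_add K).symm
  -- head bound
  have hhead : ∑ i ∈ Finset.range K, f i ≤ (K:ℝ) / n := by
    have h1 : ∀ i ∈ Finset.range K, f i ≤ 1 / (n:ℝ) := by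
      intro i _
      have hb : (0:ℝ) ≤ σ^2 * ((i:ℝ)+1) ^ q := by positivity
      apply one_div_le_one_div_of_le hn0
      linarith
    calc ∑ i ∈ Finset.range K, f i ≤ ∑ _i ∈ Finset.range K, 1 / (n:ℝ) :=
          Finset.sum_le_sum h1
      _ = (K:ℝ) / n := by
          rw [Finset.sum_const, Finset.card_range]
          simp [nsmul_eq_mul]
          ring
  -- tail bound
  have htail : ∑' i, f (i + K) ≤ (1/σ^2) * (((K:ℝ)) ^ (-(2*β)) / (2*β)) := by
    have hptwise : ∀ i : ℕ, f (i + K) ≤ (1/σ^2) * (((K:ℝ) + i + 1) ^ (-(2*β + 1))) := by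
      intro i
      have hbase : (0:ℝ) < (K:ℝ) + i + 1 := by positivity
      have hcast : (((i + K : ℕ) : ℝ) + 1) = (K:ℝ) + i + 1 := by push_cast; ring
      have hD : (0:ℝ) < σ^2 * ((K:ℝ) + i + 1) ^ q := by positivity
      have e : f (i + K) = 1 / ((n:ℝ) + σ^2 * ((K:ℝ) + i + 1) ^ q) := by
        rw [hf]; simp only []; rw [hcast]
      rw [e]
      calc 1 / ((n:ℝ) + σ^2 * ((K:ℝ) + i + 1) ^ q)
          ≤ 1 / (σ^2 * ((K:ℝ) + i + 1) ^ q) := by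
            apply one_div_le_one_div_of_le hD
            linarith
        _ = (1/σ^2) * (((K:ℝ) + i + 1) ^ (-(2*β + 1))) := by
            rw [show -(2*β+1) = -q by rw [hq]; ring, Real.rpow_neg hbase.le]
            field_simp
    have hsum_shift : Summable (fun i => f (i + K)) := (summable_nat_add_iff K).2 hsumf
    have hsum_bnd : Summable (fun i : ℕ => (1/σ^2) * (((K:ℝ) + i + 1) ^ (-(2*β + 1)))) :=
      (tail_summable (by linarith : (0:ℝ) < 2*β) hK1).mul_left _
    calc ∑' i, f (i + K) ≤ ∑' i : ℕ, (1/σ^2) * (((K:ℝ) + i + 1) ^ (-(2*β + 1))) :=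
          hsum_shift.tsum_le_tsum hptwise hsum_bnd
      _ = (1/σ^2) * ∑' i : ℕ, ((K:ℝ) + i + 1) ^ (-(2*β + 1)) := tsum_mul_left
      _ ≤ (1/σ^2) * (((K:ℝ)) ^ (-(2*β)) / (2*β)) := by
          apply mul_le_mul_of_nonneg_left _ (by positivity)
          exact tail_tsum (by linarith) hK1
  -- convert bounds to rate
  have hrate_head : (K:ℝ) / n ≤ c1 * (n:ℝ) ^ (-r) := by
    have hxval : x = (n:ℝ) ^ (1/q) * s := by
      rw [hx, hs, show (n:ℝ)/σ^2 = (n:ℝ) * (1/σ^2) by ring,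
        Real.mul_rpow hn0.le (by positivity)]
    have hnq1 : (1:ℝ) ≤ (n:ℝ) ^ (1/q) := Real.one_le_rpow hn1 (by positivity)
    have hKle : (K:ℝ) ≤ c1 * (n:ℝ) ^ (1/q) := by
      rw [hc1]
      calc (K:ℝ) ≤ x + 2 := hKu
        _ = (n:ℝ) ^ (1/q) * s + 2 := by rw [hxval]
        _ ≤ (n:ℝ) ^ (1/q) * s + 2 * (n:ℝ) ^ (1/q) := by nlinarith
        _ = (s + 2) * (n:ℝ) ^ (1/q) := by ring
    have hexp : (n:ℝ) ^ (1/q) / (n:ℝ) = (n:ℝ) ^ (-r) := by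
      have hrq : (-r : ℝ) = 1/q - 1 := by
        rw [hr]
        field_simp
        ring
      rw [hrq, Real.rpow_sub hn0, Real.rpow_one]
    calc (K:ℝ) / n ≤ c1 * (n:ℝ) ^ (1/q) / n := by
          exact div_le_div_of_nonneg_right hKle hn0.le
      _ = c1 * ((n:ℝ) ^ (1/q) / n) := by ring
      _ = c1 * (n:ℝ) ^ (-r) := by rw [hexp]
  have hrate_tail : (1/σ^2) * (((K:ℝ)) ^ (-(2*β)) / (2*β))
      ≤ ((σ^2) ^ r / (σ^2 * (2*β))) * (n:ℝ) ^ (-r) := by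
    have hKx' : ((K:ℝ)) ^ (-(2*β)) ≤ x ^ (-(2*β)) :=
      Real.rpow_le_rpow_of_nonpos hx0 hKx (by linarith)
    have hxr : x ^ (-(2*β)) = (n:ℝ) ^ (-r) * (σ^2) ^ r := by
      have h1 : x ^ (-(2*β)) = ((n:ℝ)/σ^2) ^ (-r) := by
        rw [hx, ← Real.rpow_mul (by positivity : (0:ℝ) ≤ (n:ℝ)/σ^2)]
        congr 1
        rw [hr]
        field_simp
      rw [h1, Real.div_rpow hn0.le (by positivity),
        Real.rpow_neg (by positivity : (0:ℝ) ≤ σ^2), div_inv_eq_mul]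
    calc (1/σ^2) * (((K:ℝ)) ^ (-(2*β)) / (2*β))
        ≤ (1/σ^2) * (x ^ (-(2*β)) / (2*β)) := by
          apply mul_le_mul_of_nonneg_left _ (by positivity)
          apply div_le_div_of_nonneg_right hKx' (by linarith)
      _ = ((σ^2) ^ r / (σ^2 * (2*β))) * (n:ℝ) ^ (-r) := by
          rw [hxr]
          field_simp
  have hfinal := add_le_add (hhead.trans hrate_head) (htail.trans hrate_tail)
  rw [hsplit]
  refine hfinal.trans_eq ?_
  ring





noncomputable def DD (σ β n : ℝ) (i : ℕ) : ℝ := n + σ ^ 2 * ((i : ℝ) + 1) ^ (1 + 2 * β)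

noncomputable def aa (σ β n : ℝ) (θ0 : ℕ → ℝ) (i : ℕ) : ℝ :=
  n * θ0 i / DD σ β n i - θ0 i

noncomputable def bb (σ β n : ℝ) (m : ℕ) (i : ℕ) : ℝ :=
  1 / (m : ℝ) * (n * Real.sqrt (σ ^ 2 * m / n)) / DD σ β n i

noncomputable def cc (σ β n : ℝ) (m : ℕ) (i : ℕ) : ℝ :=
  Real.sqrt (σ ^ 2 / ((m : ℝ) * DD σ β n i))

lemma DD_pos {σ β n : ℝ} (hσ : 0 < σ) (hn : 0 < n) (i : ℕ) : 0 < DD σ β n i := by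
  have : (0:ℝ) < ((i : ℝ) + 1) ^ (1 + 2 * β) := Real.rpow_pos_of_pos (by positivity) _
  unfold DD
  positivity

lemma coordinate_eq (σ β n : ℝ) (m : ℕ) (θ0 : ℕ → ℝ) {Ω : Type*}
    (Z : ℕ → ℕ → Ω → ℝ) (W : ℕ → Ω → ℝ) (ω : Ω) (i : ℕ)
    (hσ : 0 < σ) (hn : 0 < n) (hm : (m : ℝ) ≠ 0) :
    postMeanII σ β n m θ0 Z ω i + Real.sqrt (postVarII σ β n m i) * W i ω - θ0 i
      = aa σ β n θ0 i
        + (bb σ β n m i * ∑ j ∈ Finset.range m, Z j i ω + cc σ β n m i * W i ω) := by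
  have hD := (DD_pos (β := β) hσ hn i).ne'
  have hsum_lin : ∀ A B : ℝ, ∑ j ∈ Finset.range m, (A + B * Z j i ω)
      = (m : ℝ) * A + B * ∑ j ∈ Finset.range m, Z j i ω := by
    intro A B
    rw [Finset.sum_add_distrib, Finset.sum_const, Finset.card_range, nsmul_eq_mul,
      ← Finset.mul_sum]
  have hmean : postMeanII σ β n m θ0 Z ω i
      = n * θ0 i / DD σ β n i
        + bb σ β n m i * ∑ j ∈ Finset.range m, Z j i ω := by
    unfold postMeanII dataY
    have e : ∀ j ∈ Finset.range m,
        n * (θ0 i + Real.sqrt (σ ^ 2 * m / n) * Z j i ω)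
          / (n + σ ^ 2 * ((i : ℝ) + 1) ^ (1 + 2 * β))
        = (n * θ0 i / DD σ β n i)
          + (n * Real.sqrt (σ ^ 2 * m / n) / DD σ β n i) * Z j i ω := by
      intro j _
      unfold DD
      ring
    rw [Finset.sum_congr rfl e, hsum_lin]
    unfold bb
    field_simp
  have hvar : Real.sqrt (postVarII σ β n m i) = cc σ β n m i := by
    unfold postVarII cc DD
    rfl
  rw [hmean, hvar, aa]
  ring

lemma coordinate_moment_bound (σ β M n : ℝ) (m : ℕ) (θ0 : ℕ → ℝ) (i : ℕ)
    (hσ : 0 < σ) (hβ : 0 < β) (hn : 1 ≤ n) (hm : 1 ≤ (m : ℝ)) (hM : 0 < M)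
    (hθ : ((i : ℝ) + 1) ^ (1 + 2 * β) * (θ0 i) ^ 2 ≤ M ^ 2) :
    aa σ β n θ0 i ^ 2 + 3 * ((m : ℝ) * bb σ β n m i ^ 2 + cc σ β n m i ^ 2)
      ≤ (M ^ 2 + 6) * σ ^ 2 * (1 / DD σ β n i) := by
  have hn0 : (0:ℝ) < n := lt_of_lt_of_le one_pos hn
  have hm0 : (0:ℝ) < (m : ℝ) := lt_of_lt_of_le one_pos hm
  have hD := DD_pos (β := β) hσ hn0 i
  set u : ℝ := ((i : ℝ) + 1) ^ (1 + 2 * β) with hudef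
  have hu : 0 < u := Real.rpow_pos_of_pos (by positivity) _
  have hDu : DD σ β n i = n + σ ^ 2 * u := rfl
  have hlin : σ ^ 2 * u ≤ DD σ β n i := by rw [hDu]; linarith
  have hnD : n ≤ DD σ β n i := by rw [hDu]; nlinarith
  -- bound on aa
  have ha : aa σ β n θ0 i = -(θ0 i * (σ ^ 2 * u) / DD σ β n i) := by
    rw [aa, hDu]
    field_simp
    ring
  have hθ2 : θ0 i ^ 2 ≤ M ^ 2 / u := by
    rw [le_div_iff₀ hu]
    nlinarith
  have ha2 : aa σ β n θ0 i ^ 2 ≤ M ^ 2 * σ ^ 2 * (1 / DD σ β n i) := by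
    have e1 : aa σ β n θ0 i ^ 2 = θ0 i ^ 2 * (σ ^ 2 * u) ^ 2 / DD σ β n i ^ 2 := by
      rw [ha]; ring
    rw [e1]
    have e2 : θ0 i ^ 2 * (σ ^ 2 * u) ^ 2 / DD σ β n i ^ 2
        ≤ (M ^ 2 / u) * (σ ^ 2 * u) ^ 2 / DD σ β n i ^ 2 := by
      apply div_le_div_of_nonneg_right _ (by positivity)
      exact mul_le_mul_of_nonneg_right hθ2 (by positivity)
    refine e2.trans ?_
    have e3 : (M ^ 2 / u) * (σ ^ 2 * u) ^ 2 = M ^ 2 * σ ^ 4 * u := by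
      field_simp
    rw [div_eq_mul_inv ((M ^ 2 / u) * (σ ^ 2 * u) ^ 2), e3, ← div_eq_mul_inv,
      show M ^ 2 * σ ^ 2 * (1 / DD σ β n i) = M ^ 2 * σ ^ 2 / DD σ β n i by ring,
      div_le_div_iff₀ (by positivity) hD]
    nlinarith [mul_le_mul_of_nonneg_left hlin
      (by positivity : (0:ℝ) ≤ M ^ 2 * σ ^ 2 * DD σ β n i)]
  -- bound on bb
  have hbsq : bb σ β n m i ^ 2 = σ ^ 2 * n / ((m : ℝ) * DD σ β n i ^ 2) := by
    rw [bb, div_pow, mul_pow, mul_pow, Real.sq_sqrt (by positivity : (0:ℝ) ≤ σ ^ 2 * m / n)]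
    rw [div_pow]
    field_simp
  have hmb : (m : ℝ) * bb σ β n m i ^ 2 = n * σ ^ 2 / DD σ β n i ^ 2 := by
    rw [hbsq]
    field_simp
  have hmb_le : (m : ℝ) * bb σ β n m i ^ 2 ≤ σ ^ 2 / DD σ β n i := by
    rw [hmb, div_le_div_iff₀ (by positivity) hD]
    nlinarith [mul_le_mul_of_nonneg_left hnD (by positivity : (0:ℝ) ≤ σ ^ 2 * DD σ β n i)]
  -- bound on cc
  have hc2 : cc σ β n m i ^ 2 = σ ^ 2 / ((m : ℝ) * DD σ β n i) := by
    rw [cc]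
    exact Real.sq_sqrt (by positivity)
  have hc_le : cc σ β n m i ^ 2 ≤ σ ^ 2 / DD σ β n i := by
    rw [hc2]
    apply div_le_div_of_nonneg_left (by positivity) hD
    nlinarith
  have hfin : (M ^ 2 + 6) * σ ^ 2 * (1 / DD σ β n i)
      = M ^ 2 * σ ^ 2 * (1 / DD σ β n i) + 3 * (σ ^ 2 / DD σ β n i)
        + 3 * (σ ^ 2 / DD σ β n i) := by ring
  rw [hfin]
  have h3b : 3 * ((m : ℝ) * bb σ β n m i ^ 2) ≤ 3 * (σ ^ 2 / DD σ β n i) := by linarith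
  have h3c : 3 * cc σ β n m i ^ 2 ≤ 3 * (σ ^ 2 / DD σ β n i) := by linarith
  linarith



end Aux

/-- Theorem 2 (adjusted likelihoods + averaging), contraction part: for every
`β, M, σ > 0`, every sequence `M_n → ∞` and every sequence of machine counts `m_n → ∞`,
the expected aggregated posterior mass outside the ball of radius `M_n n^{-β/(1+2β)}`
around `θ₀` tends to `0` as `n → ∞`, uniformly over `θ₀ ∈ H^β(M)`. -/
theorem adjusted_likelihood_averaging_contraction
    {Ω : Type*} [MeasurableSpace Ω] (P : Measure Ω) [IsProbabilityMeasure P]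
    (Z : ℕ → ℕ → Ω → ℝ) (W : ℕ → Ω → ℝ)
    (hZW : iidStdGauss P Z W)
    (β M σ : ℝ) (hβ : 0 < β) (hM : 0 < M) (hσ : 0 < σ)
    (Mseq : ℕ → ℝ) (hMseq : Tendsto Mseq atTop atTop)
    (mseq : ℕ → ℕ) (hmseq : Tendsto (fun n => (mseq n : ℝ)) atTop atTop) :
    ∀ ε : ℝ, 0 < ε → ∃ N : ℕ, ∀ n : ℕ, N ≤ n →
      ∀ θ0 ∈ hyperRect β M,
        P {ω : Ω |
            Real.sqrt (∑' i : ℕ,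
                (postMeanII σ β (n : ℝ) (mseq n) θ0 Z ω i
                  + Real.sqrt (postVarII σ β (n : ℝ) (mseq n) i) * W i ω - θ0 i) ^ 2)
              ≥ Mseq n * (n : ℝ) ^ (-(β / (1 + 2 * β)))}
          ≤ ENNReal.ofReal ε := by
  intro ε hε
  obtain ⟨hindep, hmap⟩ := hZW
  obtain ⟨C, hC0, hCser⟩ := series_bound β σ hβ hσ
  set Cb : ℝ := (M ^ 2 + 6) * σ ^ 2 with hCbdef
  have hCb0 : (0:ℝ) < Cb := by rw [hCbdef]; positivity
  set B : ℝ := Real.sqrt (Cb * C / ε) + 1 with hBdef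
  have hB1 : (1:ℝ) ≤ B := by
    have := Real.sqrt_nonneg (Cb * C / ε)
    rw [hBdef]; linarith
  have hBsq : Cb * C ≤ ε * B ^ 2 := by
    have h1 : Real.sqrt (Cb * C / ε) ^ 2 = Cb * C / ε := Real.sq_sqrt (by positivity)
    have h2 : Real.sqrt (Cb * C / ε) ^ 2 ≤ B ^ 2 := by
      apply pow_le_pow_left₀ (Real.sqrt_nonneg _) (by rw [hBdef]; linarith)
    rw [h1] at h2
    calc Cb * C = ε * (Cb * C / ε) := by field_simp
      _ ≤ ε * B ^ 2 := mul_le_mul_of_nonneg_left h2 hε.le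
  have hev : ∀ᶠ n : ℕ in atTop, (1 : ℕ) ≤ n ∧ (1 : ℝ) ≤ (mseq n : ℝ) ∧ B ≤ Mseq n := by
    filter_upwards [eventually_ge_atTop 1, hmseq.eventually_ge_atTop 1,
      hMseq.eventually_ge_atTop B] with n h1 h2 h3
    exact ⟨h1, h2, h3⟩
  obtain ⟨N, hN⟩ := eventually_atTop.1 hev
  refine ⟨N, fun n hn θ0 hθ0 => ?_⟩
  obtain ⟨hn1, hm1, hMB⟩ := hN n hn
  obtain ⟨hθsum, hθbd⟩ := hθ0
  set m : ℕ := mseq n with hmdef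
  have hn0 : (0 : ℝ) < (n : ℝ) := by exact_mod_cast Nat.lt_of_lt_of_le Nat.zero_lt_one hn1
  have hn1' : (1 : ℝ) ≤ (n : ℝ) := by exact_mod_cast hn1
  have hm0 : (0 : ℝ) < (m : ℝ) := lt_of_lt_of_le one_pos hm1
  have hmne : (m : ℝ) ≠ 0 := hm0.ne'
  set G : (ℕ × ℕ) ⊕ ℕ → Ω → ℝ := Sum.elim (fun p : ℕ × ℕ => Z p.1 p.2) W with hGdef
  set T : ℕ → Finset ((ℕ × ℕ) ⊕ ℕ) :=
    fun i => ((Finset.range m).image fun j => Sum.inl (j, i)) ∪ {Sum.inr i} with hTdef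
  set coef : ℕ → ((ℕ × ℕ) ⊕ ℕ) → ℝ :=
    fun i => Sum.elim (fun _ => bb σ β (n : ℝ) m i) (fun _ => cc σ β (n : ℝ) m i)
    with hcoefdef
  set X : ℕ → Ω → ℝ :=
    fun i ω => aa σ β (n : ℝ) θ0 i + ∑ t ∈ T i, coef i t * G t ω with hXdef
  have hTsum : ∀ (i : ℕ) (g : (ℕ × ℕ) ⊕ ℕ → ℝ),
      ∑ t ∈ T i, g t = (∑ j ∈ Finset.range m, g (Sum.inl (j, i))) + g (Sum.inr i) := by
    intro i g
    rw [hTdef]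
    rw [Finset.sum_union (by simp [Finset.disjoint_left])]
    congr 1
    · rw [Finset.sum_image (fun x _ y _ h => by simpa using h)]
    · exact Finset.sum_singleton _ _
  have hXform : ∀ (i : ℕ) (ω : Ω), X i ω
      = aa σ β (n : ℝ) θ0 i + (bb σ β (n : ℝ) m i * ∑ j ∈ Finset.range m, Z j i ω
        + cc σ β (n : ℝ) m i * W i ω) := by
    intro i ω
    rw [hXdef]
    simp only []
    congr 1
    rw [hTsum i fun t => coef i t * G t ω]
    have h1 : ∀ j ∈ Finset.range m,
        coef i (Sum.inl (j, i)) * G (Sum.inl (j, i)) ω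
          = bb σ β (n : ℝ) m i * Z j i ω := fun j _ => rfl
    rw [Finset.sum_congr rfl h1, ← Finset.mul_sum]
    rfl
  have hcoordeq : ∀ (i : ℕ) (ω : Ω),
      postMeanII σ β (n : ℝ) m θ0 Z ω i
        + Real.sqrt (postVarII σ β (n : ℝ) m i) * W i ω - θ0 i = X i ω := by
    intro i ω
    rw [hXform i ω]
    exact coordinate_eq σ β (n : ℝ) m θ0 Z W ω i hσ hn0 hmne
  have hind' : ∀ s t : (ℕ × ℕ) ⊕ ℕ, s ≠ t → IndepFun (G s) (G t) P :=
    fun s t hst => hindep.indepFun hst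
  have hmom : ∀ i : ℕ, Integrable (fun ω => X i ω ^ 2) P ∧
      ∫ ω, X i ω ^ 2 ∂P ≤ aa σ β (n : ℝ) θ0 i ^ 2 + 3 * ∑ t ∈ T i, coef i t ^ 2 :=
    fun i => moment_bound (T i) G (coef i) (aa σ β (n : ℝ) θ0 i) hind' hmap
  have hcoefsum : ∀ i : ℕ, ∑ t ∈ T i, coef i t ^ 2
      = (m : ℝ) * bb σ β (n : ℝ) m i ^ 2 + cc σ β (n : ℝ) m i ^ 2 := by
    intro i
    rw [hTsum i (fun t => coef i t ^ 2)]
    have h1 : ∀ j ∈ Finset.range m,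
        coef i (Sum.inl (j, i)) ^ 2 = bb σ β (n : ℝ) m i ^ 2 := fun j _ => rfl
    rw [Finset.sum_congr rfl h1, Finset.sum_const, Finset.card_range, nsmul_eq_mul]
    rfl
  have hEX : ∀ i : ℕ, ∫ ω, X i ω ^ 2 ∂P ≤ Cb * (1 / DD σ β (n : ℝ) i) := by
    intro i
    refine ((hmom i).2).trans ?_
    rw [hcoefsum i, hCbdef]
    exact coordinate_moment_bound σ β M (n : ℝ) m θ0 i hσ hβ hn1' hm1 hM (hθbd i)
  have hGmeas : ∀ t, AEMeasurable (G t) P := fun t => aemeas_of_map_gauss (hmap t)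
  have hXmeas : ∀ i : ℕ, AEMeasurable (X i) P := by
    intro i
    have h1 : AEMeasurable (fun ω => ∑ t ∈ T i, coef i t * G t ω) P :=
      Finset.aemeasurable_fun_sum _ fun t _ => (hGmeas t).const_mul _
    exact h1.const_add (aa σ β (n : ℝ) θ0 i)
  have hXsqmeas : ∀ i : ℕ, AEMeasurable (fun ω => ENNReal.ofReal (X i ω ^ 2)) P :=
    fun i => ENNReal.measurable_ofReal.comp_aemeasurable ((hXmeas i).pow_const 2)
  set R : ℝ := Mseq n * (n : ℝ) ^ (-(β / (1 + 2 * β))) with hRdef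
  have hMn1 : (1 : ℝ) ≤ Mseq n := le_trans hB1 hMB
  have hrpos : (0:ℝ) < (n : ℝ) ^ (-(β / (1 + 2 * β))) := Real.rpow_pos_of_pos hn0 _
  have hR0 : 0 < R := by rw [hRdef]; nlinarith
  have hRsq : R ^ 2 = Mseq n ^ 2 * (n : ℝ) ^ (-(2 * β / (1 + 2 * β))) := by
    rw [hRdef, mul_pow, ← Real.rpow_natCast ((n:ℝ) ^ (-(β / (1 + 2 * β)))) 2,
      ← Real.rpow_mul hn0.le]
    congr 1
    push_cast
    ring
  set F : Ω → ENNReal := fun ω => ∑' i : ℕ, ENNReal.ofReal (X i ω ^ 2) with hFdef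
  have hFmeas : AEMeasurable F P := AEMeasurable.ennreal_tsum hXsqmeas
  have hsub : {ω : Ω |
      Real.sqrt (∑' i : ℕ,
          (postMeanII σ β (n : ℝ) m θ0 Z ω i
            + Real.sqrt (postVarII σ β (n : ℝ) m i) * W i ω - θ0 i) ^ 2) ≥ R}
      ⊆ {ω : Ω | ENNReal.ofReal (R ^ 2) ≤ F ω} := by
    intro ω hω
    simp only [Set.mem_setOf_eq] at hω ⊢
    have heq : (∑' i : ℕ,
        (postMeanII σ β (n : ℝ) m θ0 Z ω i
          + Real.sqrt (postVarII σ β (n : ℝ) m i) * W i ω - θ0 i) ^ 2)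
        = ∑' i : ℕ, X i ω ^ 2 := tsum_congr fun i => by rw [hcoordeq i ω]
    rw [heq] at hω
    by_cases hs : Summable fun i : ℕ => X i ω ^ 2
    · have hT0 : 0 ≤ ∑' i : ℕ, X i ω ^ 2 := tsum_nonneg fun i => sq_nonneg _
      have hle : R ≤ Real.sqrt (∑' i : ℕ, X i ω ^ 2) := hω
      have h2 : R ^ 2 ≤ ∑' i : ℕ, X i ω ^ 2 := by
        calc R ^ 2 ≤ Real.sqrt (∑' i : ℕ, X i ω ^ 2) ^ 2 :=
              pow_le_pow_left₀ hR0.le hle 2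
          _ = ∑' i : ℕ, X i ω ^ 2 := Real.sq_sqrt hT0
      calc ENNReal.ofReal (R ^ 2) ≤ ENNReal.ofReal (∑' i : ℕ, X i ω ^ 2) :=
            ENNReal.ofReal_le_ofReal h2
        _ = ∑' i : ℕ, ENNReal.ofReal (X i ω ^ 2) :=
            ENNReal.ofReal_tsum_of_nonneg (fun i => sq_nonneg _) hs
        _ = F ω := rfl
    · exfalso
      rw [tsum_eq_zero_of_not_summable hs] at hω
      have : R ≤ 0 := by simpa using hω
      linarith
  have hDDrfl : ∀ i : ℕ, DD σ β (n : ℝ) i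
      = (n : ℝ) + σ ^ 2 * ((i : ℝ) + 1) ^ (1 + 2 * β) := fun i => rfl
  have hsumD : Summable (fun i : ℕ => 1 / DD σ β (n : ℝ) i) := by
    have := denom_summable β σ hβ hσ n hn1
    simpa [hDDrfl] using this
  have hlint : ∫⁻ ω, F ω ∂P
      ≤ ENNReal.ofReal (Cb * (C * (n : ℝ) ^ (-(2 * β / (1 + 2 * β))))) := by
    rw [hFdef]
    rw [lintegral_tsum hXsqmeas]
    have h1 : ∀ i : ℕ, ∫⁻ ω, ENNReal.ofReal (X i ω ^ 2) ∂P
        = ENNReal.ofReal (∫ ω, X i ω ^ 2 ∂P) := fun i =>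
      (ofReal_integral_eq_lintegral_ofReal (hmom i).1
        (ae_of_all _ fun ω => sq_nonneg _)).symm
    calc ∑' i : ℕ, ∫⁻ ω, ENNReal.ofReal (X i ω ^ 2) ∂P
        = ∑' i : ℕ, ENNReal.ofReal (∫ ω, X i ω ^ 2 ∂P) := tsum_congr h1
      _ ≤ ∑' i : ℕ, ENNReal.ofReal (Cb * (1 / DD σ β (n : ℝ) i)) :=
          ENNReal.tsum_le_tsum fun i => ENNReal.ofReal_le_ofReal (hEX i)
      _ = ENNReal.ofReal (∑' i : ℕ, Cb * (1 / DD σ β (n : ℝ) i)) :=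
          (ENNReal.ofReal_tsum_of_nonneg
            (fun i => mul_nonneg hCb0.le
              (one_div_nonneg.2 (DD_pos (β := β) hσ hn0 i).le))
            (hsumD.mul_left Cb)).symm
      _ ≤ ENNReal.ofReal (Cb * (C * (n : ℝ) ^ (-(2 * β / (1 + 2 * β))))) := by
          apply ENNReal.ofReal_le_ofReal
          rw [tsum_mul_left]
          apply mul_le_mul_of_nonneg_left _ hCb0.le
          have := hCser n hn1
          simpa [hDDrfl] using this
  have hRne : ENNReal.ofReal (R ^ 2) ≠ 0 := by
    refine (ENNReal.ofReal_pos.2 ?_).ne'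
    positivity
  calc P {ω : Ω |
      Real.sqrt (∑' i : ℕ,
          (postMeanII σ β (n : ℝ) m θ0 Z ω i
            + Real.sqrt (postVarII σ β (n : ℝ) m i) * W i ω - θ0 i) ^ 2) ≥ R}
      ≤ P {ω : Ω | ENNReal.ofReal (R ^ 2) ≤ F ω} := measure_mono hsub
    _ ≤ (∫⁻ ω, F ω ∂P) / ENNReal.ofReal (R ^ 2) :=
        meas_ge_le_lintegral_div hFmeas hRne ENNReal.ofReal_ne_top
    _ ≤ ENNReal.ofReal (Cb * (C * (n : ℝ) ^ (-(2 * β / (1 + 2 * β)))))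
          / ENNReal.ofReal (R ^ 2) := ENNReal.div_le_div_right hlint _
    _ ≤ ENNReal.ofReal ε := by
        rw [ENNReal.div_le_iff_le_mul (Or.inl hRne) (Or.inl ENNReal.ofReal_ne_top)]
        rw [← ENNReal.ofReal_mul hε.le]
        apply ENNReal.ofReal_le_ofReal
        rw [hRsq]
        have hrate0 : (0:ℝ) ≤ (n : ℝ) ^ (-(2 * β / (1 + 2 * β))) :=
          (Real.rpow_pos_of_pos hn0 _).le
        have hM2 : B ^ 2 ≤ Mseq n ^ 2 := pow_le_pow_left₀ (by linarith) hMB 2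
        have hkey : Cb * C ≤ ε * Mseq n ^ 2 := by nlinarith
        calc Cb * (C * (n : ℝ) ^ (-(2 * β / (1 + 2 * β))))
            = (Cb * C) * (n : ℝ) ^ (-(2 * β / (1 + 2 * β))) := by ring
          _ ≤ (ε * Mseq n ^ 2) * (n : ℝ) ^ (-(2 * β / (1 + 2 * β))) :=
              mul_le_mul_of_nonneg_right hkey hrate0
          _ = ε * (Mseq n ^ 2 * (n : ℝ) ^ (-(2 * β / (1 + 2 * β)))) := by ring
end

section
/- (Theorem 4, adjusted likelihoods + Wasserstein barycenter: honest coverage.) For every β, M, σ > 0 and every γ ∈ (0,1) there exist L > 0 and N such that for all n ≥ N and all machine counts m ≥ 1, sup_{θ₀ ∈ H^β(M)} P( ‖θ̂ − θ₀‖₂ > L·r_γ ) ≤ γ. -/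
open MeasureTheory ProbabilityTheory Filter

section GaussHelpers

noncomputable def stdG : Measure ℝ := gaussianReal 0 1

instance : IsProbabilityMeasure stdG := by rw [stdG]; infer_instance

lemma pow_le_exp_sq (k : ℕ) (x : ℝ) :
    |x| ^ k ≤ (1 + 4 ^ k * k.factorial) * Real.exp (x ^ 2 / 4) := by
  have h1 : (x ^ 2 / 4) ^ k / k.factorial ≤ Real.exp (x ^ 2 / 4) := by
    calc (x ^ 2 / 4) ^ k / k.factorial
        ≤ ∑ i ∈ Finset.range (k + 1), (x ^ 2 / 4) ^ i / i.factorial := by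
          refine Finset.single_le_sum (f := fun i => (x ^ 2 / 4) ^ i / i.factorial) ?_
            (Finset.self_mem_range_succ k)
          intro i _
          positivity
      _ ≤ Real.exp (x ^ 2 / 4) := Real.sum_le_exp_of_nonneg (by positivity) _
  have h2 : x ^ (2 * k) ≤ 4 ^ k * k.factorial * Real.exp (x ^ 2 / 4) := by
    have := mul_le_mul_of_nonneg_left h1 (by positivity : (0:ℝ) ≤ 4 ^ k * k.factorial)
    calc x ^ (2 * k) = (x ^ 2) ^ k := by rw [pow_mul]
      _ = 4 ^ k * k.factorial * ((x ^ 2 / 4) ^ k / k.factorial) := by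
          field_simp
          rw [← mul_pow]; congr 1; ring
      _ ≤ _ := this
  have hcase : |x| ^ k ≤ 1 + x ^ (2 * k) := by
    rcases le_total (|x|) 1 with h | h
    · have : |x| ^ k ≤ 1 := pow_le_one₀ (abs_nonneg x) h
      have h0 : (0:ℝ) ≤ x ^ (2 * k) := by
        rw [pow_mul]; positivity
      nlinarith
    · have : |x| ^ k ≤ |x| ^ (2 * k) := pow_le_pow_right₀ h (by omega)
      have h2k : |x| ^ (2 * k) = x ^ (2 * k) := by
        rw [← abs_pow, abs_of_nonneg]
        rw [pow_mul]; positivity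
      nlinarith
  have hexp1 : (1:ℝ) ≤ Real.exp (x ^ 2 / 4) := by
    rw [show (1:ℝ) = Real.exp 0 by simp]
    exact Real.exp_le_exp.mpr (by positivity)
  calc |x| ^ k ≤ 1 + x ^ (2 * k) := hcase
    _ ≤ 1 * Real.exp (x ^ 2 / 4) + 4 ^ k * k.factorial * Real.exp (x ^ 2 / 4) := by
        refine add_le_add ?_ h2
        simpa using hexp1
    _ = (1 + 4 ^ k * k.factorial) * Real.exp (x ^ 2 / 4) := by ring

lemma integrable_pow_gauss_weight (k : ℕ) :
    Integrable (fun x : ℝ => x ^ k * gaussianPDFReal 0 1 x) := by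
  have hmeas : AEStronglyMeasurable (fun x : ℝ => x ^ k * gaussianPDFReal 0 1 x) volume :=
    ((measurable_id.pow_const k).mul (measurable_gaussianPDFReal 0 1)).aestronglyMeasurable
  have hint : Integrable
      (fun x : ℝ => ((1 + 4 ^ k * k.factorial) * (Real.sqrt (2 * Real.pi))⁻¹) *
        Real.exp (-(4⁻¹) * x ^ 2)) volume :=
    (integrable_exp_neg_mul_sq (by norm_num)).const_mul _
  refine hint.mono' hmeas (Filter.Eventually.of_forall fun x => ?_)
  have hpdf : gaussianPDFReal 0 1 x = (Real.sqrt (2 * Real.pi))⁻¹ * Real.exp (-x ^ 2 / 2) := by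
    simp [gaussianPDFReal]
  rw [hpdf]
  have h0 : 0 ≤ (Real.sqrt (2 * Real.pi))⁻¹ := by positivity
  have habs : |x ^ k * ((Real.sqrt (2 * Real.pi))⁻¹ * Real.exp (-x ^ 2 / 2))|
      = |x| ^ k * ((Real.sqrt (2 * Real.pi))⁻¹ * Real.exp (-x ^ 2 / 2)) := by
    rw [abs_mul, abs_pow]
    congr 1
    rw [abs_of_nonneg (by positivity)]
  rw [Real.norm_eq_abs, habs]
  have hb := pow_le_exp_sq k x
  have hexpeq : Real.exp (x ^ 2 / 4) * Real.exp (-x ^ 2 / 2) = Real.exp (-(4⁻¹) * x ^ 2) := by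
    rw [← Real.exp_add]
    ring_nf
  calc |x| ^ k * ((Real.sqrt (2 * Real.pi))⁻¹ * Real.exp (-x ^ 2 / 2))
      ≤ ((1 + 4 ^ k * k.factorial) * Real.exp (x ^ 2 / 4)) *
        ((Real.sqrt (2 * Real.pi))⁻¹ * Real.exp (-x ^ 2 / 2)) := by
        refine mul_le_mul_of_nonneg_right hb (by positivity)
    _ = (1 + 4 ^ k * k.factorial) * (Real.sqrt (2 * Real.pi))⁻¹ *
        (Real.exp (x ^ 2 / 4) * Real.exp (-x ^ 2 / 2)) := by ring
    _ = (1 + 4 ^ k * k.factorial) * (Real.sqrt (2 * Real.pi))⁻¹ *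
        Real.exp (-(4⁻¹) * x ^ 2) := by rw [hexpeq]

lemma integrable_pow_stdG (k : ℕ) : Integrable (fun x : ℝ => x ^ k) stdG := by
  rw [stdG, gaussianReal_of_var_ne_zero 0 one_ne_zero]
  rw [integrable_withDensity_iff (measurable_gaussianPDF 0 1)
    (Filter.Eventually.of_forall fun x => ENNReal.ofReal_lt_top)]
  refine (integrable_pow_gauss_weight k).congr (Filter.Eventually.of_forall fun x => ?_)
  simp only [gaussianPDF_def, ENNReal.toReal_ofReal (gaussianPDFReal_nonneg 0 1 x)]

lemma stdG_map_neg : Measure.map (fun x : ℝ => (-1 : ℝ) * x) stdG = stdG := by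
  rw [stdG, gaussianReal_map_const_mul (-1)]
  norm_num

lemma integral_id_stdG : ∫ x, x ∂stdG = 0 := by
  have h : ∫ x, x ∂stdG = ∫ x, (-1 : ℝ) * x ∂stdG := by
    conv_lhs => rw [← stdG_map_neg]
    rw [integral_map (φ := fun x : ℝ => (-1 : ℝ) * x) (f := fun x : ℝ => x) (μ := stdG)
      (by fun_prop) aestronglyMeasurable_id]
  have h2 : ∫ x, (-1 : ℝ) * x ∂stdG = -∫ x, x ∂stdG := by
    simp only [neg_one_mul]
    exact integral_neg _
  rw [h2] at h
  linarith

lemma memLp_pow_stdG (k : ℕ) : MemLp (fun x : ℝ => x ^ k) 2 stdG := by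
  rw [memLp_two_iff_integrable_sq (by fun_prop)]
  have := integrable_pow_stdG (2 * k)
  refine this.congr (Filter.Eventually.of_forall fun x => ?_)
  simp only [← pow_mul, mul_comm]

lemma integral_sq_stdG_pos : 0 < ∫ x, x ^ 2 ∂stdG := by
  rcases lt_or_eq_of_le (integral_nonneg (fun x => sq_nonneg x) :
      0 ≤ ∫ x, x ^ 2 ∂stdG) with h | h
  · exact h
  exfalso
  have h0 : (fun x : ℝ => x ^ 2) =ᵐ[stdG] 0 :=
    (integral_eq_zero_iff_of_nonneg (fun x => sq_nonneg x) (integrable_pow_stdG 2)).mp h.symm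
  have h1 : stdG {x : ℝ | x ^ 2 ≠ 0} = 0 := by
    have := h0
    rw [Filter.EventuallyEq, ae_iff] at this
    simpa using this
  have h2 : ({0}ᶜ : Set ℝ) = {x : ℝ | x ^ 2 ≠ 0} := by
    ext x
    simp [pow_eq_zero_iff]
  have h3 : (volume : Measure ℝ) ({0}ᶜ : Set ℝ) = 0 := by
    have habs : (volume : Measure ℝ) ≪ stdG := by
      rw [stdG]; exact gaussianReal_absolutelyContinuous' 0 one_ne_zero
    rw [h2]
    exact habs h1
  have h4 : (volume : Measure ℝ) ({0}ᶜ : Set ℝ) = ⊤ := by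
    have : (volume : Measure ℝ) Set.univ ≤ volume ({0} : Set ℝ) + volume ({0}ᶜ : Set ℝ) := by
      rw [← Set.union_compl_self ({0} : Set ℝ)] at *
      exact measure_union_le _ _
    simp [Real.volume_univ, Real.volume_singleton] at this
    exact this
  rw [h3] at h4
  exact ENNReal.zero_ne_top h4

set_option linter.unusedSectionVars false

variable {Ω : Type*} [MeasurableSpace Ω] {P : Measure Ω} [IsProbabilityMeasure P] {X : Ω → ℝ}

lemma aemeas_of_map_stdG (hmap : Measure.map X P = stdG) : AEMeasurable X P := by
  by_contra h
  rw [Measure.map_of_not_aemeasurable h] at hmap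
  have h1 : stdG Set.univ = 1 := measure_univ
  rw [← hmap] at h1
  simp at h1

lemma integral_pow_of_map_stdG (hmap : Measure.map X P = stdG) (k : ℕ) :
    ∫ ω, (X ω) ^ k ∂P = ∫ x, x ^ k ∂stdG := by
  rw [← hmap]
  exact (integral_map (aemeas_of_map_stdG hmap)
    ((measurable_id.pow_const k).aestronglyMeasurable)).symm

lemma memLp_pow_of_map_stdG (hmap : Measure.map X P = stdG) (k : ℕ) :
    MemLp (fun ω => (X ω) ^ k) 2 P := by
  have h := (memLp_map_measure_iff (g := fun x : ℝ => x ^ k) (p := 2)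
    ((measurable_id.pow_const k).aestronglyMeasurable) (aemeas_of_map_stdG hmap)).mp
  rw [hmap] at h
  exact h (memLp_pow_stdG k)

lemma memLp_of_map_stdG (hmap : Measure.map X P = stdG) : MemLp X 2 P := by
  have := memLp_pow_of_map_stdG hmap 1
  simpa using this

lemma integral_of_map_stdG (hmap : Measure.map X P = stdG) : ∫ ω, X ω ∂P = 0 := by
  have := integral_pow_of_map_stdG hmap 1
  simpa [integral_id_stdG] using this

lemma variance_of_map_stdG (hmap : Measure.map X P = stdG) :
    variance X P = ∫ x, x ^ 2 ∂stdG := by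
  rw [variance_eq_sub (memLp_of_map_stdG hmap)]
  simp only [Pi.pow_apply]
  rw [integral_pow_of_map_stdG hmap 2, integral_of_map_stdG hmap]
  ring

end GaussHelpers

section NumericHelpers

lemma numeric_cheb {Vr v T TK σ n K1 γ : ℝ} (hVr : 0 ≤ Vr) (hv : 0 < v) (hσ : 0 < σ)
    (hn : 0 < n) (hγ1 : γ < 1) (hT : 0 < T) (hTK34 : 3 / 4 * T ≤ TK) (hTKle : TK ≤ T)
    (hnT : K1 * σ ^ 2 / 2 ≤ n * T) (hK1 : 256 * Vr ≤ 9 * v ^ 2 * (1 - γ) * K1) :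
    Vr * (σ ^ 2 / n) * T ≤ (1 - γ) / 2 * (v * TK / 2) ^ 2 := by
  have hγ' : (0:ℝ) < 1 - γ := by linarith
  have hrw : Vr * (σ ^ 2 / n) * T = Vr * σ ^ 2 * T / n := by ring
  rw [hrw, div_le_iff₀ hn]
  have e1 : Vr * σ ^ 2 * T ≤ 9 * v ^ 2 * (1 - γ) * K1 * σ ^ 2 * T / 256 := by
    have h := mul_le_mul_of_nonneg_right hK1 (show (0:ℝ) ≤ σ ^ 2 * T / 256 by positivity)
    nlinarith
  have e2 : 9 * v ^ 2 * (1 - γ) * K1 * σ ^ 2 * T / 256 ≤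
      9 * v ^ 2 * (1 - γ) * T * (n * T) / 128 := by
    have h := mul_le_mul_of_nonneg_right hnT
      (show (0:ℝ) ≤ 9 * v ^ 2 * (1 - γ) * T / 128 by positivity)
    nlinarith
  have e3 : 9 * v ^ 2 * (1 - γ) * T * (n * T) / 128 ≤ (1 - γ) / 2 * (v * TK / 2) ^ 2 * n := by
    have h1 : 3 / 8 * v * T ≤ v * TK / 2 := by nlinarith
    have h2 : (3 / 8 * v * T) ^ 2 ≤ (v * TK / 2) ^ 2 := by
      have h0 : (0:ℝ) ≤ 3 / 8 * v * T := by positivity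
      nlinarith
    have h3 := mul_le_mul_of_nonneg_right h2 (show (0:ℝ) ≤ (1 - γ) / 2 * n by positivity)
    nlinarith
  linarith

lemma numeric_final {M v γ L T TK r : ℝ} (hM : 0 < M) (hv : 0 < v) (hγ0 : 0 < γ)
    (hT : 0 < T) (hTK34 : 3 / 4 * T ≤ TK) (hr2 : v * TK / 2 ≤ r ^ 2)
    (hL : 8 * (M ^ 2 + v) / (3 * v * γ) ≤ L ^ 2) (hr0 : 0 < r) (hL0 : 0 < L) :
    (M ^ 2 + v) * T ≤ γ * (L * r) ^ 2 := by
  have h1 : 3 / 8 * (v * T) ≤ r ^ 2 := by nlinarith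
  have h2 : γ * (L * r) ^ 2 = (γ * L ^ 2) * r ^ 2 := by ring
  have h3 : 8 * (M ^ 2 + v) / (3 * v) ≤ γ * L ^ 2 := by
    have h := mul_le_mul_of_nonneg_right hL (le_of_lt hγ0)
    have heq : 8 * (M ^ 2 + v) / (3 * v * γ) * γ = 8 * (M ^ 2 + v) / (3 * v) := by
      field_simp
    nlinarith
  have h4 : (8 * (M ^ 2 + v) / (3 * v)) * (3 / 8 * (v * T)) = (M ^ 2 + v) * T := by
    field_simp
  have h5 : (8 * (M ^ 2 + v) / (3 * v)) * (3 / 8 * (v * T)) ≤ (γ * L ^ 2) * r ^ 2 := by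
    have ha : (0:ℝ) ≤ 8 * (M ^ 2 + v) / (3 * v) := by positivity
    have hb : (0:ℝ) ≤ 3 / 8 * (v * T) := by positivity
    have hc : (0:ℝ) ≤ r ^ 2 := sq_nonneg r
    calc (8 * (M ^ 2 + v) / (3 * v)) * (3 / 8 * (v * T))
        ≤ (8 * (M ^ 2 + v) / (3 * v)) * r ^ 2 := by nlinarith
      _ ≤ (γ * L ^ 2) * r ^ 2 := by nlinarith
  rw [h2]
  linarith [h4 ▸ h5]

lemma numeric_coord {σ n κ θi M v : ℝ} (hσ : 0 < σ) (hn : 0 < n) (hκ : 0 < κ) (hv : 0 < v)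
    (hθ : κ * θi ^ 2 ≤ M ^ 2 * σ ^ 2) :
    (κ * θi / (n + κ)) ^ 2 + n * σ ^ 2 / (n + κ) ^ 2 * v ≤ (M ^ 2 + v) * (σ ^ 2 / (n + κ)) := by
  have hden : (0:ℝ) < n + κ := by linarith
  have h1 : (κ * θi / (n + κ)) ^ 2 ≤ M ^ 2 * (σ ^ 2 / (n + κ)) := by
    rw [div_pow, div_le_iff₀ (by positivity)]
    have hkey : κ * (κ * θi ^ 2) ≤ κ * (M ^ 2 * σ ^ 2) :=
      mul_le_mul_of_nonneg_left hθ hκ.le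
    have : M ^ 2 * (σ ^ 2 / (n + κ)) * (n + κ) ^ 2 = M ^ 2 * σ ^ 2 * (n + κ) := by
      field_simp
    rw [this]
    nlinarith [sq_nonneg θi]
  have h2 : n * σ ^ 2 / (n + κ) ^ 2 * v ≤ v * (σ ^ 2 / (n + κ)) := by
    rw [div_mul_eq_mul_div, div_le_iff₀ (by positivity)]
    have : v * (σ ^ 2 / (n + κ)) * (n + κ) ^ 2 = v * σ ^ 2 * (n + κ) := by
      field_simp
    rw [this]
    nlinarith [mul_nonneg (mul_nonneg hv.le (sq_nonneg σ)) hκ.le]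
  have h3 : (M ^ 2 + v) * (σ ^ 2 / (n + κ))
      = M ^ 2 * (σ ^ 2 / (n + κ)) + v * (σ ^ 2 / (n + κ)) := by ring
  rw [h3]
  linarith

end NumericHelpers

/-- Method IV (likelihoods raised to the power `m`, Wasserstein barycenter aggregation):
aggregated posterior mean `θ̂ᵢ = (1/m) Σ_{j<m} n Y^j_i / (n + σ² i^{1+2β})`. -/
noncomputable def postMeanIV (σ β n : ℝ) (m : ℕ) (θ0 : ℕ → ℝ) {Ω : Type*}
    (Z : ℕ → ℕ → Ω → ℝ) (ω : Ω) (i : ℕ) : ℝ :=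
  (1 / (m : ℝ)) * ∑ j ∈ Finset.range m,
    n * dataY σ n m θ0 Z j i ω / (n + σ ^ 2 * ((i : ℝ) + 1) ^ (1 + 2 * β))

/-- Method IV: aggregated posterior coordinate variances `tᵢ² = σ²/(n + σ² i^{1+2β})`. -/
noncomputable def postVarIV (σ β n : ℝ) (i : ℕ) : ℝ :=
  σ ^ 2 / (n + σ ^ 2 * ((i : ℝ) + 1) ^ (1 + 2 * β))

set_option maxHeartbeats 1000000

/-- Theorem 4 (adjusted likelihoods + Wasserstein barycenter), coverage part: for every
`β, M, σ > 0` and every `γ ∈ (0,1)` there exist `L > 0` and `N` such that for all `n ≥ N`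
and all machine counts `m ≥ 1`, `sup_{θ₀ ∈ H^β(M)} P(‖θ̂ − θ₀‖₂ > L r_γ) ≤ γ`, where
`r_γ > 0` is the deterministic credible radius with `P(Σᵢ tᵢ² Wᵢ² ≤ r_γ²) = 1 − γ`. -/
theorem adjusted_likelihood_barycenter_coverage
    {Ω : Type*} [MeasurableSpace Ω] (P : Measure Ω) [IsProbabilityMeasure P]
    (Z : ℕ → ℕ → Ω → ℝ) (W : ℕ → Ω → ℝ)
    (hZW : iidStdGauss P Z W)
    (β M σ : ℝ) (hβ : 0 < β) (hM : 0 < M) (hσ : 0 < σ)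
    (γ : ℝ) (hγ0 : 0 < γ) (hγ1 : γ < 1) :
    ∃ L : ℝ, 0 < L ∧ ∃ N : ℝ, ∀ n : ℝ, N ≤ n → ∀ m : ℕ, 1 ≤ m →
      ∀ θ0 ∈ hyperRect β M,
        ∀ rγ : ℝ, 0 < rγ →
          P {ω : Ω | ∑' i : ℕ, postVarIV σ β n i * (W i ω) ^ 2 ≤ rγ ^ 2}
              = ENNReal.ofReal (1 - γ) →
          P {ω : Ω |
              Real.sqrt (∑' i : ℕ,
                  (postMeanIV σ β n m θ0 Z ω i - θ0 i) ^ 2) > L * rγ}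
            ≤ ENNReal.ofReal γ := by
  obtain ⟨hInd, hMap⟩ := hZW
  have hWmap : ∀ i, Measure.map (W i) P = stdG := fun i => hMap (Sum.inr i)
  have hZmap : ∀ j i, Measure.map (Z j i) P = stdG := fun j i => hMap (Sum.inl (j, i))
  -- gaussian moments
  set v : ℝ := ∫ x, x ^ 2 ∂stdG with hv_def
  set C4 : ℝ := ∫ x, x ^ 4 ∂stdG with hC4_def
  set Vr : ℝ := C4 - v ^ 2 with hVr_def
  have hv : 0 < v := integral_sq_stdG_pos
  have hVr_eq : Vr = variance (fun x : ℝ => x ^ 2) stdG := by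
    rw [variance_eq_sub (memLp_pow_stdG 2), hVr_def, hC4_def, hv_def]
    congr 1
    refine integral_congr_ae (Filter.Eventually.of_forall fun x => ?_)
    simp only [Pi.pow_apply]
    ring
  have hVr : 0 ≤ Vr := hVr_eq ▸ variance_nonneg _ _
  -- choose constants
  set K1 : ℕ := ⌈256 * Vr / (9 * v ^ 2 * (1 - γ))⌉₊ + 1 with hK1_def
  have hK1pos : 0 < (K1 : ℝ) := by positivity
  have hK1ge : 256 * Vr / (9 * v ^ 2 * (1 - γ)) ≤ (K1 : ℝ) := by
    rw [hK1_def]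
    push_cast
    have := Nat.le_ceil (256 * Vr / (9 * v ^ 2 * (1 - γ)))
    linarith
  set L : ℝ := max 1 (Real.sqrt (8 * (M ^ 2 + v) / (3 * v * γ))) with hL_def
  have hL1 : (1:ℝ) ≤ L := le_max_left _ _
  have hLpos : 0 < L := lt_of_lt_of_le one_pos hL1
  have hLsq : 8 * (M ^ 2 + v) / (3 * v * γ) ≤ L ^ 2 := by
    have h1 : Real.sqrt (8 * (M ^ 2 + v) / (3 * v * γ)) ≤ L := le_max_right _ _
    have h2 : 0 ≤ 8 * (M ^ 2 + v) / (3 * v * γ) := by positivity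
    calc 8 * (M ^ 2 + v) / (3 * v * γ)
        = Real.sqrt (8 * (M ^ 2 + v) / (3 * v * γ)) ^ 2 := (Real.sq_sqrt h2).symm
      _ ≤ L ^ 2 := by
          have h3 : 0 ≤ Real.sqrt (8 * (M ^ 2 + v) / (3 * v * γ)) := Real.sqrt_nonneg _
          nlinarith
  refine ⟨L, hLpos, max 1 (σ ^ 2 * (K1 : ℝ) ^ (1 + 2 * β)), ?_⟩
  intro n hn m hm θ0 hθ0 rγ hrγ hcred
  have hn1 : (1:ℝ) ≤ n := le_trans (le_max_left _ _) hn
  have hn0 : (0:ℝ) < n := lt_of_lt_of_le one_pos hn1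
  have hnK1 : σ ^ 2 * (K1 : ℝ) ^ (1 + 2 * β) ≤ n := le_trans (le_max_right _ _) hn
  have hexp_pos : (0:ℝ) < 1 + 2 * β := by linarith
  -- local notation
  set κ : ℕ → ℝ := fun i => σ ^ 2 * ((i : ℝ) + 1) ^ (1 + 2 * β) with hκ_def
  have hκpos : ∀ i, 0 < κ i := by
    intro i
    have : (0:ℝ) < ((i : ℝ) + 1) ^ (1 + 2 * β) :=
      Real.rpow_pos_of_pos (by positivity) _
    rw [hκ_def]
    positivity
  have hden : ∀ i, 0 < n + κ i := fun i => by have := hκpos i; linarith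
  set t2 : ℕ → ℝ := fun i => postVarIV σ β n i with ht2_def
  have ht2_eq : ∀ i, t2 i = σ ^ 2 / (n + κ i) := fun i => rfl
  have ht2pos : ∀ i, 0 < t2 i := by
    intro i
    rw [ht2_eq]
    exact div_pos (by positivity) (hden i)
  -- summability of t2
  have hsum : Summable t2 := by
    have hs1 : Summable (fun i : ℕ => 1 / ((i : ℝ)) ^ (1 + 2 * β)) :=
      (Real.summable_one_div_nat_rpow).mpr (by linarith)
    have hs2 : Summable (fun i : ℕ => 1 / (((i : ℕ) + 1 : ℝ)) ^ (1 + 2 * β)) := by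
      have := (summable_nat_add_iff 1).mpr hs1
      refine this.congr fun i => ?_
      push_cast
      ring_nf
    refine Summable.of_nonneg_of_le (fun i => (ht2pos i).le) (fun i => ?_) hs2
    rw [ht2_eq]
    rw [div_le_div_iff₀ (hden i) (by positivity)]
    have h1 : (0:ℝ) < ((i : ℝ) + 1) ^ (1 + 2 * β) := Real.rpow_pos_of_pos (by positivity) _
    have h2 : σ ^ 2 * ((i : ℝ) + 1) ^ (1 + 2 * β) = κ i := by rw [hκ_def]
    calc σ ^ 2 * ((i : ℝ) + 1) ^ (1 + 2 * β) = κ i := h2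
      _ ≤ 1 * (n + κ i) := by have := hκpos i; linarith
  set T : ℝ := ∑' i, t2 i with hT_def
  have hT_pos : 0 < T :=
    lt_of_lt_of_le (ht2pos 0) (Summable.le_tsum hsum 0 (fun i _ => (ht2pos i).le))
  -- lower bound on T
  have hκmono : ∀ i : ℕ, i < K1 → κ i ≤ n := by
    intro i hi
    have h1 : ((i : ℝ) + 1) ≤ (K1 : ℝ) := by exact_mod_cast Nat.succ_le_of_lt hi
    have h2 : ((i : ℝ) + 1) ^ (1 + 2 * β) ≤ (K1 : ℝ) ^ (1 + 2 * β) :=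
      Real.rpow_le_rpow (by positivity) h1 hexp_pos.le
    have h3 : κ i = σ ^ 2 * ((i : ℝ) + 1) ^ (1 + 2 * β) := by rw [hκ_def]
    calc κ i = σ ^ 2 * ((i : ℝ) + 1) ^ (1 + 2 * β) := h3
      _ ≤ σ ^ 2 * (K1 : ℝ) ^ (1 + 2 * β) := by nlinarith
      _ ≤ n := hnK1
  have hTlow : (K1 : ℝ) * (σ ^ 2 / (2 * n)) ≤ T := by
    have h1 : ∀ i ∈ Finset.range K1, σ ^ 2 / (2 * n) ≤ t2 i := by
      intro i hi
      rw [ht2_eq]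
      apply div_le_div_of_nonneg_left (by positivity) (hden i)
      have := hκmono i (Finset.mem_range.mp hi)
      linarith
    calc (K1 : ℝ) * (σ ^ 2 / (2 * n))
        = ∑ _i ∈ Finset.range K1, σ ^ 2 / (2 * n) := by
          rw [Finset.sum_const, Finset.card_range, nsmul_eq_mul]
      _ ≤ ∑ i ∈ Finset.range K1, t2 i := Finset.sum_le_sum h1
      _ ≤ T := Summable.sum_le_tsum _ (fun i _ => (ht2pos i).le) hsum
  have hnT : (K1 : ℝ) * σ ^ 2 / 2 ≤ n * T := by
    have h := mul_le_mul_of_nonneg_left hTlow hn0.le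
    have hid : n * ((K1 : ℝ) * (σ ^ 2 / (2 * n))) = (K1 : ℝ) * σ ^ 2 / 2 := by
      field_simp
    rw [hid] at h
    exact h
  have ht2top : ∀ i, t2 i ≤ σ ^ 2 / n := by
    intro i
    rw [ht2_eq]
    apply div_le_div_of_nonneg_left (by positivity) hn0
    have := hκpos i
    linarith
  -- basic facts about W
  have hWaem : ∀ i, AEMeasurable (W i) P := fun i => aemeas_of_map_stdG (hWmap i)
  have hW2mean : ∀ i, ∫ ω, (W i ω) ^ 2 ∂P = v := fun i =>
    (integral_pow_of_map_stdG (hWmap i) 2)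
  have hW2L2 : ∀ i, MemLp (fun ω => (W i ω) ^ 2) 2 P := fun i =>
    memLp_pow_of_map_stdG (hWmap i) 2
  have hW2var : ∀ i, variance (fun ω => (W i ω) ^ 2) P = Vr := by
    intro i
    rw [variance_eq_sub (hW2L2 i)]
    simp only [Pi.pow_apply]
    have h1 : ∫ ω, ((W i ω) ^ 2) ^ 2 ∂P = ∫ ω, (W i ω) ^ 4 ∂P := by
      refine integral_congr_ae (Filter.Eventually.of_forall fun ω => ?_)
      ring
    rw [h1, integral_pow_of_map_stdG (hWmap i) 4, hW2mean i]
  -- choose K with partial sum ≥ (3/4) T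
  obtain ⟨K, hK⟩ : ∃ K : ℕ, 3 / 4 * T ≤ ∑ i ∈ Finset.range K, t2 i := by
    have htend := hsum.hasSum.tendsto_sum_nat
    have hlt : 3 / 4 * T < T := by linarith
    exact (htend.eventually (eventually_ge_nhds hlt)).exists
  set TK : ℝ := ∑ i ∈ Finset.range K, t2 i with hTK_def
  have hTK_le : TK ≤ T := Summable.sum_le_tsum _ (fun i _ => (ht2pos i).le) hsum
  have hTK_pos : 0 < TK := by nlinarith
  -- the truncated credible sum
  set YK : Ω → ℝ := fun ω => ∑ i ∈ Finset.range K, t2 i * (W i ω) ^ 2 with hYK_def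
  have hYKL2 : ∀ i ∈ Finset.range K, MemLp (fun ω => t2 i * (W i ω) ^ 2) 2 P := by
    intro i _
    exact (hW2L2 i).const_mul _
  have hYK_L2 : MemLp YK 2 P := by
    rw [hYK_def]
    exact memLp_finset_sum _ hYKL2
  have hYK_mean : ∫ ω, YK ω ∂P = v * TK := by
    rw [hYK_def]
    rw [integral_finset_sum _ (fun i hi => ((hYKL2 i hi).integrable one_le_two))]
    rw [hTK_def, Finset.mul_sum]
    refine Finset.sum_congr rfl fun i _ => ?_
    rw [integral_const_mul, hW2mean i]
    ring
  have hYK_var : variance YK P = Vr * ∑ i ∈ Finset.range K, (t2 i) ^ 2 := by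
    have hfun : YK = ∑ i ∈ Finset.range K, (fun ω => t2 i * (W i ω) ^ 2) := by
      rw [hYK_def]
      funext ω
      rw [Finset.sum_apply]
    rw [hfun]
    rw [IndepFun.variance_sum hYKL2 ?_]
    · rw [Finset.mul_sum]
      refine Finset.sum_congr rfl fun i _ => ?_
      rw [variance_const_mul, hW2var i]
      ring
    · intro i _ j _ hij
      have hbase : IndepFun (W i) (W j) P := by
        have := hInd.indepFun (show (Sum.inr i : (ℕ × ℕ) ⊕ ℕ) ≠ Sum.inr j by
          simp [hij])
        exact this
      have := hbase.comp (φ := fun x : ℝ => t2 i * x ^ 2) (ψ := fun x : ℝ => t2 j * x ^ 2)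
        ((measurable_id.pow_const 2).const_mul _) ((measurable_id.pow_const 2).const_mul _)
      exact this
  have hYK_var_le : variance YK P ≤ Vr * (σ ^ 2 / n) * T := by
    rw [hYK_var]
    have h1 : ∑ i ∈ Finset.range K, (t2 i) ^ 2 ≤ (σ ^ 2 / n) * TK := by
      rw [hTK_def, Finset.mul_sum]
      refine Finset.sum_le_sum fun i _ => ?_
      have h2 := ht2top i
      have h3 := (ht2pos i).le
      nlinarith
    have h4 : (0:ℝ) ≤ σ ^ 2 / n := by positivity
    calc Vr * ∑ i ∈ Finset.range K, (t2 i) ^ 2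
        ≤ Vr * (σ ^ 2 / n * TK) := mul_le_mul_of_nonneg_left h1 hVr
      _ ≤ Vr * (σ ^ 2 / n * T) :=
          mul_le_mul_of_nonneg_left (mul_le_mul_of_nonneg_left hTK_le h4) hVr
      _ = Vr * (σ ^ 2 / n) * T := by ring
  -- Chebyshev bound
  have hcheb : P {ω | YK ω ≤ v * TK / 2} ≤ ENNReal.ofReal ((1 - γ) / 2) := by
    have hc_pos : 0 < v * TK / 2 := by positivity
    have hsub : {ω | YK ω ≤ v * TK / 2} ⊆ {ω | v * TK / 2 ≤ |YK ω - ∫ ω', YK ω' ∂P|} := by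
      intro ω hω
      simp only [Set.mem_setOf_eq] at hω ⊢
      rw [hYK_mean, le_abs]
      right
      linarith
    refine le_trans (measure_mono hsub)
      (le_trans (meas_ge_le_variance_div_sq hYK_L2 hc_pos) ?_)
    apply ENNReal.ofReal_le_ofReal
    rw [div_le_iff₀ (by positivity)]
    have hstep := numeric_cheb hVr hv hσ hn0 hγ1 hT_pos hK hTK_le hnT
      (by
        have hγ' : (0:ℝ) < 1 - γ := by linarith
        have h9 : (0:ℝ) < 9 * v ^ 2 * (1 - γ) :=
          mul_pos (by positivity) hγ'
        rw [div_le_iff₀ h9] at hK1ge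
        linarith)
    nlinarith [hYK_var_le, hstep]
  -- a.s. summability of the credible series
  have hWsq_int : ∀ i, Integrable (fun ω => (W i ω) ^ 2) P :=
    fun i => (hW2L2 i).integrable one_le_two
  have hgaem : ∀ i : ℕ, AEMeasurable (fun ω => ENNReal.ofReal (t2 i * (W i ω) ^ 2)) P :=
    fun i => (((hWaem i).pow_const 2).const_mul _).ennreal_ofReal
  have hglint : ∀ i, ∫⁻ ω, ENNReal.ofReal (t2 i * (W i ω) ^ 2) ∂P
      = ENNReal.ofReal (t2 i * v) := by
    intro i
    rw [← ofReal_integral_eq_lintegral_ofReal ((hWsq_int i).const_mul _)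
      (Filter.Eventually.of_forall fun ω => by
        have := (ht2pos i).le
        positivity)]
    rw [integral_const_mul, hW2mean i]
  have hae_sum : ∀ᵐ ω ∂P, Summable (fun i => t2 i * (W i ω) ^ 2) := by
    have htot : ∫⁻ ω, ∑' i, ENNReal.ofReal (t2 i * (W i ω) ^ 2) ∂P
        = ENNReal.ofReal (v * T) := by
      rw [lintegral_tsum hgaem]
      have h1 : ∀ i, ∫⁻ ω, ENNReal.ofReal (t2 i * (W i ω) ^ 2) ∂P
          = ENNReal.ofReal (t2 i * v) := hglint
      calc ∑' i, ∫⁻ ω, ENNReal.ofReal (t2 i * (W i ω) ^ 2) ∂P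
          = ∑' i, ENNReal.ofReal (t2 i * v) := by
            exact tsum_congr fun i => h1 i
        _ = ENNReal.ofReal (∑' i, t2 i * v) := by
            rw [ENNReal.ofReal_tsum_of_nonneg
              (fun i => mul_nonneg (ht2pos i).le hv.le) (hsum.mul_right v)]
        _ = ENNReal.ofReal (v * T) := by
            rw [tsum_mul_right, hT_def, mul_comm]
    have h1 : ∀ᵐ ω ∂P, ∑' i, ENNReal.ofReal (t2 i * (W i ω) ^ 2) < ⊤ := by
      refine ae_lt_top' (AEMeasurable.ennreal_tsum hgaem) ?_
      rw [htot]
      exact ENNReal.ofReal_ne_top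
    filter_upwards [h1] with ω hω
    have h2 : Summable (fun i => (ENNReal.ofReal (t2 i * (W i ω) ^ 2)).toReal) :=
      ENNReal.summable_toReal hω.ne
    refine h2.congr fun i => ?_
    rw [ENNReal.toReal_ofReal (by
      have := (ht2pos i).le
      positivity)]
  -- lower bound on the credible radius
  have hrq : v * TK / 2 ≤ rγ ^ 2 := by
    by_contra hcon
    push_neg at hcon
    have hsub2 : {ω : Ω | ∑' i : ℕ, postVarIV σ β n i * (W i ω) ^ 2 ≤ rγ ^ 2} ⊆
        {ω | YK ω ≤ v * TK / 2} ∪ {ω | ¬ Summable (fun i => t2 i * (W i ω) ^ 2)} := by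
      intro ω hω
      simp only [Set.mem_setOf_eq, Set.mem_union] at hω ⊢
      by_cases hs : Summable (fun i => t2 i * (W i ω) ^ 2)
      · left
        have hYK_le : YK ω ≤ ∑' i, t2 i * (W i ω) ^ 2 :=
          Summable.sum_le_tsum _ (fun i _ => by
            have := (ht2pos i).le
            positivity) hs
        have hω' : (∑' i, t2 i * (W i ω) ^ 2) ≤ rγ ^ 2 := hω
        calc YK ω ≤ rγ ^ 2 := le_trans hYK_le hω'
          _ ≤ v * TK / 2 := hcon.le
      · right
        exact hs
    have hnull : P {ω | ¬ Summable (fun i => t2 i * (W i ω) ^ 2)} = 0 := by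
      rw [ae_iff] at hae_sum
      exact hae_sum
    have hP1 : ENNReal.ofReal (1 - γ) ≤ ENNReal.ofReal ((1 - γ) / 2) := by
      rw [← hcred]
      calc P {ω : Ω | ∑' i : ℕ, postVarIV σ β n i * (W i ω) ^ 2 ≤ rγ ^ 2}
          ≤ P ({ω | YK ω ≤ v * TK / 2} ∪
              {ω | ¬ Summable (fun i => t2 i * (W i ω) ^ 2)}) := measure_mono hsub2
        _ ≤ P {ω | YK ω ≤ v * TK / 2} +
              P {ω | ¬ Summable (fun i => t2 i * (W i ω) ^ 2)} := measure_union_le _ _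
        _ = P {ω | YK ω ≤ v * TK / 2} := by rw [hnull, add_zero]
        _ ≤ ENNReal.ofReal ((1 - γ) / 2) := hcheb
    have hle := (ENNReal.ofReal_le_ofReal_iff (by linarith)).mp hP1
    linarith
  -- the MSE part
  have hZaem : ∀ j i, AEMeasurable (Z j i) P := fun j i => aemeas_of_map_stdG (hZmap j i)
  set s0 : ℝ := Real.sqrt (σ ^ 2 * m / n) with hs0_def
  have hs0sq : s0 ^ 2 = σ ^ 2 * m / n := Real.sq_sqrt (by positivity)
  have hm0 : (0:ℝ) < (m : ℝ) := by exact_mod_cast Nat.lt_of_lt_of_le Nat.zero_lt_one hm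
  set D : ℕ → Ω → ℝ := fun i ω => postMeanIV σ β n m θ0 Z ω i - θ0 i with hD_def
  set b : ℕ → ℝ := fun i => -(κ i * θ0 i) / (n + κ i) with hb_def
  set c : ℕ → ℝ := fun i => n * s0 / (m * (n + κ i)) with hc_def
  have hDeq : ∀ i ω, D i ω = b i + c i * (∑ j ∈ Finset.range m, Z j i ω) := by
    intro i ω
    have hden' := (hden i).ne'
    have hm' := hm0.ne'
    have hD1 : D i ω = (1 / (m : ℝ)) * ∑ j ∈ Finset.range m,
        n * (θ0 i + s0 * Z j i ω) / (n + κ i) - θ0 i := by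
      rw [hD_def]
      simp only [postMeanIV, dataY, hs0_def, hκ_def]
    rw [hD1]
    have hterm : ∀ j : ℕ, n * (θ0 i + s0 * Z j i ω) / (n + κ i)
        = n * θ0 i / (n + κ i) + n * s0 / (n + κ i) * Z j i ω := by
      intro j
      field_simp
    rw [Finset.sum_congr rfl (fun j _ => hterm j), Finset.sum_add_distrib,
      Finset.sum_const, Finset.card_range, nsmul_eq_mul, ← Finset.mul_sum]
    have hbi : b i = -(κ i * θ0 i) / (n + κ i) := rfl
    have hci : c i = n * s0 / ((m : ℝ) * (n + κ i)) := rfl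
    rw [hbi, hci]
    field_simp
    ring
  have hSL2 : ∀ i, MemLp (fun ω => ∑ j ∈ Finset.range m, Z j i ω) 2 P := by
    intro i
    exact memLp_finset_sum _ (fun j _ => memLp_of_map_stdG (hZmap j i))
  have hSmean : ∀ i, ∫ ω, (∑ j ∈ Finset.range m, Z j i ω) ∂P = 0 := by
    intro i
    rw [integral_finset_sum _
      (fun j _ => (memLp_of_map_stdG (hZmap j i)).integrable one_le_two)]
    exact Finset.sum_eq_zero fun j _ => integral_of_map_stdG (hZmap j i)
  have hSvar : ∀ i, variance (fun ω => ∑ j ∈ Finset.range m, Z j i ω) P = (m : ℝ) * v := by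
    intro i
    have hfun : (fun ω => ∑ j ∈ Finset.range m, Z j i ω)
        = ∑ j ∈ Finset.range m, (fun ω => Z j i ω) := by
      funext ω
      rw [Finset.sum_apply]
    rw [hfun]
    rw [IndepFun.variance_sum (fun j _ => memLp_of_map_stdG (hZmap j i)) ?_]
    · have : ∀ j ∈ Finset.range m, variance (fun ω => Z j i ω) P = v := by
        intro j _
        rw [variance_of_map_stdG (hZmap j i), hv_def]
      rw [Finset.sum_congr rfl this, Finset.sum_const, Finset.card_range, nsmul_eq_mul]
    · intro j _ j' _ hjj'
      have := hInd.indepFun (show (Sum.inl (j, i) : (ℕ × ℕ) ⊕ ℕ) ≠ Sum.inl (j', i) by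
        simp [Prod.ext_iff, hjj'])
      exact this
  have hSsq_mean : ∀ i, ∫ ω, (∑ j ∈ Finset.range m, Z j i ω) ^ 2 ∂P = (m : ℝ) * v := by
    intro i
    have h := variance_eq_sub (hSL2 i)
    simp only [Pi.pow_apply] at h
    rw [hSmean i, hSvar i] at h
    simpa using h.symm
  have hDfun : ∀ i, D i = fun ω => b i + c i * (∑ j ∈ Finset.range m, Z j i ω) :=
    fun i => funext fun ω => hDeq i ω
  have hDL2 : ∀ i, MemLp (D i) 2 P := by
    intro i
    rw [hDfun i]
    exact (memLp_const (b i)).add ((hSL2 i).const_mul _)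
  have hDint_sq : ∀ i, Integrable (fun ω => (D i ω) ^ 2) P := fun i => (hDL2 i).integrable_sq
  have hEi : ∀ i, ∫ ω, (D i ω) ^ 2 ∂P = (b i) ^ 2 + (c i) ^ 2 * ((m : ℝ) * v) := by
    intro i
    have hrw : (fun ω => (D i ω) ^ 2) = fun ω =>
        (b i) ^ 2 + ((2 * (b i) * (c i)) * (∑ j ∈ Finset.range m, Z j i ω)
          + (c i) ^ 2 * (∑ j ∈ Finset.range m, Z j i ω) ^ 2) := by
      funext ω
      rw [hDeq i ω]
      ring
    have hIntB : Integrable (fun ω =>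
        (2 * (b i) * (c i)) * (∑ j ∈ Finset.range m, Z j i ω)) P :=
      ((hSL2 i).integrable one_le_two).const_mul _
    have hIntC : Integrable (fun ω =>
        (c i) ^ 2 * (∑ j ∈ Finset.range m, Z j i ω) ^ 2) P :=
      ((hSL2 i).integrable_sq).const_mul _
    have hIntBC : Integrable (fun ω =>
        (2 * (b i) * (c i)) * (∑ j ∈ Finset.range m, Z j i ω)
          + (c i) ^ 2 * (∑ j ∈ Finset.range m, Z j i ω) ^ 2) P := hIntB.add hIntC
    calc ∫ ω, (D i ω) ^ 2 ∂P
        = ∫ ω, ((b i) ^ 2 + ((2 * (b i) * (c i)) * (∑ j ∈ Finset.range m, Z j i ω)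
            + (c i) ^ 2 * (∑ j ∈ Finset.range m, Z j i ω) ^ 2)) ∂P := by rw [hrw]
      _ = (∫ _ω, (b i) ^ 2 ∂P) + ∫ ω, ((2 * (b i) * (c i)) * (∑ j ∈ Finset.range m, Z j i ω)
            + (c i) ^ 2 * (∑ j ∈ Finset.range m, Z j i ω) ^ 2) ∂P := by
          rw [integral_add (integrable_const _) hIntBC]
      _ = (b i) ^ 2 + ((2 * (b i) * (c i)) * (∫ ω, (∑ j ∈ Finset.range m, Z j i ω) ∂P)
            + (c i) ^ 2 * ∫ ω, (∑ j ∈ Finset.range m, Z j i ω) ^ 2 ∂P) := by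
          rw [integral_add hIntB hIntC, integral_const, integral_const_mul, integral_const_mul]
          simp [measure_univ]
      _ = (b i) ^ 2 + (c i) ^ 2 * ((m : ℝ) * v) := by
          rw [hSmean i, hSsq_mean i]
          ring
  have hEi_le : ∀ i, (b i) ^ 2 + (c i) ^ 2 * ((m : ℝ) * v) ≤ (M ^ 2 + v) * t2 i := by
    intro i
    have hb2 : (b i) ^ 2 = (κ i * θ0 i / (n + κ i)) ^ 2 := by
      have hbi : b i = -(κ i * θ0 i) / (n + κ i) := rfl
      rw [hbi, neg_div, neg_sq]
    have hc2 : (c i) ^ 2 * ((m : ℝ) * v) = n * σ ^ 2 / (n + κ i) ^ 2 * v := by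
      have h1 : (c i) ^ 2 = n ^ 2 * s0 ^ 2 / ((m : ℝ) ^ 2 * (n + κ i) ^ 2) := by
        have hci : c i = n * s0 / ((m : ℝ) * (n + κ i)) := rfl
        rw [hci, div_pow]
        ring_nf
      rw [h1, hs0sq]
      field_simp
    have hθi : κ i * θ0 i ^ 2 ≤ M ^ 2 * σ ^ 2 := by
      have h1 := hθ0.2 i
      have h2 : κ i = σ ^ 2 * ((i : ℝ) + 1) ^ (1 + 2 * β) := by rw [hκ_def]
      have h3 : (0:ℝ) ≤ σ ^ 2 := sq_nonneg σ
      calc κ i * θ0 i ^ 2 = σ ^ 2 * (((i : ℝ) + 1) ^ (1 + 2 * β) * θ0 i ^ 2) := by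
            rw [h2]; ring
        _ ≤ σ ^ 2 * M ^ 2 := mul_le_mul_of_nonneg_left h1 h3
        _ = M ^ 2 * σ ^ 2 := by ring
    rw [hb2, hc2, ht2_eq i]
    exact numeric_coord hσ hn0 (hκpos i) hv hθi
  -- Markov inequality
  have hDaem : ∀ i, AEMeasurable (D i) P := by
    intro i
    rw [hDfun i]
    exact aemeasurable_const.add ((Finset.aemeasurable_fun_sum _
      (fun j _ => hZaem j i)).const_mul _)
  have hFaem : AEMeasurable (fun ω => ∑' i, ENNReal.ofReal ((D i ω) ^ 2)) P :=
    AEMeasurable.ennreal_tsum (fun i => ((hDaem i).pow_const 2).ennreal_ofReal)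
  have hFlint : ∫⁻ ω, (∑' i, ENNReal.ofReal ((D i ω) ^ 2)) ∂P
      ≤ ENNReal.ofReal ((M ^ 2 + v) * T) := by
    rw [lintegral_tsum (fun i => ((hDaem i).pow_const 2).ennreal_ofReal)]
    have h1 : ∀ i, ∫⁻ ω, ENNReal.ofReal ((D i ω) ^ 2) ∂P
        = ENNReal.ofReal ((b i) ^ 2 + (c i) ^ 2 * ((m : ℝ) * v)) := by
      intro i
      rw [← ofReal_integral_eq_lintegral_ofReal (hDint_sq i)
        (Filter.Eventually.of_forall fun ω => sq_nonneg _), hEi i]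
    calc ∑' i, ∫⁻ ω, ENNReal.ofReal ((D i ω) ^ 2) ∂P
        = ∑' i, ENNReal.ofReal ((b i) ^ 2 + (c i) ^ 2 * ((m : ℝ) * v)) :=
          tsum_congr h1
      _ ≤ ∑' i, ENNReal.ofReal ((M ^ 2 + v) * t2 i) :=
          ENNReal.tsum_le_tsum fun i => ENNReal.ofReal_le_ofReal (hEi_le i)
      _ = ENNReal.ofReal ((M ^ 2 + v) * T) := by
          rw [← ENNReal.ofReal_tsum_of_nonneg
            (fun i => mul_nonneg (by positivity) (ht2pos i).le) (hsum.mul_left _)]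
          rw [hT_def, tsum_mul_left]
  have hsubM : {ω : Ω | Real.sqrt (∑' i : ℕ,
        (postMeanIV σ β n m θ0 Z ω i - θ0 i) ^ 2) > L * rγ} ⊆
      {ω : Ω | ENNReal.ofReal ((L * rγ) ^ 2) ≤ ∑' i, ENNReal.ofReal ((D i ω) ^ 2)} := by
    intro ω hω
    simp only [Set.mem_setOf_eq] at hω ⊢
    have hωD : L * rγ < Real.sqrt (∑' i, (D i ω) ^ 2) := by
      have : (fun i => (postMeanIV σ β n m θ0 Z ω i - θ0 i) ^ 2)
          = fun i => (D i ω) ^ 2 := by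
        funext i
        rw [hD_def]
      rw [← this]
      exact hω
    by_cases hs : Summable (fun i => (D i ω) ^ 2)
    · have h2 : (L * rγ) ^ 2 < ∑' i, (D i ω) ^ 2 :=
        (Real.lt_sqrt (by positivity)).mp hωD
      calc ENNReal.ofReal ((L * rγ) ^ 2) ≤ ENNReal.ofReal (∑' i, (D i ω) ^ 2) :=
            ENNReal.ofReal_le_ofReal h2.le
        _ = ∑' i, ENNReal.ofReal ((D i ω) ^ 2) :=
            ENNReal.ofReal_tsum_of_nonneg (fun i => sq_nonneg _) hs
    · exfalso
      rw [tsum_eq_zero_of_not_summable hs] at hωD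
      simp only [Real.sqrt_zero] at hωD
      nlinarith
  have hmarkov := meas_ge_le_lintegral_div hFaem
    (show ENNReal.ofReal ((L * rγ) ^ 2) ≠ 0 from
      (ENNReal.ofReal_pos.mpr (by positivity)).ne')
    (show ENNReal.ofReal ((L * rγ) ^ 2) ≠ ⊤ from ENNReal.ofReal_ne_top)
  calc P {ω : Ω | Real.sqrt (∑' i : ℕ,
        (postMeanIV σ β n m θ0 Z ω i - θ0 i) ^ 2) > L * rγ}
      ≤ P {ω : Ω | ENNReal.ofReal ((L * rγ) ^ 2)
          ≤ ∑' i, ENNReal.ofReal ((D i ω) ^ 2)} := measure_mono hsubM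
    _ ≤ (∫⁻ ω, (∑' i, ENNReal.ofReal ((D i ω) ^ 2)) ∂P) /
          ENNReal.ofReal ((L * rγ) ^ 2) := hmarkov
    _ ≤ ENNReal.ofReal ((M ^ 2 + v) * T) / ENNReal.ofReal ((L * rγ) ^ 2) :=
          ENNReal.div_le_div_right hFlint _
    _ ≤ ENNReal.ofReal γ := by
          refine ENNReal.div_le_of_le_mul ?_
          rw [← ENNReal.ofReal_mul hγ0.le]
          exact ENNReal.ofReal_le_ofReal
            (numeric_final hM hv hγ0 hT_pos hK hrq hLsq hrγ hLpos)
end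

section
/- (Variance-term asymptotics for the local-smoothing kernel, used in Theorem 1.) For every σ, β > 0 there exist constants 0 < c ≤ C and K > 0 such that for all integers m ≥ 1 and all reals n > 0 with n/m ≥ K, c·m^{-1/(1+2β)}·n^{-2β/(1+2β)} ≤ Σ_{i=1}^∞ σ²·n/(n + σ²·m·i^{1+2β})² ≤ C·m^{-1/(1+2β)}·n^{-2β/(1+2β)}. -/
open Real Finset

lemma pointwise_rpow_telescope {s : ℝ} (hs : 1 < s) {x : ℝ} (hx : 1 ≤ x) :
    x ^ (-s) ≤ 2 ^ s / (s - 1) * (x ^ (1 - s) - (x + 1) ^ (1 - s)) := by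
  have hx0 : 0 < x := lt_of_lt_of_le one_pos hx
  obtain ⟨ξ, hξ, hslope⟩ := exists_hasDerivAt_eq_slope (fun t => t ^ (1 - s))
      (fun t => (1 - s) * t ^ (-s)) (by linarith : x < x + 1)
      (by
        apply ContinuousOn.rpow_const continuousOn_id
        intro t ht
        exact Or.inl (by simp at ht ⊢; nlinarith [ht.1]))
      (by
        intro t ht
        have ht0 : (t : ℝ) ≠ 0 := by simp at ht; nlinarith [ht.1]
        have := Real.hasDerivAt_rpow_const (p := 1 - s) (Or.inl ht0)
        convert this using 1
        rw [show (1:ℝ) - s - 1 = -s by ring])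
  have hξx : x < ξ ∧ ξ < x + 1 := ⟨hξ.1, hξ.2⟩
  have hξ0 : 0 < ξ := lt_trans hx0 hξx.1
  -- slope gives: (1-s) ξ^{-s} = (x+1)^{1-s} - x^{1-s}
  have key : x ^ (1 - s) - (x + 1) ^ (1 - s) = (s - 1) * ξ ^ (-s) := by
    have : (1 - s) * ξ ^ (-s) = ((x + 1) ^ (1 - s) - x ^ (1 - s)) / (x + 1 - x) := hslope
    rw [show x + 1 - x = 1 by ring, div_one] at this
    nlinarith [this]
  have h1 : (x + 1 : ℝ) ^ (-s) ≤ ξ ^ (-s) :=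
    rpow_le_rpow_of_nonpos hξ0 (le_of_lt hξx.2) (by linarith)
  have h2 : (2 * x) ^ (-s) ≤ (x + 1) ^ (-s) :=
    rpow_le_rpow_of_nonpos (by linarith) (by linarith) (by linarith)
  have h3 : (2 * x) ^ (-s) = 2 ^ (-s) * x ^ (-s) :=
    Real.mul_rpow (by norm_num) (le_of_lt hx0)
  have h2s : (0:ℝ) < 2 ^ s := Real.rpow_pos_of_pos two_pos s
  have h2s' : (2:ℝ) ^ s * 2 ^ (-s) = 1 := by
    rw [← Real.rpow_add two_pos]; simp
  rw [key]
  rw [div_mul_eq_mul_div, le_div_iff₀ (by linarith)]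
  have hfin : x ^ (-s) * (s - 1) = (s - 1) * (2 ^ s * (2 ^ (-s) * x ^ (-s))) := by
    have : (2:ℝ) ^ s * (2 ^ (-s) * x ^ (-s)) = (2 ^ s * 2 ^ (-s)) * x ^ (-s) := by ring
    rw [this, h2s']; ring
  rw [hfin]
  rw [← h3]
  have hle := le_trans h2 h1
  have hc : (0:ℝ) ≤ (s - 1) * 2 ^ s := mul_nonneg (by linarith) (le_of_lt h2s)
  have := mul_le_mul_of_nonneg_left hle hc
  nlinarith [this]

lemma tail_rpow_tsum_le {s : ℝ} (hs : 1 < s) {M : ℕ} (hM : 1 ≤ M) :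
    ∑' j : ℕ, ((j + M : ℕ) : ℝ) ^ (-s) ≤ 2 ^ s / (s - 1) * (M : ℝ) ^ (1 - s) := by
  have hsum : Summable (fun j : ℕ => ((j + M : ℕ) : ℝ) ^ (-s)) := by
    have h : Summable (fun n : ℕ => (n : ℝ) ^ (-s)) :=
      Real.summable_nat_rpow.mpr (by linarith)
    exact (summable_nat_add_iff M).mpr h
  refine Summable.tsum_le_of_sum_le hsum ?_
  intro u
  obtain ⟨k, hk⟩ := u.exists_nat_subset_range
  set F : ℕ → ℝ := fun j => ((j + M : ℕ) : ℝ) ^ (1 - s) with hF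
  have hA : (0:ℝ) ≤ 2 ^ s / (s - 1) := by
    apply div_nonneg (le_of_lt (Real.rpow_pos_of_pos two_pos s)); linarith
  calc ∑ j ∈ u, ((j + M : ℕ) : ℝ) ^ (-s)
      ≤ ∑ j ∈ Finset.range k, ((j + M : ℕ) : ℝ) ^ (-s) := by
        refine Finset.sum_le_sum_of_subset_of_nonneg hk ?_
        intro i _ _
        exact Real.rpow_nonneg (Nat.cast_nonneg _) _
    _ ≤ ∑ j ∈ Finset.range k, 2 ^ s / (s - 1) * (F j - F (j + 1)) := by
        refine Finset.sum_le_sum ?_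
        intro j _
        have hx : (1:ℝ) ≤ ((j + M : ℕ) : ℝ) := by
          exact_mod_cast Nat.one_le_iff_ne_zero.mpr (by omega)
        have := pointwise_rpow_telescope hs hx
        have hcast : ((j + M : ℕ) : ℝ) + 1 = ((j + 1 + M : ℕ) : ℝ) := by push_cast; ring
        rw [hcast] at this
        exact this
    _ = 2 ^ s / (s - 1) * (F 0 - F k) := by
        rw [← Finset.mul_sum, Finset.sum_range_sub']
    _ ≤ 2 ^ s / (s - 1) * (M : ℝ) ^ (1 - s) := by
        have hFk : 0 ≤ F k := Real.rpow_nonneg (Nat.cast_nonneg _) _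
        have hF0 : F 0 = (M : ℝ) ^ (1 - s) := by simp [hF]
        nlinarith [hA, hFk, hF0]


set_option maxHeartbeats 1000000 in
/-- Variance-term asymptotics for the local-smoothing kernel (used in Theorem 1): for every
`σ, β > 0` there exist `0 < c ≤ C` and `K > 0` such that for all integers `m ≥ 1` and all
reals `n > 0` with `n/m ≥ K`,
`c m^{-1/(1+2β)} n^{-2β/(1+2β)} ≤ Σᵢ σ² n/(n + σ² m i^{1+2β})² ≤ C m^{-1/(1+2β)} n^{-2β/(1+2β)}`,
the series running over the positive integers (coordinate `i : ℕ` is the integer `i + 1`). -/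
theorem variance_term_asymptotics_naive
    (σ β : ℝ) (hσ : 0 < σ) (hβ : 0 < β) :
    ∃ c C K : ℝ, 0 < c ∧ c ≤ C ∧ 0 < K ∧
      ∀ m : ℕ, 1 ≤ m → ∀ n : ℝ, 0 < n → K ≤ n / (m : ℝ) →
        c * (m : ℝ) ^ (-(1 / (1 + 2 * β))) * n ^ (-(2 * β / (1 + 2 * β)))
            ≤ (∑' i : ℕ, σ ^ 2 * n / (n + σ ^ 2 * m * ((i : ℝ) + 1) ^ (1 + 2 * β)) ^ 2) ∧
          (∑' i : ℕ, σ ^ 2 * n / (n + σ ^ 2 * m * ((i : ℝ) + 1) ^ (1 + 2 * β)) ^ 2)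
            ≤ C * (m : ℝ) ^ (-(1 / (1 + 2 * β))) * n ^ (-(2 * β / (1 + 2 * β))) := by
  have hσ2 : (0:ℝ) < σ ^ 2 := by positivity
  set p : ℝ := 1 + 2 * β with hp
  clear_value p
  have hp1 : 1 < p := by simp only [hp]; linarith
  have hp0 : 0 < p := by linarith
  have h2p1 : 1 < 2 * p := by linarith
  set A : ℝ := 2 ^ (2 * p) / (2 * p - 1) with hA
  clear_value A
  have hApos : 0 < A := by
    rw [hA]; apply div_pos (Real.rpow_pos_of_pos two_pos _); linarith
  set B : ℝ := σ ^ 2 * (σ ^ 2 : ℝ) ^ (-(1 / p)) with hB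
  clear_value B
  have hBpos : 0 < B := by
    rw [hB]; exact mul_pos hσ2 (Real.rpow_pos_of_pos hσ2 _)
  refine ⟨B / 8, (2 + A) * B, σ ^ 2, by positivity, ?_, hσ2, ?_⟩
  · nlinarith [hBpos, hApos]
  intro m hm n hn hK
  have hm0 : (0:ℝ) < (m:ℝ) := by exact_mod_cast hm
  have ha : (0:ℝ) < σ ^ 2 * m := by positivity
  set a : ℝ := σ ^ 2 * (m:ℝ) with haa
  clear_value a
  set R : ℝ := n / a with hRdef
  clear_value R
  have hR0 : 0 < R := by rw [hRdef]; exact div_pos hn ha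
  have hR1 : 1 ≤ R := by
    have h1 : σ ^ 2 * (m:ℝ) ≤ n := (le_div_iff₀ hm0).mp hK
    rw [hRdef, le_div_iff₀ ha, haa]
    linarith
  set N' : ℝ := R ^ (1 / p) with hN'def
  clear_value N'
  have hN'0 : 0 < N' := by rw [hN'def]; exact Real.rpow_pos_of_pos hR0 _
  have hN'1 : 1 ≤ N' := by
    rw [hN'def]
    calc (1:ℝ) = 1 ^ (1/p) := (Real.one_rpow _).symm
      _ ≤ R ^ (1/p) := Real.rpow_le_rpow zero_le_one hR1 (by positivity)
  have hNp : N' ^ p = R := by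
    rw [hN'def, ← Real.rpow_mul (le_of_lt hR0), one_div_mul_cancel (ne_of_gt hp0),
      Real.rpow_one]
  -- key algebraic identity
  have hexp : (1:ℝ) / p = 1 + -(2 * β / p) := by
    field_simp
    linarith
  have hn1p : n ^ (1/p) = n * n ^ (-(2 * β / p)) := by
    rw [hexp, Real.rpow_add hn, Real.rpow_one]
  have hX : N' / n = (σ ^ 2 : ℝ) ^ (-(1 / p)) * (m : ℝ) ^ (-(1 / p)) * n ^ (-(2 * β / p)) := by
    have e1 : N' = n ^ (1/p) / ((σ ^ 2 : ℝ) ^ (1/p) * (m:ℝ) ^ (1/p)) := by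
      rw [hN'def, hRdef, haa, Real.div_rpow (le_of_lt hn) (by positivity),
        Real.mul_rpow (le_of_lt hσ2) (le_of_lt hm0)]
    have hs1 : (0:ℝ) < (σ ^ 2 : ℝ) ^ (1/p) := Real.rpow_pos_of_pos hσ2 _
    have hm1p : (0:ℝ) < (m:ℝ) ^ (1/p) := Real.rpow_pos_of_pos hm0 _
    rw [e1, hn1p, Real.rpow_neg (le_of_lt hσ2), Real.rpow_neg (le_of_lt hm0)]
    field_simp
  -- denominators
  have hden : ∀ i : ℕ, 0 < n + a * ((i : ℝ) + 1) ^ p := by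
    intro i
    have h1 : (0:ℝ) < ((i:ℝ) + 1) ^ p := Real.rpow_pos_of_pos (by positivity) _
    nlinarith [ha, h1]
  have hterm_pos : ∀ i : ℕ, 0 < σ ^ 2 * n / (n + a * ((i : ℝ) + 1) ^ p) ^ 2 := by
    intro i
    exact div_pos (by positivity) (pow_pos (hden i) 2)
  -- bound for tail / summability
  have hsq : ∀ i : ℕ, (((i:ℝ) + 1) ^ p) ^ 2 = ((i:ℝ) + 1) ^ (2 * p) := by
    intro i
    rw [← Real.rpow_natCast (((i:ℝ) + 1) ^ p) 2, ← Real.rpow_mul (by positivity)]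
    norm_num
    rw [mul_comm]
  have hbound : ∀ i : ℕ, σ ^ 2 * n / (n + a * ((i : ℝ) + 1) ^ p) ^ 2
      ≤ σ ^ 2 * n / a ^ 2 * ((i:ℝ) + 1) ^ (-(2 * p)) := by
    intro i
    have hip : (0:ℝ) < ((i:ℝ) + 1) ^ p := Real.rpow_pos_of_pos (by positivity) _
    have h1 : (a * ((i:ℝ) + 1) ^ p) ^ 2 ≤ (n + a * ((i : ℝ) + 1) ^ p) ^ 2 := by
      nlinarith [hip, ha, hn, mul_pos hn (mul_pos ha hip), sq_nonneg n]
    have h2 : σ ^ 2 * n / (n + a * ((i : ℝ) + 1) ^ p) ^ 2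
        ≤ σ ^ 2 * n / (a * ((i:ℝ) + 1) ^ p) ^ 2 := by
      apply div_le_div_of_nonneg_left (by positivity) (by positivity) h1
    refine h2.trans_eq ?_
    rw [mul_pow, hsq i, Real.rpow_neg (by positivity)]
    field_simp
  have hsum2p : Summable (fun i : ℕ => ((i:ℝ) + 1) ^ (-(2 * p))) := by
    have h : Summable (fun i : ℕ => ((i:ℕ):ℝ) ^ (-(2 * p))) :=
      Real.summable_nat_rpow.mpr (by linarith)
    have := (summable_nat_add_iff 1).mpr h
    simpa [Nat.cast_add] using this
  have hsum : Summable (fun i : ℕ => σ ^ 2 * n / (n + a * ((i : ℝ) + 1) ^ p) ^ 2) := by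
    apply Summable.of_nonneg_of_le (fun i => le_of_lt (hterm_pos i)) hbound
    exact (hsum2p.mul_left _)
  constructor
  · -- lower bound
    set N : ℕ := ⌊N'⌋₊ with hN
    clear_value N
    have hN1 : 1 ≤ N := by rw [hN]; exact Nat.le_floor (by exact_mod_cast hN'1)
    have hNle : (N:ℝ) ≤ N' := by rw [hN]; exact Nat.floor_le (le_of_lt hN'0)
    have hNge : N' ≤ 2 * N := by
      have h1 : N' < N + 1 := by rw [hN]; exact Nat.lt_floor_add_one N'
      have h2 : (1:ℝ) ≤ N := by exact_mod_cast hN1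
      linarith
    have hlow : ∀ i ∈ Finset.range N, σ ^ 2 / (4 * n)
        ≤ σ ^ 2 * n / (n + a * ((i : ℝ) + 1) ^ p) ^ 2 := by
      intro i hi
      have hi1 : (i:ℝ) + 1 ≤ N' := by
        have : (i:ℕ) + 1 ≤ N := Finset.mem_range.mp hi
        have : ((i:ℝ) + 1) ≤ (N:ℝ) := by exact_mod_cast this
        linarith
      have hip : ((i:ℝ) + 1) ^ p ≤ R := by
        calc ((i:ℝ) + 1) ^ p ≤ N' ^ p :=
              Real.rpow_le_rpow (by positivity) hi1 (le_of_lt hp0)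
          _ = R := hNp
      have haR : a * ((i:ℝ) + 1) ^ p ≤ n := by
        have := mul_le_mul_of_nonneg_left hip (le_of_lt ha)
        rwa [hRdef, mul_div_cancel₀ n (ne_of_gt ha)] at this
      have hD : n + a * ((i : ℝ) + 1) ^ p ≤ 2 * n := by
        linarith [haR]
      have hD2 : (n + a * ((i : ℝ) + 1) ^ p) ^ 2 ≤ 4 * n ^ 2 := by
        nlinarith [hden i, hD]
      calc σ ^ 2 / (4 * n) = σ ^ 2 * n / (4 * n ^ 2) := by
            field_simp
        _ ≤ σ ^ 2 * n / (n + a * ((i : ℝ) + 1) ^ p) ^ 2 := by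
            apply div_le_div_of_nonneg_left (by positivity) (pow_pos (hden i) 2) hD2
    have hsumlow : (N:ℝ) * (σ ^ 2 / (4 * n))
        ≤ ∑ i ∈ Finset.range N, σ ^ 2 * n / (n + a * ((i : ℝ) + 1) ^ p) ^ 2 := by
      have := Finset.card_nsmul_le_sum (Finset.range N)
        (fun i => σ ^ 2 * n / (n + a * ((i : ℝ) + 1) ^ p) ^ 2)
        (σ ^ 2 / (4 * n)) hlow
      simpa [nsmul_eq_mul] using this
    have hfin : ∑ i ∈ Finset.range N, σ ^ 2 * n / (n + a * ((i : ℝ) + 1) ^ p) ^ 2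
        ≤ ∑' i : ℕ, σ ^ 2 * n / (n + a * ((i : ℝ) + 1) ^ p) ^ 2 :=
      Summable.sum_le_tsum _ (fun i _ => le_of_lt (hterm_pos i)) hsum
    have hcexpr : B / 8 * (m : ℝ) ^ (-(1 / p)) * n ^ (-(2 * β / p))
        = σ ^ 2 / 8 * (N' / n) := by
      rw [hX, hB]; ring
    have hstep : σ ^ 2 / 8 * (N' / n) ≤ (N:ℝ) * (σ ^ 2 / (4 * n)) := by
      have heq : σ ^ 2 / 8 * (N' / n) = σ ^ 2 / (4 * n) * (N' / 2) := by
        field_simp; ring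
      have h2 : N' / 2 ≤ (N:ℝ) := by linarith
      rw [heq]
      calc σ ^ 2 / (4 * n) * (N' / 2) ≤ σ ^ 2 / (4 * n) * N :=
            mul_le_mul_of_nonneg_left h2 (by positivity)
        _ = (N:ℝ) * (σ ^ 2 / (4 * n)) := by ring
    calc B / 8 * (m : ℝ) ^ (-(1 / p)) * n ^ (-(2 * β / p))
        = σ ^ 2 / 8 * (N' / n) := hcexpr
      _ ≤ (N:ℝ) * (σ ^ 2 / (4 * n)) := hstep
      _ ≤ _ := le_trans hsumlow hfin
  · -- upper bound
    set M : ℕ := ⌈N'⌉₊ with hM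
    clear_value M
    have hM1 : 1 ≤ M := by rw [hM]; exact Nat.one_le_ceil_iff.mpr hN'0
    have hMge : N' ≤ (M:ℝ) := by rw [hM]; exact Nat.le_ceil N'
    have hMle : (M:ℝ) ≤ 2 * N' := by
      have h1 : (M:ℝ) < N' + 1 := by rw [hM]; exact Nat.ceil_lt_add_one (le_of_lt hN'0)
      linarith
    have hsplit := (Summable.sum_add_tsum_nat_add M hsum).symm
    -- part 1
    have hpart1 : ∑ i ∈ Finset.range M, σ ^ 2 * n / (n + a * ((i : ℝ) + 1) ^ p) ^ 2
        ≤ (M:ℝ) * (σ ^ 2 / n) := by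
      have hub : ∀ i ∈ Finset.range M,
          σ ^ 2 * n / (n + a * ((i : ℝ) + 1) ^ p) ^ 2 ≤ σ ^ 2 / n := by
        intro i _
        have hge : n ^ 2 ≤ (n + a * ((i : ℝ) + 1) ^ p) ^ 2 := by
          have h1 : (0:ℝ) < ((i:ℝ) + 1) ^ p := Real.rpow_pos_of_pos (by positivity) _
          nlinarith [hn, ha, mul_pos ha h1]
        calc σ ^ 2 * n / (n + a * ((i : ℝ) + 1) ^ p) ^ 2
            ≤ σ ^ 2 * n / n ^ 2 :=
              div_le_div_of_nonneg_left (by positivity) (by positivity) hge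
          _ = σ ^ 2 / n := by field_simp
      have := Finset.sum_le_card_nsmul (Finset.range M)
        (fun i => σ ^ 2 * n / (n + a * ((i : ℝ) + 1) ^ p) ^ 2) (σ ^ 2 / n) hub
      simpa [nsmul_eq_mul] using this
    -- part 2
    have htailsum : Summable (fun j : ℕ => ((j + M : ℕ) : ℝ) ^ (-(2 * p))) := by
      have h : Summable (fun i : ℕ => ((i:ℕ):ℝ) ^ (-(2 * p))) :=
        Real.summable_nat_rpow.mpr (by linarith)
      exact (summable_nat_add_iff M).mpr h
    have hpart2 : (∑' j : ℕ, σ ^ 2 * n / (n + a * (((j + M : ℕ) : ℝ) + 1) ^ p) ^ 2)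
        ≤ σ ^ 2 * n / a ^ 2 * (A * (M:ℝ) ^ (1 - 2 * p)) := by
      have hb2 : ∀ j : ℕ, σ ^ 2 * n / (n + a * (((j + M : ℕ) : ℝ) + 1) ^ p) ^ 2
          ≤ σ ^ 2 * n / a ^ 2 * ((j + M : ℕ) : ℝ) ^ (-(2 * p)) := by
        intro j
        have h1 := hbound (j + M)
        have hMj : (1:ℝ) ≤ ((j + M : ℕ) : ℝ) := by
          exact_mod_cast Nat.one_le_iff_ne_zero.mpr (by omega)
        have h2 : (((j + M : ℕ) : ℝ) + 1) ^ (-(2 * p)) ≤ ((j + M : ℕ) : ℝ) ^ (-(2 * p)) :=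
          Real.rpow_le_rpow_of_nonpos (by linarith) (by linarith) (by linarith)
        calc σ ^ 2 * n / (n + a * (((j + M : ℕ) : ℝ) + 1) ^ p) ^ 2
            ≤ σ ^ 2 * n / a ^ 2 * (((j + M : ℕ) : ℝ) + 1) ^ (-(2 * p)) := by
              exact hbound (j + M)
          _ ≤ σ ^ 2 * n / a ^ 2 * ((j + M : ℕ) : ℝ) ^ (-(2 * p)) :=
              mul_le_mul_of_nonneg_left h2 (by positivity)
      have hsum' : Summable (fun j : ℕ =>
          σ ^ 2 * n / (n + a * (((j + M : ℕ) : ℝ) + 1) ^ p) ^ 2) :=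
        (summable_nat_add_iff M).mpr hsum
      calc (∑' j : ℕ, σ ^ 2 * n / (n + a * (((j + M : ℕ) : ℝ) + 1) ^ p) ^ 2)
          ≤ ∑' j : ℕ, σ ^ 2 * n / a ^ 2 * ((j + M : ℕ) : ℝ) ^ (-(2 * p)) :=
            Summable.tsum_le_tsum hb2 hsum' (htailsum.mul_left _)
        _ = σ ^ 2 * n / a ^ 2 * ∑' j : ℕ, ((j + M : ℕ) : ℝ) ^ (-(2 * p)) := tsum_mul_left
        _ ≤ σ ^ 2 * n / a ^ 2 * (2 ^ (2 * p) / (2 * p - 1) * (M:ℝ) ^ (1 - 2 * p)) := by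
            apply mul_le_mul_of_nonneg_left (tail_rpow_tsum_le h2p1 hM1) (by positivity)
        _ = σ ^ 2 * n / a ^ 2 * (A * (M:ℝ) ^ (1 - 2 * p)) := by rw [hA]
    -- combine
    have hMdown : (M:ℝ) ^ (1 - 2 * p) ≤ N' ^ (1 - 2 * p) :=
      Real.rpow_le_rpow_of_nonpos hN'0 hMge (by linarith)
    have hE2 : σ ^ 2 * n / a ^ 2 * N' ^ (1 - 2 * p) = σ ^ 2 * (N' / n) := by
      have h1 : N' ^ (1 - 2 * p) = N' / N' ^ (2 * p) := by
        rw [show (1:ℝ) - 2 * p = 1 + -(2 * p) by ring, Real.rpow_add hN'0, Real.rpow_one,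
          Real.rpow_neg (le_of_lt hN'0), div_eq_mul_inv]
      have h2 : N' ^ (2 * p) = (N' ^ p) ^ 2 := by
        rw [← Real.rpow_natCast (N' ^ p) 2, ← Real.rpow_mul (le_of_lt hN'0)]
        norm_num
        rw [mul_comm]
      have h3 : N' ^ (2 * p) = (n / a) ^ 2 := by rw [h2, hNp, hRdef]
      rw [h1, h3]
      field_simp
    have hfinal : (∑' i : ℕ, σ ^ 2 * n / (n + a * ((i : ℝ) + 1) ^ p) ^ 2)
        ≤ 2 * σ ^ 2 * (N' / n) + A * (σ ^ 2 * (N' / n)) := by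
      rw [hsplit]
      have hc1 : (M:ℝ) * (σ ^ 2 / n) ≤ 2 * σ ^ 2 * (N' / n) := by
        have := mul_le_mul_of_nonneg_right hMle (le_of_lt (div_pos hσ2 hn))
        calc (M:ℝ) * (σ ^ 2 / n) ≤ 2 * N' * (σ ^ 2 / n) := this
          _ = 2 * σ ^ 2 * (N' / n) := by field_simp
      have hc2 : σ ^ 2 * n / a ^ 2 * (A * (M:ℝ) ^ (1 - 2 * p))
          ≤ A * (σ ^ 2 * (N' / n)) := by
        calc σ ^ 2 * n / a ^ 2 * (A * (M:ℝ) ^ (1 - 2 * p))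
            ≤ σ ^ 2 * n / a ^ 2 * (A * N' ^ (1 - 2 * p)) := by
              apply mul_le_mul_of_nonneg_left _ (by positivity)
              exact mul_le_mul_of_nonneg_left hMdown (le_of_lt hApos)
          _ = A * (σ ^ 2 * n / a ^ 2 * N' ^ (1 - 2 * p)) := by ring
          _ = A * (σ ^ 2 * (N' / n)) := by rw [hE2]
      linarith [add_le_add hpart1 (le_trans hpart2 hc2), hc1, hc2, hpart2]
    have hCexpr : (2 + A) * B * (m : ℝ) ^ (-(1 / p)) * n ^ (-(2 * β / p))
        = 2 * σ ^ 2 * (N' / n) + A * (σ ^ 2 * (N' / n)) := by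
      rw [hX, hB]; ring
    rw [hCexpr]
    exact hfinal
end

section
/- (Posterior-spread asymptotics for the naive averaging method, used in Theorem 1.) For every σ, β > 0 there exist constants 0 < c ≤ C and K > 0 such that for all integers m ≥ 1 and all reals n > 0 with n/m ≥ K, c·m^{-1/(1+2β)}·n^{-2β/(1+2β)} ≤ Σ_{i=1}^∞ σ²/(n + σ²·m·i^{1+2β}) ≤ C·m^{-1/(1+2β)}·n^{-2β/(1+2β)}. -/
open Finset in
/-- Convexity-type telescoping bound: `s * (x+1)^(-(s+1)) ≤ x^(-s) - (x+1)^(-s)`. -/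
private lemma tele_bound {s x : ℝ} (hs : 0 < s) (hx : 1 ≤ x) :
    s * (x + 1) ^ (-(s + 1)) ≤ x ^ (-s) - (x + 1) ^ (-s) := by
  have hx0 : (0:ℝ) < x := by linarith
  have hy0 : (0:ℝ) < x + 1 := by linarith
  have hr0 : (0:ℝ) < (x + 1) / x := by positivity
  -- key : 1 + s/(x+1) ≤ ((x+1)/x)^s
  have hlog : 1 - x / (x + 1) ≤ Real.log ((x + 1) / x) := by
    have h := Real.one_sub_inv_le_log_of_pos hr0
    have : ((x + 1) / x)⁻¹ = x / (x + 1) := by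
      rw [inv_div]
    rwa [this] at h
  have hexp : ((x + 1) / x) ^ s = Real.exp (Real.log ((x + 1) / x) * s) :=
    Real.rpow_def_of_pos hr0 s
  have key : 1 + s / (x + 1) ≤ ((x + 1) / x) ^ s := by
    have h1 : 1 - x / (x + 1) = 1 / (x + 1) := by field_simp; ring
    have h2 : Real.log ((x + 1) / x) * s + 1 ≤ Real.exp (Real.log ((x + 1) / x) * s) :=
      Real.add_one_le_exp _
    have h3 : s / (x + 1) ≤ Real.log ((x + 1) / x) * s := by
      rw [h1] at hlog
      calc s / (x + 1) = (1 / (x + 1)) * s := by ring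
        _ ≤ Real.log ((x + 1) / x) * s := by
          apply mul_le_mul_of_nonneg_right hlog hs.le
    rw [hexp]; linarith
  -- rewrite x^(-s) in terms of (x+1)^(-s)
  have hPx : x ^ (-s) = ((x + 1) / x) ^ s * (x + 1) ^ (-s) := by
    rw [Real.rpow_neg hx0.le, Real.rpow_neg hy0.le, Real.div_rpow hy0.le hx0.le]
    have h1 : x ^ s ≠ 0 := (Real.rpow_pos_of_pos hx0 s).ne'
    have h2 : (x + 1) ^ s ≠ 0 := (Real.rpow_pos_of_pos hy0 s).ne'
    field_simp
  have hQpos : 0 < (x + 1) ^ (-s) := Real.rpow_pos_of_pos hy0 _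
  have hsplit : (x + 1) ^ (-(s + 1)) = (x + 1) ^ (-s) * (x + 1)⁻¹ := by
    rw [show -(s + 1) = -s + -1 by ring, Real.rpow_add hy0, Real.rpow_neg_one]
  calc s * (x + 1) ^ (-(s + 1)) = (s / (x + 1)) * (x + 1) ^ (-s) := by
        rw [hsplit]; ring
    _ ≤ (((x + 1) / x) ^ s - 1) * (x + 1) ^ (-s) :=
        mul_le_mul_of_nonneg_right (by linarith) hQpos.le
    _ = x ^ (-s) - (x + 1) ^ (-s) := by rw [hPx]; ring

/-- Partial tail sums of the `p`-series are bounded by `x₀^(-s)/s`. -/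
private lemma tail_partial {s x₀ : ℝ} (hs : 0 < s) (hx : 1 ≤ x₀) (M : ℕ) :
    ∑ i ∈ Finset.range M, (x₀ + i + 1) ^ (-(s + 1)) ≤ x₀ ^ (-s) / s := by
  have h1 : ∑ i ∈ Finset.range M, (x₀ + i + 1) ^ (-(s + 1))
      ≤ ∑ i ∈ Finset.range M,
          (1 / s) * ((x₀ + i) ^ (-s) - (x₀ + (i + 1 : ℕ)) ^ (-s)) := by
    apply Finset.sum_le_sum
    intro i _
    have hxi : 1 ≤ x₀ + i := by
      have : (0:ℝ) ≤ i := Nat.cast_nonneg i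
      linarith
    have := tele_bound hs hxi
    have hcast : (x₀ + (i + 1 : ℕ) : ℝ) = (x₀ + i) + 1 := by push_cast; ring
    rw [hcast]
    have hrw : x₀ + (i : ℝ) + 1 = (x₀ + i) + 1 := by ring
    rw [hrw]
    calc ((x₀ + i) + 1) ^ (-(s + 1))
        = (1 / s) * (s * ((x₀ + i) + 1) ^ (-(s + 1))) := by field_simp
      _ ≤ (1 / s) * ((x₀ + i) ^ (-s) - ((x₀ + i) + 1) ^ (-s)) := by
          apply mul_le_mul_of_nonneg_left this (by positivity)
  have h2 : ∑ i ∈ Finset.range M,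
      (1 / s) * ((x₀ + i) ^ (-s) - (x₀ + (i + 1 : ℕ)) ^ (-s))
      = (1 / s) * (x₀ ^ (-s) - (x₀ + M) ^ (-s)) := by
    rw [← Finset.mul_sum, Finset.sum_range_sub' (fun i : ℕ => (x₀ + i) ^ (-s))]
    norm_num
  have h3 : 0 ≤ (x₀ + M) ^ (-s) :=
    Real.rpow_nonneg (by positivity) _
  calc ∑ i ∈ Finset.range M, (x₀ + i + 1) ^ (-(s + 1))
      ≤ (1 / s) * (x₀ ^ (-s) - (x₀ + M) ^ (-s)) := h1.trans (le_of_eq h2)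
    _ ≤ (1 / s) * x₀ ^ (-s) := by
        apply mul_le_mul_of_nonneg_left (by linarith) (by positivity)
    _ = x₀ ^ (-s) / s := by ring

set_option maxHeartbeats 2000000 in
/-- Posterior-spread asymptotics for the naive averaging method (used in Theorem 1): for
every `σ, β > 0` there exist `0 < c ≤ C` and `K > 0` such that for all integers `m ≥ 1` and
all reals `n > 0` with `n/m ≥ K`,
`c m^{-1/(1+2β)} n^{-2β/(1+2β)} ≤ Σᵢ σ²/(n + σ² m i^{1+2β}) ≤ C m^{-1/(1+2β)} n^{-2β/(1+2β)}`,
the series running over the positive integers (coordinate `i : ℕ` is the integer `i + 1`). -/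
theorem spread_asymptotics_naive
    (σ β : ℝ) (hσ : 0 < σ) (hβ : 0 < β) :
    ∃ c C K : ℝ, 0 < c ∧ c ≤ C ∧ 0 < K ∧
      ∀ m : ℕ, 1 ≤ m → ∀ n : ℝ, 0 < n → K ≤ n / (m : ℝ) →
        c * (m : ℝ) ^ (-(1 / (1 + 2 * β))) * n ^ (-(2 * β / (1 + 2 * β)))
            ≤ (∑' i : ℕ, σ ^ 2 / (n + σ ^ 2 * m * ((i : ℝ) + 1) ^ (1 + 2 * β))) ∧
          (∑' i : ℕ, σ ^ 2 / (n + σ ^ 2 * m * ((i : ℝ) + 1) ^ (1 + 2 * β)))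
            ≤ C * (m : ℝ) ^ (-(1 / (1 + 2 * β))) * n ^ (-(2 * β / (1 + 2 * β))) := by
  set s : ℝ := 2 * β with hs_def
  set γ : ℝ := 1 + 2 * β with hγ_def
  have hs : 0 < s := by positivity
  have hγ0 : 0 < γ := by simp only [hγ_def]; linarith
  have hγ1 : 1 < γ := by simp only [hγ_def]; linarith
  have hγs : γ = s + 1 := by simp [hγ_def, hs_def]; ring
  refine ⟨(σ ^ 2) ^ (s / γ) / 4, (σ ^ 2) ^ (s / γ) * (1 + 2 ^ s / s), σ ^ 2,
    by positivity, ?_, by positivity, ?_⟩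
  · have h1 : (0:ℝ) < (σ ^ 2) ^ (s / γ) := by positivity
    have h2 : (0:ℝ) < 2 ^ s / s := by positivity
    nlinarith
  intro m hm n hn hK
  have hm0 : (0:ℝ) < (m : ℝ) := by exact_mod_cast hm
  have ha : (0:ℝ) < σ ^ 2 * m := by positivity
  -- n / (σ² m) ≥ 1
  have hna : 1 ≤ n / (σ ^ 2 * m) := by
    rw [le_div_iff₀ ha]
    have := (le_div_iff₀ hm0).mp hK
    linarith
  set a : ℝ := σ ^ 2 * m with ha_def
  set T : ℝ := (n / a) ^ (1 / γ) with hT_def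
  have hna0 : 0 < n / a := by positivity
  have hT0 : 0 < T := Real.rpow_pos_of_pos hna0 _
  have hT1 : 1 ≤ T := Real.one_le_rpow hna (by positivity)
  have hTγ : T ^ γ = n / a := by
    rw [hT_def, one_div, Real.rpow_inv_rpow hna0.le hγ0.ne']
  set N : ℕ := ⌊T⌋₊ with hN_def
  have hN1 : 1 ≤ N := Nat.le_floor (by exact_mod_cast hT1)
  have hNT : (N : ℝ) ≤ T := Nat.floor_le hT0.le
  have hTN : T < N + 1 := Nat.lt_floor_add_one T
  have hN0 : (0:ℝ) < N := by exact_mod_cast hN1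
  have hNhalf : T / 2 ≤ N := by
    have : (1:ℝ) ≤ N := by exact_mod_cast hN1
    linarith
  -- the common quantity D
  set D : ℝ := (σ ^ 2) ^ (s / γ) * (m : ℝ) ^ (-(1 / γ)) * n ^ (-(s / γ)) with hD_def
  have hD0 : 0 < D := by
    have h1 : (0:ℝ) < (σ ^ 2) ^ (s / γ) := by positivity
    have h2 : (0:ℝ) < (m : ℝ) ^ (-(1 / γ)) := Real.rpow_pos_of_pos hm0 _
    have h3 : (0:ℝ) < n ^ (-(s / γ)) := Real.rpow_pos_of_pos hn _
    positivity
  -- key identity : σ² T / n = D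
  have hkey : σ ^ 2 * T / n = D := by
    have e1 : T = n ^ (1 / γ) / ((σ ^ 2) ^ (1 / γ) * (m : ℝ) ^ (1 / γ)) := by
      rw [hT_def, ha_def, Real.div_rpow hn.le (by positivity),
        Real.mul_rpow (by positivity) hm0.le]
    have en : n ^ (1 / γ) * n ^ (s / γ) = n := by
      rw [← Real.rpow_add hn]
      have h1s : (1:ℝ) + s = γ := by rw [hγs]; ring
      rw [← add_div, h1s, div_self hγ0.ne', Real.rpow_one]
    have eσ : (σ ^ 2) ^ (s / γ) * (σ ^ 2) ^ (1 / γ) = σ ^ 2 := by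
      rw [← Real.rpow_add (by positivity)]
      have h1s : s + 1 = γ := hγs.symm
      rw [← add_div, h1s, div_self hγ0.ne', Real.rpow_one]
    have p1 : (0:ℝ) < (σ ^ 2) ^ (1 / γ) := by positivity
    have p2 : (0:ℝ) < (m : ℝ) ^ (1 / γ) := Real.rpow_pos_of_pos hm0 _
    have p3 : (0:ℝ) < n ^ (s / γ) := Real.rpow_pos_of_pos hn _
    rw [hD_def, e1, Real.rpow_neg hm0.le, Real.rpow_neg hn.le]
    field_simp
    linear_combination σ ^ 2 * en - n * eσ
  -- second key identity : (σ²/a) * T^(-s) = D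
  have hkey2 : σ ^ 2 / a * T ^ (-s) = D := by
    have hTs : T ^ (-s) = T * a / n := by
      have h1 : T ^ s * T = n / a := by
        rw [← Real.rpow_add_one hT0.ne' s, ← hγs, hTγ]
      rw [eq_div_iff ha.ne'] at h1
      rw [Real.rpow_neg hT0.le]
      have h2 : (0:ℝ) < T ^ s := Real.rpow_pos_of_pos hT0 _
      field_simp
      linear_combination -h1
    rw [hTs, ← hkey]
    field_simp
  -- summability
  have hpos : ∀ i : ℕ, (0:ℝ) < n + a * ((i : ℝ) + 1) ^ γ := by
    intro i
    have : (0:ℝ) < ((i : ℝ) + 1) ^ γ := Real.rpow_pos_of_pos (by positivity) _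
    nlinarith
  have hfpos : ∀ i : ℕ, (0:ℝ) < σ ^ 2 / (n + a * ((i : ℝ) + 1) ^ γ) := fun i =>
    div_pos (by positivity) (hpos i)
  have hmaj : Summable (fun i : ℕ => σ ^ 2 / a * (1 / ((i : ℝ) + 1) ^ γ)) := by
    apply Summable.mul_left
    have hs0 : Summable (fun i : ℕ => 1 / (i : ℝ) ^ γ) :=
      Real.summable_one_div_nat_rpow.mpr hγ1
    have hs1 := (summable_nat_add_iff 1).mpr hs0
    apply hs1.congr
    intro i
    push_cast
    ring_nf
  have hsum : Summable (fun i : ℕ => σ ^ 2 / (n + a * ((i : ℝ) + 1) ^ γ)) := by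
    apply Summable.of_nonneg_of_le (fun i => (hfpos i).le) _ hmaj
    intro i
    have h1 : (0:ℝ) < ((i : ℝ) + 1) ^ γ := Real.rpow_pos_of_pos (by positivity) _
    calc σ ^ 2 / (n + a * ((i : ℝ) + 1) ^ γ) ≤ σ ^ 2 / (a * ((i : ℝ) + 1) ^ γ) :=
        div_le_div_of_nonneg_left (by positivity) (by positivity) (by linarith)
      _ = σ ^ 2 / a * (1 / ((i : ℝ) + 1) ^ γ) := by rw [mul_one_div, div_div]
  constructor
  · -- lower bound
    have hterm : ∀ i ∈ Finset.range N, σ ^ 2 / (2 * n) ≤ σ ^ 2 / (n + a * ((i : ℝ) + 1) ^ γ) := by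
      intro i hi
      have hiN : (i : ℝ) + 1 ≤ N := by
        have := Finset.mem_range.mp hi
        have : (i : ℝ) + 1 ≤ (N : ℝ) := by exact_mod_cast this
        linarith
      have h1 : ((i : ℝ) + 1) ^ γ ≤ T ^ γ :=
        Real.rpow_le_rpow (by positivity) (hiN.trans hNT) hγ0.le
      have h2 : a * ((i : ℝ) + 1) ^ γ ≤ n := by
        have := mul_le_mul_of_nonneg_left h1 ha.le
        rw [hTγ] at this
        calc a * ((i : ℝ) + 1) ^ γ ≤ a * (n / a) := this
          _ = n := by field_simp
      apply div_le_div_of_nonneg_left (by positivity) (hpos i)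
      linarith
    have hlow1 : (N : ℝ) * (σ ^ 2 / (2 * n)) ≤ ∑ i ∈ Finset.range N, σ ^ 2 / (n + a * ((i : ℝ) + 1) ^ γ) := by
      have := Finset.card_nsmul_le_sum (Finset.range N)
        (fun i => σ ^ 2 / (n + a * ((i : ℝ) + 1) ^ γ)) (σ ^ 2 / (2 * n)) hterm
      simpa [Finset.card_range, nsmul_eq_mul] using this
    have hlow2 : ∑ i ∈ Finset.range N, σ ^ 2 / (n + a * ((i : ℝ) + 1) ^ γ)
        ≤ ∑' i : ℕ, σ ^ 2 / (n + a * ((i : ℝ) + 1) ^ γ) :=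
      Summable.sum_le_tsum _ (fun i _ => (hfpos i).le) hsum
    have hchain : D / 4 ≤ (N : ℝ) * (σ ^ 2 / (2 * n)) := by
      rw [← hkey]
      have : T / 2 * (σ ^ 2 / (2 * n)) ≤ (N : ℝ) * (σ ^ 2 / (2 * n)) :=
        mul_le_mul_of_nonneg_right hNhalf (by positivity)
      calc σ ^ 2 * T / n / 4 = T / 2 * (σ ^ 2 / (2 * n)) := by field_simp; ring
        _ ≤ (N : ℝ) * (σ ^ 2 / (2 * n)) := this
    calc (σ ^ 2) ^ (s / γ) / 4 * (m : ℝ) ^ (-(1 / γ)) * n ^ (-(s / γ)) = D / 4 := by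
          rw [hD_def]; ring
      _ ≤ (N : ℝ) * (σ ^ 2 / (2 * n)) := hchain
      _ ≤ ∑ i ∈ Finset.range N, σ ^ 2 / (n + a * ((i : ℝ) + 1) ^ γ) := hlow1
      _ ≤ _ := hlow2
  · -- upper bound
    have hsplit := Summable.sum_add_tsum_nat_add N hsum
    -- head estimate
    have hhead : ∑ i ∈ Finset.range N, σ ^ 2 / (n + a * ((i : ℝ) + 1) ^ γ) ≤ (N : ℝ) * (σ ^ 2 / n) := by
      have : ∀ i ∈ Finset.range N, σ ^ 2 / (n + a * ((i : ℝ) + 1) ^ γ) ≤ σ ^ 2 / n := by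
        intro i _
        apply div_le_div_of_nonneg_left (by positivity) hn
        have : (0:ℝ) < a * ((i : ℝ) + 1) ^ γ := by
          have := Real.rpow_pos_of_pos (show (0:ℝ) < (i:ℝ)+1 by positivity) γ
          positivity
        linarith
      calc ∑ i ∈ Finset.range N, σ ^ 2 / (n + a * ((i : ℝ) + 1) ^ γ)
          ≤ ∑ i ∈ Finset.range N, σ ^ 2 / n := Finset.sum_le_sum this
        _ = (N : ℝ) * (σ ^ 2 / n) := by
            rw [Finset.sum_const, Finset.card_range, nsmul_eq_mul]
    -- tail estimate
    have htail : (∑' i : ℕ, σ ^ 2 / (n + a * (((i + N : ℕ) : ℝ) + 1) ^ γ))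
        ≤ σ ^ 2 / a * ((N : ℝ) ^ (-s) / s) := by
      apply Real.tsum_le_of_sum_range_le (fun i => (hfpos _).le)
      intro M
      have hstep : ∀ i ∈ Finset.range M,
          σ ^ 2 / (n + a * (((i + N : ℕ) : ℝ) + 1) ^ γ)
            ≤ σ ^ 2 / a * ((N : ℝ) + i + 1) ^ (-(s + 1)) := by
        intro i _
        have hbase : (0:ℝ) < (N : ℝ) + i + 1 := by positivity
        have hc : (((i + N : ℕ) : ℝ) + 1) = (N : ℝ) + i + 1 := by push_cast; ring
        have hpγ : (0:ℝ) < ((N : ℝ) + i + 1) ^ γ := Real.rpow_pos_of_pos hbase _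
        have hneg : ((N : ℝ) + i + 1) ^ (-(s + 1)) = (((N : ℝ) + i + 1) ^ γ)⁻¹ := by
          rw [← hγs, Real.rpow_neg hbase.le]
        rw [hc, hneg]
        have hd : (0:ℝ) < n + a * ((N : ℝ) + i + 1) ^ γ := by
          nlinarith [mul_pos ha hpγ]
        rw [div_le_iff₀ hd]
        have e : σ ^ 2 / a * (((N : ℝ) + i + 1) ^ γ)⁻¹ * (a * ((N : ℝ) + i + 1) ^ γ) = σ ^ 2 := by
          field_simp
        nlinarith [mul_pos (mul_pos (show (0:ℝ) < σ^2/a by positivity) (inv_pos.mpr hpγ)) hn]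
      calc ∑ i ∈ Finset.range M, σ ^ 2 / (n + a * (((i + N : ℕ) : ℝ) + 1) ^ γ)
          ≤ ∑ i ∈ Finset.range M, σ ^ 2 / a * ((N : ℝ) + i + 1) ^ (-(s + 1)) :=
            Finset.sum_le_sum hstep
        _ = σ ^ 2 / a * ∑ i ∈ Finset.range M, ((N : ℝ) + i + 1) ^ (-(s + 1)) := by
            rw [Finset.mul_sum]
        _ ≤ σ ^ 2 / a * ((N : ℝ) ^ (-s) / s) := by
            apply mul_le_mul_of_nonneg_left
              (tail_partial hs (by exact_mod_cast hN1) M) (by positivity)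
    -- N^(-s) ≤ 2^s T^(-s)
    have hNs : (N : ℝ) ^ (-s) ≤ 2 ^ s * T ^ (-s) := by
      have h1 : (N : ℝ) ^ (-s) ≤ (T / 2) ^ (-s) :=
        Real.rpow_le_rpow_of_nonpos (by positivity) hNhalf (by linarith)
      have h2 : (T / 2) ^ (-s) = 2 ^ s * T ^ (-s) := by
        rw [Real.rpow_neg (by positivity), Real.div_rpow hT0.le (by norm_num),
          Real.rpow_neg hT0.le]
        have hT2 : (0:ℝ) < T ^ s := Real.rpow_pos_of_pos hT0 _
        have h2s : (0:ℝ) < (2:ℝ) ^ s := by positivity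
        field_simp
      linarith
    have hfinal : (∑' i : ℕ, σ ^ 2 / (n + a * ((i : ℝ) + 1) ^ γ))
        ≤ D + 2 ^ s / s * D := by
      rw [← hsplit]
      have t1 : (N : ℝ) * (σ ^ 2 / n) ≤ D := by
        rw [← hkey]
        calc (N : ℝ) * (σ ^ 2 / n) ≤ T * (σ ^ 2 / n) :=
              mul_le_mul_of_nonneg_right hNT (by positivity)
          _ = σ ^ 2 * T / n := by ring
      have t2 : σ ^ 2 / a * ((N : ℝ) ^ (-s) / s) ≤ 2 ^ s / s * D := by
        rw [← hkey2]
        have h1 : σ ^ 2 / a * ((N : ℝ) ^ (-s) / s) ≤ σ ^ 2 / a * (2 ^ s * T ^ (-s) / s) := by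
          apply mul_le_mul_of_nonneg_left _ (by positivity)
          exact (div_le_div_iff_of_pos_right hs).mpr hNs
        have h2 : σ ^ 2 / a * (2 ^ s * T ^ (-s) / s) = 2 ^ s / s * (σ ^ 2 / a * T ^ (-s)) := by
          ring
        linarith
      linarith [htail, hhead]
    calc (∑' i : ℕ, σ ^ 2 / (n + a * ((i : ℝ) + 1) ^ γ))
        ≤ D + 2 ^ s / s * D := hfinal
      _ = (σ ^ 2) ^ (s / γ) * (1 + 2 ^ s / s) * (m : ℝ) ^ (-(1 / γ)) * n ^ (-(s / γ)) := by
          rw [hD_def]; ring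
end

section
/- (Squared bias for the least-favorable signal, used in Theorem 1.) For every σ, β, M > 0 there exist constants 0 < c ≤ C and K > 0 such that for all integers m ≥ 1 and all reals n > 0 with n/m ≥ K, c·M²·(n/m)^{-2β/(1+2β)} ≤ Σ_{i=1}^∞ σ⁴·m²·i^{2+4β}·θ₀,ᵢ²/(n + σ²·m·i^{1+2β})² ≤ C·M²·(n/m)^{-2β/(1+2β)}, where θ₀,ᵢ² = M²·i^{-1-2β}. -/
open Real Finset

private lemma bern_aux {t q : ℝ} (ht : 0 < t) (ht1 : t ≤ 1) (hq : 0 ≤ q) :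
    1 + q * (1 - t) ≤ t ^ (-q) := by
  rw [Real.rpow_def_of_pos ht]
  have hlog : Real.log t ≤ t - 1 := Real.log_le_sub_one_of_pos ht
  have h1 : 1 + (Real.log t * -q) ≤ Real.exp (Real.log t * -q) := by
    linarith [Real.add_one_le_exp (Real.log t * -q)]
  nlinarith [mul_nonneg hq (sub_nonneg.mpr hlog)]

private lemma tail_step {p b : ℝ} (hp : 1 < p) (hb : 1 ≤ b) :
    (p - 1) * (b + 1) ^ (-p) ≤ b ^ (1 - p) - (b + 1) ^ (1 - p) := by
  have hb0 : (0:ℝ) < b := by linarith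
  have hb1 : (0:ℝ) < b + 1 := by linarith
  set t : ℝ := b / (b + 1) with htdef
  have ht0 : 0 < t := div_pos hb0 hb1
  have ht1 : t ≤ 1 := by rw [div_le_one hb1]; linarith
  have hbt : b = (b + 1) * t := by rw [htdef]; field_simp
  have key : 1 + (p - 1) * (1 - t) ≤ t ^ (-(p - 1)) := bern_aux ht0 ht1 (by linarith)
  have hbp : b ^ (1 - p) = (b + 1) ^ (1 - p) * t ^ (1 - p) := by
    nth_rewrite 1 [hbt]
    rw [Real.mul_rpow hb1.le ht0.le]
  have ht' : t ^ (1 - p) = t ^ (-(p-1)) := by ring_nf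
  have h1t : 1 - t = 1 / (b + 1) := by
    rw [htdef]; field_simp; ring
  have hrw : (b+1) ^ (-p) = (b + 1) ^ (1 - p) * (1 / (b+1)) := by
    rw [one_div, ← Real.rpow_neg_one (b+1), ← Real.rpow_add hb1]
    congr 1; ring
  rw [hbp, ht', hrw]
  have hpos : (0:ℝ) < (b + 1) ^ (1 - p) := Real.rpow_pos_of_pos hb1 _
  calc (p - 1) * ((b + 1) ^ (1 - p) * (1/(b+1)))
      = (b + 1) ^ (1 - p) * ((1 + (p-1) * (1 - t)) - 1) := by rw [h1t]; ring
    _ ≤ (b + 1) ^ (1 - p) * (t ^ (-(p-1)) - 1) := by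
        apply mul_le_mul_of_nonneg_left _ hpos.le
        linarith
    _ = (b + 1) ^ (1 - p) * t ^ (-(p-1)) - (b + 1) ^ (1 - p) := by ring

private lemma tail_tsum_bound {p : ℝ} (hp : 1 < p) (N : ℕ) (hN : 1 ≤ N) :
    ∑' i : ℕ, ((i : ℝ) + N + 1) ^ (-p) ≤ (N : ℝ) ^ (1 - p) / (p - 1) := by
  have hbase : Summable (fun k : ℕ => (k : ℝ) ^ (-p)) :=
    Real.summable_nat_rpow.mpr (by linarith)
  have hsum : Summable (fun i : ℕ => ((i : ℝ) + N + 1) ^ (-p)) := by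
    have := (summable_nat_add_iff (f := fun k : ℕ => (k : ℝ) ^ (-p)) (N + 1)).mpr hbase
    refine this.congr fun i => ?_
    push_cast; ring_nf
  refine Summable.tsum_le_of_sum_le hsum fun s => ?_
  obtain ⟨L, hL⟩ := s.exists_nat_subset_range
  have h1 : ∑ i ∈ s, ((i : ℝ) + N + 1) ^ (-p)
      ≤ ∑ i ∈ range L, ((i : ℝ) + N + 1) ^ (-p) := by
    refine Finset.sum_le_sum_of_subset_of_nonneg hL fun i _ _ => ?_
    positivity
  have h2 : ∑ i ∈ range L, ((i : ℝ) + N + 1) ^ (-p)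
      ≤ ∑ i ∈ range L, (((i : ℝ) + N) ^ (1-p) / (p-1) - (((i:ℝ)+1) + N) ^ (1-p) / (p-1)) := by
    refine Finset.sum_le_sum fun i _ => ?_
    have hb : (1:ℝ) ≤ (i : ℝ) + N := by
      have : (1:ℝ) ≤ (N:ℝ) := by exact_mod_cast hN
      have : (0:ℝ) ≤ (i:ℝ) := Nat.cast_nonneg i
      linarith
    have := tail_step hp hb
    have hp1 : (0:ℝ) < p - 1 := by linarith
    rw [div_sub_div_same, le_div_iff₀ hp1]
    calc ((i:ℝ) + N + 1) ^ (-p) * (p-1) = (p-1) * (((i:ℝ)+N) + 1) ^ (-p) := by ring_nf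
      _ ≤ ((i:ℝ)+N) ^ (1-p) - (((i:ℝ)+N) + 1) ^ (1-p) := this
      _ = ((i:ℝ)+N) ^ (1-p) - (((i:ℝ)+1) + N) ^ (1-p) := by ring_nf
  have h3 : ∑ i ∈ range L, (((i : ℝ) + N) ^ (1-p) / (p-1) - (((i:ℝ)+1) + N) ^ (1-p) / (p-1))
      = ((0:ℝ) + N) ^ (1-p) / (p-1) - ((L:ℝ) + N) ^ (1-p) / (p-1) := by
    have := Finset.sum_range_sub' (f := fun i : ℕ => ((i : ℝ) + N) ^ (1-p) / (p-1)) L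
    simpa using this
  have h4 : (0:ℝ) ≤ ((L:ℝ) + N) ^ (1-p) / (p-1) := by
    have hp1 : (0:ℝ) < p - 1 := by linarith
    positivity
  calc ∑ i ∈ s, ((i : ℝ) + N + 1) ^ (-p) ≤ _ := h1
    _ ≤ _ := h2
    _ = _ := h3
    _ ≤ (N : ℝ) ^ (1-p) / (p-1) := by rw [zero_add]; linarith

set_option maxHeartbeats 1000000 in
private lemma core_bound {p : ℝ} (hp : 1 < p) (r : ℝ) (hr : (2:ℝ) ^ p ≤ r) :
    ((4:ℝ) ^ (-(p+2))) * r ^ (p⁻¹ - 1)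
      ≤ (∑' i : ℕ, ((i:ℝ)+1) ^ p / (r + ((i:ℝ)+1) ^ p) ^ 2) ∧
    (∑' i : ℕ, ((i:ℝ)+1) ^ p / (r + ((i:ℝ)+1) ^ p) ^ 2)
      ≤ (1 + (2:ℝ)^(p-1)/(p-1)) * r ^ (p⁻¹ - 1) := by
  have hp0 : (0:ℝ) < p := by linarith
  have hp1 : (0:ℝ) < p - 1 := by linarith
  have hr2 : (2:ℝ) ≤ r := by
    have h1 : (2:ℝ) ^ (1:ℝ) ≤ (2:ℝ) ^ p :=
      Real.rpow_le_rpow_of_exponent_le one_le_two hp.le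
    rw [Real.rpow_one] at h1; linarith
  have hr0 : (0:ℝ) < r := by linarith
  set x : ℝ := r ^ (p⁻¹ : ℝ) with hxdef
  have hx0 : (0:ℝ) < x := Real.rpow_pos_of_pos hr0 _
  have hxp : x ^ p = r := Real.rpow_inv_rpow hr0.le (ne_of_gt hp0)
  have hx2 : (2:ℝ) ≤ x := by
    by_contra h
    push_neg at h
    have := Real.rpow_lt_rpow hx0.le h hp0
    rw [hxp] at this; linarith
  set N : ℕ := ⌊x⌋₊ with hNdef
  have hN2 : 2 ≤ N := Nat.le_floor (by exact_mod_cast hx2)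
  have hNx : (N:ℝ) ≤ x := Nat.floor_le hx0.le
  have hxN1 : x ≤ (N:ℝ) + 1 := (Nat.lt_floor_add_one x).le
  have hNhalf : x/2 ≤ (N:ℝ) := by linarith
  clear_value x N
  set g : ℕ → ℝ := fun i => ((i:ℝ)+1) ^ p / (r + ((i:ℝ)+1) ^ p) ^ 2 with hgdef
  have hy0 : ∀ i : ℕ, (0:ℝ) < ((i:ℝ)+1) ^ p := fun i =>
    Real.rpow_pos_of_pos (by positivity) _
  have hgpos : ∀ i, 0 ≤ g i := fun i => div_nonneg (hy0 i).le (sq_nonneg _)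
  have hgle : ∀ i : ℕ, g i ≤ ((i:ℝ)+1) ^ (-p) := by
    intro i
    have hy := hy0 i
    rw [Real.rpow_neg (by positivity : (0:ℝ) ≤ (i:ℝ)+1)]
    have h2 : ((i:ℝ)+1) ^ p / (((i:ℝ)+1) ^ p) ^ 2 = (((i:ℝ)+1) ^ p)⁻¹ := by
      rw [sq, ← div_div, div_self hy.ne', one_div]
    rw [← h2]
    exact div_le_div₀ hy.le le_rfl (by positivity) (by nlinarith)
  have hshift : Summable (fun i : ℕ => ((i:ℝ)+1) ^ (-p)) := by
    have hbase : Summable (fun k : ℕ => (k : ℝ) ^ (-p)) :=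
      Real.summable_nat_rpow.mpr (by linarith)
    have := (summable_nat_add_iff (f := fun k : ℕ => (k : ℝ) ^ (-p)) 1).mpr hbase
    refine this.congr fun i => ?_
    push_cast; ring_nf
  have hsum : Summable g := Summable.of_nonneg_of_le hgpos hgle hshift
  have hxe : x ^ (p+1) = r ^ (p⁻¹ - 1) * r ^ 2 := by
    rw [hxdef, ← Real.rpow_mul hr0.le]
    have h : p⁻¹ * (p + 1) = (p⁻¹ - 1) + 2 := by field_simp; ring
    rw [h, Real.rpow_add hr0, Real.rpow_two]
  have hxe1 : x ^ ((1:ℝ)-p) = r ^ (p⁻¹ - 1) := by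
    rw [hxdef, ← Real.rpow_mul hr0.le]
    congr 1
    field_simp
  constructor
  · -- lower bound
    have hsub : Finset.Ico (N/2) N ⊆ Finset.range N := by
      intro k hk; simp only [Finset.mem_Ico, Finset.mem_range] at *; omega
    have step1 : ∑ i ∈ Finset.Ico (N/2) N, g i ≤ ∑' i, g i :=
      le_trans (Finset.sum_le_sum_of_subset_of_nonneg hsub fun i _ _ => hgpos i)
        (Summable.sum_le_tsum _ (fun i _ => hgpos i) hsum)
    have hterm : ∀ i ∈ Finset.Ico (N/2) N, (x/4) ^ p / (4 * r^2) ≤ g i := by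
      intro i hi
      simp only [Finset.mem_Ico] at hi
      have hi1 : x/4 ≤ (i:ℝ) + 1 := by
        have h1 : ((N/2 : ℕ):ℝ) ≤ (i:ℝ) := by exact_mod_cast hi.1
        have h2 : ((N:ℝ) - 1)/2 ≤ ((N/2 : ℕ):ℝ) := by
          have h3 : N ≤ 2 * (N/2) + 1 := by omega
          have h4 := (Nat.cast_le (α := ℝ)).mpr h3
          push_cast at h4
          linarith
        linarith
      have hi2 : ((i:ℝ)+1) ^ p ≤ r := by
        rw [← hxp]
        apply Real.rpow_le_rpow (by positivity) _ hp0.le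
        have h5 : (i:ℝ) + 1 ≤ (N:ℝ) := by
          have : i + 1 ≤ N := hi.2
          exact_mod_cast this
        linarith
      have hnum : (x/4) ^ p ≤ ((i:ℝ)+1) ^ p :=
        Real.rpow_le_rpow (by positivity) hi1 hp0.le
      have hden : (r + ((i:ℝ)+1)^p) ^ 2 ≤ 4 * r^2 := by nlinarith [hy0 i]
      exact div_le_div₀ (hy0 i).le hnum (by positivity) hden
    have hcard : (x/4) ≤ ((Finset.Ico (N/2) N).card : ℝ) := by
      rw [Nat.card_Ico]
      have h1 : ((N/2 : ℕ):ℝ) ≤ (N:ℝ)/2 := by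
        have h3 : 2 * (N/2) ≤ N := by omega
        have h4 := (Nat.cast_le (α := ℝ)).mpr h3
        push_cast at h4; linarith
      have h2 : ((N - N/2 : ℕ):ℝ) = (N:ℝ) - ((N/2:ℕ):ℝ) := by
        have h5 : N/2 ≤ N := by omega
        push_cast [h5]; ring
      rw [h2]; linarith
    have hsumIco : (x/4) * ((x/4) ^ p / (4 * r^2)) ≤ ∑ i ∈ Finset.Ico (N/2) N, g i := by
      calc (x/4) * ((x/4) ^ p / (4 * r^2))
          ≤ ((Finset.Ico (N/2) N).card : ℝ) * ((x/4) ^ p / (4 * r^2)) := by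
            apply mul_le_mul_of_nonneg_right hcard
            positivity
        _ ≤ ∑ i ∈ Finset.Ico (N/2) N, g i := by
            rw [← nsmul_eq_mul]
            exact Finset.card_nsmul_le_sum _ _ _ hterm
    have h44 : (0:ℝ) < (4:ℝ)^(p+2) := Real.rpow_pos_of_pos (by norm_num) _
    have h41 : (0:ℝ) < (4:ℝ)^(p+1) := Real.rpow_pos_of_pos (by norm_num) _
    have hxdiv : (x/4) * (x/4)^p = x^(p+1)/4^(p+1) := by
      rw [Real.div_rpow hx0.le (by norm_num : (0:ℝ) ≤ 4), Real.rpow_add hx0,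
        Real.rpow_one, Real.rpow_add (by norm_num : (0:ℝ) < 4), Real.rpow_one]
      field_simp
    have h42 : (4:ℝ)^(p+1) * 4 = 4^(p+2) := by
      rw [Real.rpow_add (by norm_num : (0:ℝ) < 4) p 1, Real.rpow_add
        (by norm_num : (0:ℝ) < 4) p 2, Real.rpow_one, Real.rpow_two]
      ring
    have hinv : (4:ℝ)^(-(p+2)) = ((4:ℝ)^(p+2))⁻¹ := Real.rpow_neg (by norm_num) _
    have hcalc : (4:ℝ) ^ (-(p+2)) * r ^ (p⁻¹ - 1) = (x/4) * ((x/4) ^ p / (4 * r^2)) := by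
      have e1 : (x/4) * ((x/4)^p/(4*r^2)) = ((x/4) * (x/4)^p)/(4*r^2) := by ring
      rw [e1, hxdiv, hinv]
      rw [div_div, mul_comm ((4:ℝ)^(p+1)) (4*r^2), show (4:ℝ)*r^2*4^(p+1) = 4^(p+2)*r^2 by
        rw [← h42]; ring]
      rw [hxe]
      field_simp
    rw [hcalc]
    exact hsumIco.trans step1
  · -- upper bound
    rw [← Summable.sum_add_tsum_nat_add N hsum]
    have hhead : ∑ i ∈ Finset.range N, g i ≤ r ^ (p⁻¹ - 1) := by
      have hterm : ∀ i ∈ Finset.range N, g i ≤ 1/r := by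
        intro i hi
        simp only [Finset.mem_range] at hi
        have hi2 : ((i:ℝ)+1) ^ p ≤ r := by
          rw [← hxp]
          apply Real.rpow_le_rpow (by positivity) _ hp0.le
          have h5 : (i:ℝ) + 1 ≤ (N:ℝ) := by exact_mod_cast Nat.succ_le_of_lt hi
          linarith
        have h6 : g i ≤ r / r^2 :=
          div_le_div₀ hr0.le hi2 (by positivity) (by nlinarith [hy0 i])
        have h7 : r / r^2 = 1/r := by rw [sq, ← div_div, div_self hr0.ne']
        rw [← h7]; exact h6
      calc ∑ i ∈ Finset.range N, g i ≤ (Finset.range N).card • (1/r) :=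
            Finset.sum_le_card_nsmul _ _ _ hterm
        _ = (N:ℝ) * (1/r) := by rw [Finset.card_range, nsmul_eq_mul]
        _ ≤ x * (1/r) := by
            apply mul_le_mul_of_nonneg_right hNx
            positivity
        _ = r ^ (p⁻¹ - 1) := by
            rw [Real.rpow_sub hr0, Real.rpow_one, hxdef]
            ring
    have htail : ∑' i, g (i + N) ≤ (2:ℝ)^(p-1)/(p-1) * r ^ (p⁻¹ - 1) := by
      have hshiftN : Summable (fun i : ℕ => ((i:ℝ) + N + 1) ^ (-p)) := by
        have hbase : Summable (fun k : ℕ => (k : ℝ) ^ (-p)) :=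
          Real.summable_nat_rpow.mpr (by linarith)
        have := (summable_nat_add_iff (f := fun k : ℕ => (k : ℝ) ^ (-p)) (N+1)).mpr hbase
        refine this.congr fun i => ?_
        push_cast; ring_nf
      have h1 : ∑' i, g (i + N) ≤ ∑' i : ℕ, ((i:ℝ) + N + 1) ^ (-p) := by
        refine Summable.tsum_le_tsum (fun i => ?_) ((summable_nat_add_iff N).mpr hsum) hshiftN
        have h8 := hgle (i + N)
        have hc : ((i + N : ℕ):ℝ) + 1 = (i:ℝ) + N + 1 := by push_cast; ring
        rw [hc] at h8
        exact h8
      have h2 : (∑' i : ℕ, ((i:ℝ) + N + 1) ^ (-p)) ≤ (N:ℝ) ^ ((1:ℝ)-p)/(p-1) :=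
        tail_tsum_bound hp N (by omega)
      have h3 : (N:ℝ) ^ ((1:ℝ)-p) ≤ (x/2) ^ ((1:ℝ)-p) :=
        Real.rpow_le_rpow_of_nonpos (by linarith) hNhalf (by linarith)
      have h4 : (x/2) ^ ((1:ℝ)-p) = (2:ℝ)^(p-1) * x ^ ((1:ℝ)-p) := by
        rw [Real.div_rpow hx0.le (by norm_num : (0:ℝ) ≤ 2)]
        rw [show ((1:ℝ)-p) = -(p-1) by ring,
          Real.rpow_neg (by norm_num : (0:ℝ) ≤ 2)]
        have h2p : (0:ℝ) < (2:ℝ)^(p-1) := Real.rpow_pos_of_pos (by norm_num) _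
        field_simp
      calc ∑' i, g (i + N) ≤ (N:ℝ) ^ ((1:ℝ)-p)/(p-1) := h1.trans h2
        _ ≤ (x/2) ^ ((1:ℝ)-p)/(p-1) := by
            exact div_le_div₀ (by positivity) h3 hp1 le_rfl
        _ = (2:ℝ)^(p-1)/(p-1) * r ^ (p⁻¹ - 1) := by
            rw [h4, hxe1]; ring
    calc ∑ i ∈ Finset.range N, g i + ∑' i, g (i + N)
        ≤ r ^ (p⁻¹ - 1) + (2:ℝ)^(p-1)/(p-1) * r ^ (p⁻¹ - 1) := add_le_add hhead htail
      _ = (1 + (2:ℝ)^(p-1)/(p-1)) * r ^ (p⁻¹ - 1) := by ring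


/-- Squared bias for the least-favorable signal `θ₀,ᵢ = M i^{-(1+2β)/2}` (used in
Theorem 1): for every `σ, β, M > 0` there exist `0 < c ≤ C` and `K > 0` such that for all
integers `m ≥ 1` and all reals `n > 0` with `n/m ≥ K`,
`c M² (n/m)^{-2β/(1+2β)} ≤ Σᵢ σ⁴ m² i^{2+4β} θ₀,ᵢ²/(n + σ² m i^{1+2β})²
  ≤ C M² (n/m)^{-2β/(1+2β)}`,
the series running over the positive integers (coordinate `i : ℕ` is the integer `i + 1`). -/
theorem squared_bias_least_favorable_naive
    (σ β M : ℝ) (hσ : 0 < σ) (hβ : 0 < β) (hM : 0 < M) :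
    ∃ c C K : ℝ, 0 < c ∧ c ≤ C ∧ 0 < K ∧
      ∀ m : ℕ, 1 ≤ m → ∀ n : ℝ, 0 < n → K ≤ n / (m : ℝ) →
        c * M ^ 2 * (n / (m : ℝ)) ^ (-(2 * β / (1 + 2 * β)))
            ≤ (∑' i : ℕ, σ ^ 4 * (m : ℝ) ^ 2 * ((i : ℝ) + 1) ^ (2 + 4 * β)
                * (M ^ 2 * ((i : ℝ) + 1) ^ (-1 - 2 * β))
                / (n + σ ^ 2 * m * ((i : ℝ) + 1) ^ (1 + 2 * β)) ^ 2) ∧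
          (∑' i : ℕ, σ ^ 4 * (m : ℝ) ^ 2 * ((i : ℝ) + 1) ^ (2 + 4 * β)
                * (M ^ 2 * ((i : ℝ) + 1) ^ (-1 - 2 * β))
                / (n + σ ^ 2 * m * ((i : ℝ) + 1) ^ (1 + 2 * β)) ^ 2)
            ≤ C * M ^ 2 * (n / (m : ℝ)) ^ (-(2 * β / (1 + 2 * β))) := by
  set p : ℝ := 1 + 2 * β with hpdef
  have hp : 1 < p := by rw [hpdef]; linarith
  have hp0 : (0:ℝ) < p := by linarith
  have hp1 : (0:ℝ) < p - 1 := by linarith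
  have hσ2 : (0:ℝ) < σ ^ 2 := pow_pos hσ 2
  set c' : ℝ := (4:ℝ) ^ (-(p+2)) with hc'def
  set C' : ℝ := 1 + (2:ℝ)^(p-1)/(p-1) with hC'def
  have hc'0 : 0 < c' := Real.rpow_pos_of_pos (by norm_num) _
  have hc'C' : c' ≤ C' := by
    have h1 : c' ≤ 1 := Real.rpow_le_one_of_one_le_of_nonpos (by norm_num) (by linarith)
    have h2 : (0:ℝ) ≤ (2:ℝ)^(p-1)/(p-1) :=
      div_nonneg (Real.rpow_pos_of_pos (by norm_num) _).le hp1.le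
    rw [hC'def]; linarith
  have hσr : (0:ℝ) < (σ^2) ^ ((1:ℝ) - p⁻¹) := Real.rpow_pos_of_pos hσ2 _
  refine ⟨c' * (σ^2) ^ ((1:ℝ) - p⁻¹), C' * (σ^2) ^ ((1:ℝ) - p⁻¹), σ^2 * (2:ℝ)^p,
    mul_pos hc'0 hσr, mul_le_mul_of_nonneg_right hc'C' hσr.le,
    mul_pos hσ2 (Real.rpow_pos_of_pos (by norm_num) _), ?_⟩
  intro m hm n hn hK
  have hm0 : (0:ℝ) < (m:ℝ) := by exact_mod_cast hm
  set r : ℝ := n / (σ^2 * m) with hrdef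
  have hr0 : 0 < r := div_pos hn (mul_pos hσ2 hm0)
  have hreq : r = (n / (m:ℝ)) / σ^2 := by rw [hrdef]; ring
  have hr' : (2:ℝ)^p ≤ r := by
    rw [hreq, le_div_iff₀ hσ2]
    nlinarith [hK]
  obtain ⟨hlow, hup⟩ := core_bound hp r hr'
  have hexp : -(2 * β / p) = p⁻¹ - 1 := by
    rw [hpdef]; field_simp; ring
  have hnm : n / (m:ℝ) = σ^2 * r := by
    rw [hrdef]; field_simp
  have hrw2 : (n/(m:ℝ)) ^ (-(2*β/p)) = (σ^2)^(p⁻¹ - 1) * r^(p⁻¹ - 1) := by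
    rw [hexp, hnm, Real.mul_rpow hσ2.le hr0.le]
  have hσc : (σ^2:ℝ)^((1:ℝ)-p⁻¹) * (σ^2)^(p⁻¹-1) = 1 := by
    rw [← Real.rpow_add hσ2, show ((1:ℝ)-p⁻¹) + (p⁻¹-1) = 0 by ring, Real.rpow_zero]
  have key : ∀ i : ℕ,
      σ ^ 4 * (m : ℝ) ^ 2 * ((i : ℝ) + 1) ^ (2 + 4 * β)
        * (M ^ 2 * ((i : ℝ) + 1) ^ (-1 - 2 * β))
        / (n + σ ^ 2 * m * ((i : ℝ) + 1) ^ p) ^ 2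
      = M ^ 2 * (((i:ℝ)+1) ^ p / (r + ((i:ℝ)+1) ^ p) ^ 2) := by
    intro i
    have ht : (0:ℝ) < (i:ℝ) + 1 := by positivity
    have hy : (0:ℝ) < ((i:ℝ)+1) ^ p := Real.rpow_pos_of_pos ht _
    have e1 : ((i:ℝ)+1) ^ (2 + 4*β) * ((i:ℝ)+1) ^ (-1 - 2*β) = ((i:ℝ)+1) ^ p := by
      rw [← Real.rpow_add ht]
      congr 1
      rw [hpdef]; ring
    have e2 : σ ^ 4 * (m : ℝ) ^ 2 * ((i : ℝ) + 1) ^ (2 + 4 * β)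
        * (M ^ 2 * ((i : ℝ) + 1) ^ (-1 - 2 * β))
        = M ^ 2 * ((σ^2*m)^2 * ((i:ℝ)+1) ^ p) := by
      rw [← e1]; ring
    rw [e2]
    have hden : (0:ℝ) < n + σ ^ 2 * m * ((i:ℝ)+1) ^ p :=
      add_pos hn (mul_pos (mul_pos hσ2 hm0) hy)
    have h2 : r + ((i:ℝ)+1) ^ p = (n + σ^2*m*((i:ℝ)+1)^p) / (σ^2*m) := by
      rw [hrdef]; field_simp
    rw [h2]
    field_simp
  have htsum : (∑' i : ℕ, σ ^ 4 * (m : ℝ) ^ 2 * ((i : ℝ) + 1) ^ (2 + 4 * β)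
        * (M ^ 2 * ((i : ℝ) + 1) ^ (-1 - 2 * β))
        / (n + σ ^ 2 * m * ((i : ℝ) + 1) ^ p) ^ 2)
      = M ^ 2 * (∑' i : ℕ, ((i:ℝ)+1) ^ p / (r + ((i:ℝ)+1) ^ p) ^ 2) := by
    rw [← tsum_mul_left]
    exact tsum_congr key
  rw [htsum]
  constructor
  · calc c' * (σ^2) ^ ((1:ℝ) - p⁻¹) * M ^ 2 * (n / (m:ℝ)) ^ (-(2*β/p))
        = M ^ 2 * (c' * r ^ (p⁻¹ - 1)) * ((σ^2)^((1:ℝ)-p⁻¹) * (σ^2)^(p⁻¹-1)) := by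
          rw [hrw2]; ring
      _ = M ^ 2 * (c' * r ^ (p⁻¹ - 1)) := by rw [hσc, mul_one]
      _ ≤ M ^ 2 * (∑' i : ℕ, ((i:ℝ)+1) ^ p / (r + ((i:ℝ)+1) ^ p) ^ 2) :=
          mul_le_mul_of_nonneg_left hlow (sq_nonneg M)
  · calc M ^ 2 * (∑' i : ℕ, ((i:ℝ)+1) ^ p / (r + ((i:ℝ)+1) ^ p) ^ 2)
        ≤ M ^ 2 * (C' * r ^ (p⁻¹ - 1)) :=
          mul_le_mul_of_nonneg_left hup (sq_nonneg M)
      _ = M ^ 2 * (C' * r ^ (p⁻¹ - 1)) * ((σ^2)^((1:ℝ)-p⁻¹) * (σ^2)^(p⁻¹-1)) := by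
          rw [hσc, mul_one]
      _ = C' * (σ^2) ^ ((1:ℝ) - p⁻¹) * M ^ 2 * (n / (m:ℝ)) ^ (-(2*β/p)) := by
          rw [hrw2]; ring
end

section
/- (Uniform squared-bias bound over a hyperrectangle for the global-sample-size kernel, used in Theorem 2.) For every σ, β, M > 0 there exist C > 0 and N such that for all n ≥ N and all θ ∈ H^β(M), Σ_{i=1}^∞ σ⁴·i^{2+4β}·θᵢ²/(n + σ²·i^{1+2β})² ≤ C·M²·n^{-2β/(1+2β)}. -/
set_option maxHeartbeats 1000000

open Real


lemma step_ineq (b k : ℝ) (hb : 0 < b) (hk : 1 ≤ k) :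
    b * (k + 1) ^ (-(1 + b)) ≤ k ^ (-b) - (k + 1) ^ (-b) := by
  have hk0 : (0:ℝ) < k := lt_of_lt_of_le one_pos hk
  have hk1 : (0:ℝ) < k + 1 := by linarith
  set y : ℝ := 1 / (k + 1) with hy_def
  have hy0 : 0 < y := by positivity
  have hy1 : y < 1 := by
    rw [hy_def, div_lt_one hk1]; linarith
  -- key : (1 + b*y) * (1-y)^b ≤ 1
  have h1 : (1 - y) ^ b ≤ exp (-y) ^ b :=
    rpow_le_rpow (by linarith) (by nlinarith [add_one_le_exp (-y)]) hb.le
  have h2 : exp (-y) ^ b = exp (-y * b) := (exp_mul (-y) b).symm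
  have h3 : 1 + b * y ≤ exp (b * y) := by nlinarith [add_one_le_exp (b * y)]
  have key : (1 + b * y) * (1 - y) ^ b ≤ 1 := by
    calc (1 + b * y) * (1 - y) ^ b ≤ exp (b * y) * exp (-y * b) := by
          apply mul_le_mul h3 (h1.trans_eq h2) (rpow_nonneg (by linarith) _) (exp_pos _).le
      _ = 1 := by rw [← exp_add]; ring_nf; exact exp_zero
  have hpow_pos : (0:ℝ) < (1 - y) ^ b := rpow_pos_of_pos (by linarith) b
  have key2 : 1 + b * y ≤ (1 - y) ^ (-b) := by
    rw [rpow_neg (by linarith : (0:ℝ) ≤ 1 - y), ← one_div]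
    exact (le_div_iff₀ hpow_pos).mpr key
  have hfact : k = (k + 1) * (1 - y) := by
    rw [hy_def]; field_simp; ring
  have hkk : k ^ (-b) = (k + 1) ^ (-b) * (1 - y) ^ (-b) := by
    conv_lhs => rw [hfact]
    rw [mul_rpow hk1.le (by linarith)]
  have hpos1 : (0:ℝ) < (k + 1) ^ (-b) := rpow_pos_of_pos hk1 _
  have hlast : (k + 1) ^ (-b) * y = (k + 1) ^ (-(1 + b)) := by
    have : y = (k + 1) ^ (-(1:ℝ)) := by
      rw [rpow_neg hk1.le, rpow_one, hy_def, one_div]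
    rw [this, ← rpow_add hk1]
    ring_nf
  have : (k + 1) ^ (-b) * (1 + b * y) ≤ k ^ (-b) := by
    rw [hkk]
    exact mul_le_mul_of_nonneg_left key2 hpos1.le
  nlinarith [this, hlast]

lemma tail_sum (b : ℝ) (hb : 0 < b) (m : ℕ) (hm : 1 ≤ m) :
    ∑' i : ℕ, ((m : ℝ) + i + 1) ^ (-(1 + b)) ≤ (m : ℝ) ^ (-b) / b := by
  have hm0 : (0:ℝ) < m := by exact_mod_cast hm
  apply Real.tsum_le_of_sum_range_le (fun i => rpow_nonneg (by positivity) _)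
  intro K
  rw [le_div_iff₀ hb]
  have key : ∀ i : ℕ, b * ((m : ℝ) + i + 1) ^ (-(1 + b)) ≤
      ((m : ℝ) + i) ^ (-b) - ((m : ℝ) + i + 1) ^ (-b) := by
    intro i
    have hm1 : (1:ℝ) ≤ m := by exact_mod_cast hm
    exact step_ineq b ((m : ℝ) + i) hb (by linarith [Nat.cast_nonneg (α := ℝ) i])
  calc (∑ i ∈ Finset.range K, ((m : ℝ) + i + 1) ^ (-(1 + b))) * b
      = ∑ i ∈ Finset.range K, b * ((m : ℝ) + i + 1) ^ (-(1 + b)) := by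
        rw [Finset.sum_mul]; exact Finset.sum_congr rfl fun i _ => mul_comm _ _
    _ ≤ ∑ i ∈ Finset.range K, (((m : ℝ) + (i:ℕ)) ^ (-b) - ((m : ℝ) + ((i+1 : ℕ):ℝ)) ^ (-b)) := by
        apply Finset.sum_le_sum; intro i _
        exact (key i).trans_eq (by push_cast; ring)
    _ = ((m : ℝ) + ((0:ℕ):ℝ)) ^ (-b) - ((m : ℝ) + ((K:ℕ):ℝ)) ^ (-b) :=
        Finset.sum_range_sub' (fun i : ℕ => ((m : ℝ) + (i:ℝ)) ^ (-b)) K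
    _ ≤ (m : ℝ) ^ (-b) := by
        simp only [Nat.cast_zero, add_zero]
        have : (0:ℝ) ≤ ((m : ℝ) + K) ^ (-b) := rpow_nonneg (by positivity) _
        linarith

/-- Uniform squared-bias bound over a hyperrectangle for the global-sample-size kernel
(used in Theorem 2): for every `σ, β, M > 0` there exist `C > 0` and `N` such that for all
`n ≥ N` and all `θ ∈ H^β(M)`,
`Σᵢ σ⁴ i^{2+4β} θᵢ²/(n + σ² i^{1+2β})² ≤ C M² n^{-2β/(1+2β)}`. -/
theorem uniform_squared_bias_global_kernel
    (σ β M : ℝ) (hσ : 0 < σ) (hβ : 0 < β) (hM : 0 < M) :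
    ∃ C N : ℝ, 0 < C ∧
      ∀ n : ℝ, N ≤ n → ∀ θ ∈ hyperRect β M,
        (∑' i : ℕ, σ ^ 4 * ((i : ℝ) + 1) ^ (2 + 4 * β) * (θ i) ^ 2
            / (n + σ ^ 2 * ((i : ℝ) + 1) ^ (1 + 2 * β)) ^ 2)
          ≤ C * M ^ 2 * n ^ (-(2 * β / (1 + 2 * β))) := by
  set p : ℝ := 1 + 2 * β with hp_def
  have hp1 : 1 < p := by rw [hp_def]; linarith
  have hp0 : 0 < p := by linarith
  have hσ2 : 0 < σ ^ 2 := by positivity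
  refine ⟨σ ^ 4 * 2 ^ (1 + p) / (σ ^ 2) ^ ((1 + p) / p) + (σ ^ 2) ^ (2 * β / p) / (2 * β),
    max 1 (σ ^ 2), by positivity, ?_⟩
  intro n hn θ hθ
  obtain ⟨hsum, hcoef⟩ := hθ
  have hn1 : (1 : ℝ) ≤ n := le_trans (le_max_left _ _) hn
  have hnσ : σ ^ 2 ≤ n := le_trans (le_max_right _ _) hn
  have hn0 : (0 : ℝ) < n := by linarith
  set t : ℝ := (n / σ ^ 2) ^ (1 / p) with ht_def
  have hdiv1 : (1 : ℝ) ≤ n / σ ^ 2 := (one_le_div hσ2).mpr hnσ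
  have ht1 : 1 ≤ t := by
    calc (1 : ℝ) = 1 ^ (1 / p) := (one_rpow _).symm
      _ ≤ t := rpow_le_rpow zero_le_one hdiv1 (by positivity)
  have ht0 : 0 < t := lt_of_lt_of_le one_pos ht1
  set m : ℕ := ⌈t⌉₊ with hm_def
  have hm_lb : t ≤ (m : ℝ) := Nat.le_ceil t
  have hm_ub : (m : ℝ) ≤ 2 * t := by
    have := Nat.ceil_lt_add_one ht0.le
    linarith
  have hm1 : 1 ≤ m := Nat.one_le_ceil_iff.mpr ht0
  have hmR : (1 : ℝ) ≤ (m : ℝ) := by exact_mod_cast hm1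
  have hm0R : (0 : ℝ) < (m : ℝ) := by linarith
  have hx0 : ∀ i : ℕ, (0 : ℝ) < (i : ℝ) + 1 := fun i => by positivity
  set g : ℕ → ℝ :=
    fun i => min (((i : ℝ) + 1) ^ (-p)) (σ ^ 4 * ((i : ℝ) + 1) ^ p / n ^ 2) with hg_def
  have hg_nonneg : ∀ i, 0 ≤ g i :=
    fun i => le_min (rpow_nonneg (hx0 i).le _) (by positivity)
  have hS : Summable (fun i : ℕ => ((i : ℝ) + 1) ^ (-p)) := by
    have h0 : Summable (fun n : ℕ => ((n : ℝ) ^ p)⁻¹) := Real.summable_nat_rpow_inv.mpr hp1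
    have h1 : Summable (fun i : ℕ => (((i + 1 : ℕ) : ℝ) ^ p)⁻¹) :=
      (summable_nat_add_iff 1).mpr h0
    refine h1.congr fun i => ?_
    push_cast
    rw [← rpow_neg (hx0 i).le]
  have hg_sum : Summable g :=
    Summable.of_nonneg_of_le hg_nonneg (fun i => min_le_left _ _) hS
  -- termwise bound
  have hterm : ∀ i : ℕ,
      σ ^ 4 * ((i : ℝ) + 1) ^ (2 + 4 * β) * (θ i) ^ 2
        / (n + σ ^ 2 * ((i : ℝ) + 1) ^ p) ^ 2 ≤ M ^ 2 * g i := by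
    intro i
    set x : ℝ := (i : ℝ) + 1 with hx_def
    have hx : 0 < x := hx0 i
    have hxp : 0 < x ^ p := rpow_pos_of_pos hx p
    have hcb : x ^ p * θ i ^ 2 ≤ M ^ 2 := hcoef i
    have hxx : x ^ (2 + 4 * β) = x ^ p * x ^ p := by
      rw [← rpow_add hx]; congr 1; rw [hp_def]; ring
    have hθ2 : 0 ≤ θ i ^ 2 := sq_nonneg _
    have hden : (0 : ℝ) < n + σ ^ 2 * x ^ p := by positivity
    have ha : σ ^ 4 * x ^ (2 + 4 * β) * θ i ^ 2 / (n + σ ^ 2 * x ^ p) ^ 2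
        ≤ M ^ 2 * (σ ^ 4 * x ^ p / n ^ 2) := by
      have hd : n ^ 2 ≤ (n + σ ^ 2 * x ^ p) ^ 2 := by
        have h' : n ≤ n + σ ^ 2 * x ^ p := by nlinarith [mul_pos hσ2 hxp]
        exact pow_le_pow_left₀ hn0.le h' 2
      calc σ ^ 4 * x ^ (2 + 4 * β) * θ i ^ 2 / (n + σ ^ 2 * x ^ p) ^ 2
          ≤ σ ^ 4 * x ^ (2 + 4 * β) * θ i ^ 2 / n ^ 2 := by
            gcongr
        _ = σ ^ 4 * x ^ p * (x ^ p * θ i ^ 2) / n ^ 2 := by rw [hxx]; ring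
        _ ≤ σ ^ 4 * x ^ p * M ^ 2 / n ^ 2 := by gcongr
        _ = M ^ 2 * (σ ^ 4 * x ^ p / n ^ 2) := by ring
    have hb2 : σ ^ 4 * x ^ (2 + 4 * β) * θ i ^ 2 / (n + σ ^ 2 * x ^ p) ^ 2
        ≤ M ^ 2 * x ^ (-p) := by
      have hd2 : σ ^ 4 * x ^ (2 + 4 * β) ≤ (n + σ ^ 2 * x ^ p) ^ 2 := by
        have hq : (σ ^ 2 * x ^ p) ^ 2 = σ ^ 4 * x ^ (2 + 4 * β) := by rw [hxx]; ring
        rw [← hq]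
        have h' : σ ^ 2 * x ^ p ≤ n + σ ^ 2 * x ^ p := by linarith
        exact pow_le_pow_left₀ (by positivity) h' 2
      have h1 : σ ^ 4 * x ^ (2 + 4 * β) * θ i ^ 2 / (n + σ ^ 2 * x ^ p) ^ 2 ≤ θ i ^ 2 := by
        rw [div_le_iff₀ (by positivity)]
        calc σ ^ 4 * x ^ (2 + 4 * β) * θ i ^ 2 = θ i ^ 2 * (σ ^ 4 * x ^ (2 + 4 * β)) := by ring
          _ ≤ θ i ^ 2 * (n + σ ^ 2 * x ^ p) ^ 2 := mul_le_mul_of_nonneg_left hd2 hθ2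
      have h2 : θ i ^ 2 ≤ M ^ 2 * x ^ (-p) := by
        rw [rpow_neg hx.le, ← div_eq_mul_inv, le_div_iff₀ hxp]
        nlinarith [hcb]
      linarith
    have hgi : g i = min (x ^ (-p)) (σ ^ 4 * x ^ p / n ^ 2) := rfl
    rw [hgi]
    rcases le_total (x ^ (-p)) (σ ^ 4 * x ^ p / n ^ 2) with h | h
    · rw [min_eq_left h]; exact hb2
    · rw [min_eq_right h]; exact ha
  have hterm_nonneg : ∀ i : ℕ,
      0 ≤ σ ^ 4 * ((i : ℝ) + 1) ^ (2 + 4 * β) * (θ i) ^ 2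
        / (n + σ ^ 2 * ((i : ℝ) + 1) ^ p) ^ 2 := by
    intro i
    have := hx0 i
    positivity
  have hterm_sum : Summable (fun i : ℕ =>
      σ ^ 4 * ((i : ℝ) + 1) ^ (2 + 4 * β) * (θ i) ^ 2
        / (n + σ ^ 2 * ((i : ℝ) + 1) ^ p) ^ 2) :=
    Summable.of_nonneg_of_le hterm_nonneg hterm (hg_sum.mul_left (M ^ 2))
  have main : (∑' i : ℕ, σ ^ 4 * ((i : ℝ) + 1) ^ (2 + 4 * β) * (θ i) ^ 2
        / (n + σ ^ 2 * ((i : ℝ) + 1) ^ p) ^ 2) ≤ M ^ 2 * ∑' i, g i := by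
    calc (∑' i : ℕ, σ ^ 4 * ((i : ℝ) + 1) ^ (2 + 4 * β) * (θ i) ^ 2
          / (n + σ ^ 2 * ((i : ℝ) + 1) ^ p) ^ 2)
        ≤ ∑' i, M ^ 2 * g i := Summable.tsum_le_tsum hterm hterm_sum (hg_sum.mul_left _)
      _ = M ^ 2 * ∑' i, g i := tsum_mul_left
  have hsplit : (∑' i, g i) = (∑ i ∈ Finset.range m, g i) + ∑' i, g (i + m) :=
    (Summable.sum_add_tsum_nat_add m hg_sum).symm
  -- head bound
  have hhead : ∑ i ∈ Finset.range m, g i ≤ σ ^ 4 * (m : ℝ) ^ (1 + p) / n ^ 2 := by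
    have hb : ∀ i ∈ Finset.range m, g i ≤ σ ^ 4 * (m : ℝ) ^ p / n ^ 2 := by
      intro i hi
      refine (min_le_right _ _).trans ?_
      have hle : ((i : ℝ) + 1) ≤ (m : ℝ) := by
        have : i + 1 ≤ m := Finset.mem_range.mp hi
        exact_mod_cast this
      gcongr
    calc ∑ i ∈ Finset.range m, g i
        ≤ (Finset.range m).card • (σ ^ 4 * (m : ℝ) ^ p / n ^ 2) :=
          Finset.sum_le_card_nsmul _ _ _ hb
      _ = (m : ℝ) * (σ ^ 4 * (m : ℝ) ^ p / n ^ 2) := by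
          simp [nsmul_eq_mul]
      _ = σ ^ 4 * ((m : ℝ) ^ (1 : ℝ) * (m : ℝ) ^ p) / n ^ 2 := by
          rw [rpow_one]; ring
      _ = σ ^ 4 * (m : ℝ) ^ (1 + p) / n ^ 2 := by rw [← rpow_add hm0R]
  have hhead2 : σ ^ 4 * (m : ℝ) ^ (1 + p) / n ^ 2
      ≤ (σ ^ 4 * 2 ^ (1 + p) / (σ ^ 2) ^ ((1 + p) / p)) * n ^ (-(2 * β / p)) := by
    have h1 : (m : ℝ) ^ (1 + p) ≤ (2 * t) ^ (1 + p) :=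
      rpow_le_rpow (by linarith) hm_ub (by linarith)
    have h2 : (2 * t) ^ (1 + p) = 2 ^ (1 + p) * t ^ (1 + p) :=
      mul_rpow (by norm_num) ht0.le
    have h3 : t ^ (1 + p) = (n / σ ^ 2) ^ ((1 + p) / p) := by
      rw [ht_def, ← rpow_mul (by positivity)]
      congr 1
      field_simp
    have h4 : (n / σ ^ 2) ^ ((1 + p) / p) = n ^ ((1 + p) / p) / (σ ^ 2) ^ ((1 + p) / p) :=
      div_rpow hn0.le hσ2.le _
    have h5 : n ^ ((1 + p) / p) / n ^ (2 : ℕ) = n ^ (-(2 * β / p)) := by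
      rw [← rpow_natCast n 2, ← rpow_sub hn0]
      congr 1
      rw [hp_def]
      field_simp
      ring
    calc σ ^ 4 * (m : ℝ) ^ (1 + p) / n ^ 2
        ≤ σ ^ 4 * (2 ^ (1 + p) * (n ^ ((1 + p) / p) / (σ ^ 2) ^ ((1 + p) / p))) / n ^ 2 := by
          gcongr
          rw [← h4, ← h3, ← h2]
          exact h1
      _ = (σ ^ 4 * 2 ^ (1 + p) / (σ ^ 2) ^ ((1 + p) / p)) * (n ^ ((1 + p) / p) / n ^ (2 : ℕ)) := by
          ring
      _ = (σ ^ 4 * 2 ^ (1 + p) / (σ ^ 2) ^ ((1 + p) / p)) * n ^ (-(2 * β / p)) := by rw [h5]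
  -- tail bound
  have hShift : Summable (fun i : ℕ => ((m : ℝ) + (i : ℝ) + 1) ^ (-p)) := by
    have h' := (summable_nat_add_iff m).mpr hS
    refine h'.congr fun i => ?_
    congr 2
    push_cast; ring
  have htail : (∑' i, g (i + m))
      ≤ ((σ ^ 2) ^ (2 * β / p) / (2 * β)) * n ^ (-(2 * β / p)) := by
    have hb' : (∑' i : ℕ, ((m : ℝ) + (i : ℝ) + 1) ^ (-p)) ≤ (m : ℝ) ^ (-(2 * β)) / (2 * β) := by
      have := tail_sum (2 * β) (by linarith) m hm1
      rw [hp_def]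
      exact this
    have hsum1 : Summable (fun i : ℕ => g (i + m)) := (summable_nat_add_iff m).mpr hg_sum
    have hpt : ∀ i : ℕ, g (i + m) ≤ ((m : ℝ) + (i : ℝ) + 1) ^ (-p) := by
      intro i
      have hc : (((i + m : ℕ) : ℝ) + 1) = (m : ℝ) + (i : ℝ) + 1 := by push_cast; ring
      have : g (i + m) ≤ (((i + m : ℕ) : ℝ) + 1) ^ (-p) := min_le_left _ _
      rwa [hc] at this
    have hle : (∑' i, g (i + m)) ≤ ∑' i : ℕ, ((m : ℝ) + (i : ℝ) + 1) ^ (-p) :=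
      Summable.tsum_le_tsum hpt hsum1 hShift
    have hmono : (m : ℝ) ^ (-(2 * β)) ≤ t ^ (-(2 * β)) :=
      rpow_le_rpow_of_nonpos ht0 hm_lb (by linarith)
    have h6 : t ^ (-(2 * β)) = (σ ^ 2) ^ (2 * β / p) * n ^ (-(2 * β / p)) := by
      rw [ht_def, ← rpow_mul (by positivity)]
      have he : 1 / p * -(2 * β) = -(2 * β / p) := by field_simp
      rw [he, rpow_neg (by positivity), div_rpow hn0.le hσ2.le, inv_div, div_eq_mul_inv,
        ← rpow_neg hn0.le]
    calc (∑' i, g (i + m)) ≤ (m : ℝ) ^ (-(2 * β)) / (2 * β) := hle.trans hb'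
      _ ≤ t ^ (-(2 * β)) / (2 * β) := by gcongr
      _ = ((σ ^ 2) ^ (2 * β / p) / (2 * β)) * n ^ (-(2 * β / p)) := by rw [h6]; ring
  calc (∑' i : ℕ, σ ^ 4 * ((i : ℝ) + 1) ^ (2 + 4 * β) * (θ i) ^ 2
        / (n + σ ^ 2 * ((i : ℝ) + 1) ^ p) ^ 2)
      ≤ M ^ 2 * ∑' i, g i := main
    _ = M ^ 2 * ((∑ i ∈ Finset.range m, g i) + ∑' i, g (i + m)) := by rw [hsplit]
    _ ≤ M ^ 2 * ((σ ^ 4 * 2 ^ (1 + p) / (σ ^ 2) ^ ((1 + p) / p)) * n ^ (-(2 * β / p))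
          + ((σ ^ 2) ^ (2 * β / p) / (2 * β)) * n ^ (-(2 * β / p))) := by
        have := (hhead.trans hhead2)
        gcongr
    _ = (σ ^ 4 * 2 ^ (1 + p) / (σ ^ 2) ^ ((1 + p) / p) + (σ ^ 2) ^ (2 * β / p) / (2 * β))
          * M ^ 2 * n ^ (-(2 * β / p)) := by ring
end
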